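/- arXiv:1304.0157 — 8 statements merged into one kernel-verified Lean document; each statement's English description precedes it below -/
import Mathlib

section
/- Let m < M be real numbers, let A be a self-adjoint operator in B(H) with spectrum contained in [m, M], and let f : [m, M] → ℝ be a continuous convex function. Then f(A) ≤ (f(m)/(M−m))·(M·I − A) + (f(M)/(M−m))·(A − m·I) − δ_f · Ã, where Ã = (1/2)·I − (1/(M−m))·|A − ((m+M)/2)·I|. -/
lemma scalar_ineq (m M : ℝ) (hmM : m < M) (f : ℝ → ℝ)
    (hconv : ConvexOn ℝ (Set.Icc m M) f) {t : ℝ} (ht : t ∈ Set.Icc m M) :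
    f t ≤ (f m / (M - m)) * (M - t) + (f M / (M - m)) * (t - m)
      - (f m + f M - 2 * f ((m + M) / 2)) *
        (1 / 2 - (M - m)⁻¹ * |t - (m + M) / 2|) := by
  obtain ⟨htm, htM⟩ := ht
  have hMm : (0:ℝ) < M - m := by linarith
  set c := (m + M) / 2 with hc
  have hmc : m < c := by rw [hc]; linarith
  have hcM : c < M := by rw [hc]; linarith
  rcases le_total t c with h | h
  · have habs : |t - c| = c - t := by rw [abs_of_nonpos (by linarith : t - c ≤ 0)]; ring
    have ha : (0:ℝ) ≤ (c - t) / (c - m) := div_nonneg (by linarith) (by linarith)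
    have hb : (0:ℝ) ≤ (t - m) / (c - m) := div_nonneg (by linarith) (by linarith)
    have hab : (c - t) / (c - m) + (t - m) / (c - m) = 1 := by
      rw [← add_div]
      have : c - m ≠ 0 := sub_ne_zero.mpr hmc.ne'
      field_simp
      ring
    have hcomb := hconv.2 ⟨le_refl m, hmM.le⟩ ⟨hmc.le, hcM.le⟩ ha hb hab
    have harg : ((c - t) / (c - m)) • m + ((t - m) / (c - m)) • c = t := by
      have hcm : c - m ≠ 0 := sub_ne_zero.mpr hmc.ne'
      simp only [smul_eq_mul]
      field_simp
      ring
    rw [harg, smul_eq_mul, smul_eq_mul] at hcomb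
    have heq : (f m / (M - m)) * (M - t) + (f M / (M - m)) * (t - m)
        - (f m + f M - 2 * f c) * (1 / 2 - (M - m)⁻¹ * (c - t))
        = (c - t) / (c - m) * f m + (t - m) / (c - m) * f c := by
      have h1 : M - m ≠ 0 := hMm.ne'
      rw [hc, show (m + M) / 2 - m = (M - m) / 2 from by ring]
      field_simp
      ring
    rw [habs, heq]
    exact hcomb
  · have habs : |t - c| = t - c := abs_of_nonneg (by linarith)
    have ha : (0:ℝ) ≤ (M - t) / (M - c) := div_nonneg (by linarith) (by linarith)
    have hb : (0:ℝ) ≤ (t - c) / (M - c) := div_nonneg (by linarith) (by linarith)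
    have hab : (M - t) / (M - c) + (t - c) / (M - c) = 1 := by
      rw [← add_div]
      have : M - c ≠ 0 := sub_ne_zero.mpr hcM.ne'
      field_simp
      ring
    have hcomb := hconv.2 ⟨hmc.le, hcM.le⟩ ⟨hmM.le, le_refl M⟩ ha hb hab
    have harg : ((M - t) / (M - c)) • c + ((t - c) / (M - c)) • M = t := by
      have hcm : M - c ≠ 0 := sub_ne_zero.mpr hcM.ne'
      simp only [smul_eq_mul]
      field_simp
      ring
    rw [harg, smul_eq_mul, smul_eq_mul] at hcomb
    have heq : (f m / (M - m)) * (M - t) + (f M / (M - m)) * (t - m)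
        - (f m + f M - 2 * f c) * (1 / 2 - (M - m)⁻¹ * (t - c))
        = (M - t) / (M - c) * f c + (t - c) / (M - c) * f M := by
      have h1 : M - m ≠ 0 := hMm.ne'
      rw [hc, show M - (m + M) / 2 = (M - m) / 2 from by ring]
      field_simp
      ring
    rw [habs, heq]
    exact hcomb


/-- The absolute value of a (self-adjoint) bounded operator, via the
continuous functional calculus. -/
noncomputable def opAbs {H : Type*} [NormedAddCommGroup H] [InnerProductSpace ℂ H]
    [CompleteSpace H] (A : H →L[ℂ] H) : H →L[ℂ] H :=
  cfc (fun t : ℝ => |t|) A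

/-- If `A` is self-adjoint with spectrum in `[m, M]` and `f` is a
continuous convex function on `[m, M]`, then
`f(A) ≤ (f(m)/(M−m))·(M·I − A) + (f(M)/(M−m))·(A − m·I) − δ_f · Ã`,
where `Ã = (1/2)·I − (1/(M−m))·|A − ((m+M)/2)·I|` and
`δ_f = f(m) + f(M) − 2 f((m+M)/2)`. -/
theorem jensen_lemma_refined {H : Type*} [NormedAddCommGroup H] [InnerProductSpace ℂ H]
    [CompleteSpace H] (m M : ℝ) (hmM : m < M) (A : H →L[ℂ] H) (hA : IsSelfAdjoint A)
    (hspec : spectrum ℝ A ⊆ Set.Icc m M) (f : ℝ → ℝ)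
    (hf : ContinuousOn f (Set.Icc m M)) (hconv : ConvexOn ℝ (Set.Icc m M) f) :
    cfc f A ≤
      (f m / (M - m)) • (M • (1 : H →L[ℂ] H) - A) + (f M / (M - m)) • (A - m • 1) -
        (f m + f M - 2 * f ((m + M) / 2)) •
          ((1 / 2 : ℝ) • (1 : H →L[ℂ] H) -
            (M - m)⁻¹ • opAbs (A - ((m + M) / 2) • 1)) := by
  have h0 : A - ((m + M) / 2) • (1 : H →L[ℂ] H) = cfc (fun t : ℝ => t - (m + M) / 2) A := by
    rw [cfc_sub (fun t : ℝ => t) (fun _ : ℝ => (m + M) / 2) A, cfc_id' ℝ A,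
      cfc_const ((m + M) / 2) A, Algebra.algebraMap_eq_smul_one]
  have habs : opAbs (A - ((m + M) / 2) • 1) = cfc (fun t : ℝ => |t - (m + M) / 2|) A := by
    rw [opAbs, h0, ← cfc_comp' (fun t : ℝ => |t|) (fun t : ℝ => t - (m + M) / 2) A]
  have hM1 : M • (1 : H →L[ℂ] H) - A = cfc (fun t : ℝ => M - t) A := by
    rw [cfc_sub (fun _ : ℝ => M) (fun t : ℝ => t) A, cfc_id' ℝ A,
      cfc_const M A, Algebra.algebraMap_eq_smul_one]
  have hm1 : A - m • (1 : H →L[ℂ] H) = cfc (fun t : ℝ => t - m) A := by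
    rw [cfc_sub (fun t : ℝ => t) (fun _ : ℝ => m) A, cfc_id' ℝ A,
      cfc_const m A, Algebra.algebraMap_eq_smul_one]
  have hhalf : (1 / 2 : ℝ) • (1 : H →L[ℂ] H) = cfc (fun _ : ℝ => (1 / 2 : ℝ)) A := by
    rw [cfc_const ((1:ℝ)/2) A, Algebra.algebraMap_eq_smul_one]
  rw [hM1, hm1, hhalf, habs, ← cfc_smul ((M - m)⁻¹) (fun t : ℝ => |t - (m + M) / 2|) A,
    ← cfc_sub (fun _ : ℝ => (1/2 : ℝ)) (fun t : ℝ => (M - m)⁻¹ • |t - (m + M) / 2|) A,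
    ← cfc_smul (f m / (M - m)) (fun t : ℝ => M - t) A,
    ← cfc_smul (f M / (M - m)) (fun t : ℝ => t - m) A,
    ← cfc_smul (f m + f M - 2 * f ((m + M) / 2))
      (fun t : ℝ => (1/2 : ℝ) - (M - m)⁻¹ • |t - (m + M) / 2|) A,
    ← cfc_add (a := A) (fun t : ℝ => (f m / (M - m)) • (M - t)) (fun t : ℝ => (f M / (M - m)) • (t - m)),
    ← cfc_sub (fun t : ℝ => (f m / (M - m)) • (M - t) + (f M / (M - m)) • (t - m))
      (fun t : ℝ => (f m + f M - 2 * f ((m + M) / 2)) •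
        ((1/2 : ℝ) - (M - m)⁻¹ • |t - (m + M) / 2|)) A]
  apply cfc_mono (fun x hx => ?_) (hf.mono hspec)
  have := scalar_ineq m M hmM f hconv (hspec hx)
  simpa [smul_eq_mul] using this
end

section
/- Let α, β, γ, δ > 0 be real numbers and let Φ_1,…,Φ_{n₁}, Φ̄_1,…,Φ̄_{n₂}, Ψ_1,…,Ψ_{n₃}, Ψ̄_1,…,Ψ̄_{n₄} be positive linear maps on B(H) with Σ_{i=1}^{n₁} Φ_i(I) = α·I, Σ_{i=1}^{n₂} Φ̄_i(I) = δ·I, Σ_{i=1}^{n₃} Ψ_i(I) = γ·I and Σ_{i=1}^{n₄} Ψ̄_i(I) = β·I. Let m < M be real numbers, let J be an interval containing [m, M], and let A_i (i = 1,…,n₁), D_i (i = 1,…,n₂), C_i (i = 1,…,n₃), B_i (i = 1,…,n₄) be operators in σ(J) with A_i ≤ m·I, m·I ≤ B_i ≤ M·I, m·I ≤ C_i ≤ M·I and M·I ≤ D_i. Assume (1/α)·Σ_i Φ_i(A_i) + (1/δ)·Σ_i Φ̄_i(D_i) = (1/γ)·Σ_i Ψ_i(C_i) + (1/β)·Σ_i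 Ψ̄_i(B_i). Then for every continuous convex function f : J → ℝ, (1/γ)·Σ_i Ψ_i(f(C_i)) + (1/β)·Σ_i Ψ̄_i(f(B_i)) ≤ f((1/α)·Σ_i Φ_i(A_i)) + f((1/δ)·Σ_i Φ̄_i(D_i)) − δ_f · X̃₂ ≤ f((1/α)·Σ_i Φ_i(A_i)) + f((1/δ)·Σ_i Φ̄_i(D_i)), where X̃₂ = I − (1/(M−m))·[ (1/γ)·Σ_i Ψ_i(|C_i − ((m+M)/2)·I|) + (1/β)·Σ_i Ψ̄_i(|B_i − ((m+M)/2)·I|) ]. -/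
set_option maxHeartbeats 2000000
set_option synthInstance.maxHeartbeats 1000000
set_option linter.unusedSectionVars false
set_option linter.unusedVariables false


namespace JTV1

variable {H : Type*} [NormedAddCommGroup H] [InnerProductSpace ℂ H] [CompleteSpace H]




lemma smul_nonneg_op (c : ℝ) (hc : 0 ≤ c) {X : H →L[ℂ] H} (hX : 0 ≤ X) : 0 ≤ c • X := by
  have h1 : c • X = star (Real.sqrt c • (1:H →L[ℂ] H)) * X * (Real.sqrt c • 1) := by
    rw [star_smul, star_trivial, star_one, smul_mul_assoc, mul_smul_comm, one_mul, mul_one,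
      smul_smul, Real.mul_self_sqrt hc]
  rw [h1]
  exact star_left_conjugate_nonneg hX _

lemma smul_mono_op (c : ℝ) (hc : 0 ≤ c) {X Y : H →L[ℂ] H} (h : X ≤ Y) : c • X ≤ c • Y := by
  rw [← sub_nonneg, ← smul_sub]
  exact smul_nonneg_op c hc (sub_nonneg.mpr h)

lemma map_real_smul (Φ : (H →L[ℂ] H) →ₗ[ℂ] (H →L[ℂ] H)) (r : ℝ) (X : H →L[ℂ] H) :
    Φ (r • X) = r • Φ X := by
  rw [← algebraMap_smul ℂ r X, map_smul, algebraMap_smul]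

lemma map_mono (Φ : (H →L[ℂ] H) →ₗ[ℂ] (H →L[ℂ] H))
    (hp : ∀ T : H →L[ℂ] H, 0 ≤ T → 0 ≤ Φ T) {S T : H →L[ℂ] H} (h : S ≤ T) : Φ S ≤ Φ T := by
  have := hp (T - S) (sub_nonneg.mpr h)
  rw [map_sub] at this
  exact sub_nonneg.mp this

lemma map_sa [Nontrivial H] (Φ : (H →L[ℂ] H) →ₗ[ℂ] (H →L[ℂ] H))
    (hp : ∀ T : H →L[ℂ] H, 0 ≤ T → 0 ≤ Φ T) {T : H →L[ℂ] H} (hT : IsSelfAdjoint T) :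
    IsSelfAdjoint (Φ T) := by
  have h1 : (0:H →L[ℂ] H) ≤ T + ‖T‖ • 1 := by
    rw [← neg_le_iff_add_nonneg, show -(‖T‖ • (1:H →L[ℂ] H)) = (-‖T‖) • 1 by
      rw [neg_smul], ← Algebra.algebraMap_eq_smul_one]
    refine (algebraMap_le_iff_le_spectrum (a := T) hT).mpr fun t ht => ?_
    have := spectrum.norm_le_norm_of_mem ht
    rw [Real.norm_eq_abs] at this
    linarith [(abs_le.mp this).1]
  have h2 : (0:H →L[ℂ] H) ≤ ‖T‖ • 1 := smul_nonneg_op _ (norm_nonneg T) zero_le_one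
  have h3 : Φ T = Φ (T + ‖T‖ • 1) - Φ (‖T‖ • 1) := by rw [map_add]; abel
  rw [h3]
  exact ((hp _ h1).isSelfAdjoint.sub (hp _ h2).isSelfAdjoint)

lemma sum_map_le {n : ℕ} (Φ : Fin n → (H →L[ℂ] H) →ₗ[ℂ] (H →L[ℂ] H))
    (hp : ∀ i, ∀ T : H →L[ℂ] H, 0 ≤ T → 0 ≤ Φ i T)
    {T S : Fin n → H →L[ℂ] H} (h : ∀ i, T i ≤ S i) :
    ∑ i, Φ i (T i) ≤ ∑ i, Φ i (S i) :=
  Finset.sum_le_sum fun i _ => map_mono (Φ i) (hp i) (h i)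

lemma avg_const {n : ℕ} {α : ℝ} (hα : α ≠ 0) (Φ : Fin n → (H →L[ℂ] H) →ₗ[ℂ] (H →L[ℂ] H))
    (hΦ1 : ∑ i, Φ i 1 = α • (1 : H →L[ℂ] H)) (c : ℝ) :
    α⁻¹ • ∑ i, Φ i (c • (1 : H →L[ℂ] H)) = c • 1 := by
  have h1 : ∀ i, Φ i (c • (1 : H →L[ℂ] H)) = c • Φ i 1 := fun i => map_real_smul _ _ _
  simp_rw [h1, ← Finset.smul_sum, hΦ1, smul_smul]
  rw [show α⁻¹ * (c * α) = c by field_simp]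

/-- average of maps applied to constant-bounded operators -/
lemma avg_le_const {n : ℕ} {α : ℝ} (hα : 0 < α) (Φ : Fin n → (H →L[ℂ] H) →ₗ[ℂ] (H →L[ℂ] H))
    (hp : ∀ i, ∀ T : H →L[ℂ] H, 0 ≤ T → 0 ≤ Φ i T)
    (hΦ1 : ∑ i, Φ i 1 = α • (1 : H →L[ℂ] H)) (c : ℝ)
    {T : Fin n → H →L[ℂ] H} (h : ∀ i, T i ≤ c • 1) :
    α⁻¹ • ∑ i, Φ i (T i) ≤ c • 1 := by
  calc α⁻¹ • ∑ i, Φ i (T i) ≤ α⁻¹ • ∑ i, Φ i (c • 1) :=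
        smul_mono_op _ (by positivity) (sum_map_le Φ hp h)
    _ = c • 1 := avg_const hα.ne' Φ hΦ1 c

lemma const_le_avg {n : ℕ} {α : ℝ} (hα : 0 < α) (Φ : Fin n → (H →L[ℂ] H) →ₗ[ℂ] (H →L[ℂ] H))
    (hp : ∀ i, ∀ T : H →L[ℂ] H, 0 ≤ T → 0 ≤ Φ i T)
    (hΦ1 : ∑ i, Φ i 1 = α • (1 : H →L[ℂ] H)) (c : ℝ)
    {T : Fin n → H →L[ℂ] H} (h : ∀ i, c • 1 ≤ T i) :
    c • (1:H →L[ℂ] H) ≤ α⁻¹ • ∑ i, Φ i (T i) := by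
  calc c • (1:H →L[ℂ] H) = α⁻¹ • ∑ i, Φ i (c • 1) := (avg_const hα.ne' Φ hΦ1 c).symm
    _ ≤ α⁻¹ • ∑ i, Φ i (T i) := smul_mono_op _ (by positivity) (sum_map_le Φ hp h)

lemma sum_sa [Nontrivial H] {n : ℕ} (Φ : Fin n → (H →L[ℂ] H) →ₗ[ℂ] (H →L[ℂ] H))
    (hp : ∀ i, ∀ T : H →L[ℂ] H, 0 ≤ T → 0 ≤ Φ i T)
    {T : Fin n → H →L[ℂ] H} (h : ∀ i, IsSelfAdjoint (T i)) (c : ℝ) :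
    IsSelfAdjoint (c • ∑ i, Φ i (T i)) := by
  have hs : IsSelfAdjoint (∑ i, Φ i (T i)) := by
    rw [IsSelfAdjoint, star_sum]
    exact Finset.sum_congr rfl fun i _ => (map_sa (Φ i) (hp i) (h i)).star_eq
  exact (IsSelfAdjoint.all c).smul hs



lemma scalar_mid {f : ℝ → ℝ} {J : Set ℝ} (hconv : ConvexOn ℝ J f) {m M : ℝ} (hmM : m < M)
    (hJmM : Set.Icc m M ⊆ J) {t : ℝ} (ht : t ∈ Set.Icc m M) :
    f t + (f m + f M - 2 * f ((m + M) / 2)) * (1/2 - (M - m)⁻¹ * |t - (m + M) / 2|) ≤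
      (f M - f m) / (M - m) * t + (f m - (f M - f m) / (M - m) * m) := by
  obtain ⟨ht1, ht2⟩ := ht
  have hMm : (0:ℝ) < M - m := by linarith
  have hne : (M - m) ≠ 0 := hMm.ne'
  have hm : m ∈ J := hJmM ⟨le_refl m, hmM.le⟩
  have hM : M ∈ J := hJmM ⟨hmM.le, le_refl M⟩
  have hμ : (m + M)/2 ∈ J := hJmM ⟨by linarith, by linarith⟩
  rcases le_total t ((m + M)/2) with htμ | htμ
  · rw [abs_of_nonpos (by linarith)]
    set a : ℝ := (m + M - 2*t)/(M - m) with ha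
    set b : ℝ := (2*t - 2*m)/(M - m) with hb
    have ha0 : 0 ≤ a := by apply div_nonneg <;> linarith
    have hb0 : 0 ≤ b := by apply div_nonneg <;> linarith
    have hab : a + b = 1 := by rw [ha, hb]; field_simp [hne]; ring
    have key := hconv.2 hm hμ ha0 hb0 hab
    simp only [smul_eq_mul] at key
    rw [show a * m + b * ((m + M)/2) = t by rw [ha, hb]; field_simp [hne]; ring] at key
    have hfact : ((f M - f m) / (M - m) * t + (f m - (f M - f m) / (M - m) * m)) -
        (f t + (f m + f M - 2 * f ((m + M) / 2)) * (1/2 - (M - m)⁻¹ * -(t - (m + M)/2))) =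
        a * f m + b * f ((m + M)/2) - f t := by
      rw [ha, hb]; field_simp [hne]; ring
    linarith
  · rw [abs_of_nonneg (by linarith)]
    set a : ℝ := (2*M - 2*t)/(M - m) with ha
    set b : ℝ := (2*t - m - M)/(M - m) with hb
    have ha0 : 0 ≤ a := by apply div_nonneg <;> linarith
    have hb0 : 0 ≤ b := by apply div_nonneg <;> linarith
    have hab : a + b = 1 := by rw [ha, hb]; field_simp [hne]; ring
    have key := hconv.2 hμ hM ha0 hb0 hab
    simp only [smul_eq_mul] at key
    rw [show a * ((m + M)/2) + b * M = t by rw [ha, hb]; field_simp [hne]; ring] at key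
    have hfact : ((f M - f m) / (M - m) * t + (f m - (f M - f m) / (M - m) * m)) -
        (f t + (f m + f M - 2 * f ((m + M) / 2)) * (1/2 - (M - m)⁻¹ * (t - (m + M)/2))) =
        a * f ((m + M)/2) + b * f M - f t := by
      rw [ha, hb]; field_simp [hne]; ring
    linarith

lemma scalar_left {f : ℝ → ℝ} {J : Set ℝ} (hconv : ConvexOn ℝ J f) {m M : ℝ} (hmM : m < M)
    (hm : m ∈ J) (hM : M ∈ J) {t : ℝ} (htJ : t ∈ J) (ht : t ≤ m) :
    (f M - f m) / (M - m) * t + (f m - (f M - f m) / (M - m) * m) ≤ f t := by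
  have hMm : (0:ℝ) < M - m := by linarith
  have hne : (M - m) ≠ 0 := hMm.ne'
  have hMt : (0:ℝ) < M - t := by linarith
  have hne2 : (M - t) ≠ 0 := hMt.ne'
  set a : ℝ := (M - m)/(M - t) with ha
  set b : ℝ := (m - t)/(M - t) with hb
  have ha0 : 0 ≤ a := by apply div_nonneg <;> linarith
  have hb0 : 0 ≤ b := by apply div_nonneg <;> linarith
  have hab : a + b = 1 := by rw [ha, hb]; field_simp [hne2]; ring
  have key := hconv.2 htJ hM ha0 hb0 hab
  simp only [smul_eq_mul] at key
  rw [show a * t + b * M = m by rw [ha, hb]; field_simp [hne2]; ring] at key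
  have hfact : f t - ((f M - f m) / (M - m) * t + (f m - (f M - f m) / (M - m) * m)) =
      (a * f t + b * f M - f m) * ((M - t)/(M - m)) := by
    rw [ha, hb]; field_simp [hne, hne2]; ring
  nlinarith [mul_nonneg (by linarith : (0:ℝ) ≤ a * f t + b * f M - f m)
    (by positivity : (0:ℝ) ≤ (M - t)/(M - m))]

lemma scalar_right {f : ℝ → ℝ} {J : Set ℝ} (hconv : ConvexOn ℝ J f) {m M : ℝ} (hmM : m < M)
    (hm : m ∈ J) (hM : M ∈ J) {t : ℝ} (htJ : t ∈ J) (ht : M ≤ t) :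
    (f M - f m) / (M - m) * t + (f m - (f M - f m) / (M - m) * m) ≤ f t := by
  have hMm : (0:ℝ) < M - m := by linarith
  have hne : (M - m) ≠ 0 := hMm.ne'
  have htm : (0:ℝ) < t - m := by linarith
  have hne2 : (t - m) ≠ 0 := htm.ne'
  set a : ℝ := (t - M)/(t - m) with ha
  set b : ℝ := (M - m)/(t - m) with hb
  have ha0 : 0 ≤ a := by apply div_nonneg <;> linarith
  have hb0 : 0 ≤ b := by apply div_nonneg <;> linarith
  have hab : a + b = 1 := by rw [ha, hb]; field_simp [hne2]; ring
  have key := hconv.2 hm htJ ha0 hb0 hab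
  simp only [smul_eq_mul] at key
  rw [show a * m + b * t = M by rw [ha, hb]; field_simp [hne2]; ring] at key
  have hfact : f t - ((f M - f m) / (M - m) * t + (f m - (f M - f m) / (M - m) * m)) =
      (a * f m + b * f t - f M) * ((t - m)/(M - m)) := by
    rw [ha, hb]; field_simp [hne, hne2]; ring
  nlinarith [mul_nonneg (by linarith : (0:ℝ) ≤ a * f m + b * f t - f M)
    (by positivity : (0:ℝ) ≤ (t - m)/(M - m))]

lemma delta_nonneg {f : ℝ → ℝ} {J : Set ℝ} (hconv : ConvexOn ℝ J f) {m M : ℝ} (hmM : m < M)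
    (hm : m ∈ J) (hM : M ∈ J) : 0 ≤ f m + f M - 2 * f ((m + M) / 2) := by
  have key := hconv.2 hm hM (by norm_num : (0:ℝ) ≤ 1/2) (by norm_num : (0:ℝ) ≤ 1/2) (by norm_num)
  simp only [smul_eq_mul] at key
  rw [show (1/2 : ℝ) * m + (1/2) * M = (m + M)/2 by ring] at key
  linarith



variable {H : Type*} [NormedAddCommGroup H] [InnerProductSpace ℂ H] [CompleteSpace H]


lemma spec_le_of_le {X : H →L[ℂ] H} (hX : IsSelfAdjoint X) {c : ℝ} (h : X ≤ c • 1) :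
    ∀ t ∈ spectrum ℝ X, t ≤ c := by
  rw [← Algebra.algebraMap_eq_smul_one] at h
  exact (le_algebraMap_iff_spectrum_le (a := X) hX).mp h

lemma le_spec_of_le {X : H →L[ℂ] H} (hX : IsSelfAdjoint X) {c : ℝ} (h : c • 1 ≤ X) :
    ∀ t ∈ spectrum ℝ X, c ≤ t := by
  rw [← Algebra.algebraMap_eq_smul_one] at h
  exact (algebraMap_le_iff_le_spectrum (a := X) hX).mp h

lemma smul_one_le_of_spec {X : H →L[ℂ] H} (hX : IsSelfAdjoint X) {c : ℝ}
    (h : ∀ t ∈ spectrum ℝ X, c ≤ t) : c • 1 ≤ X := by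
  rw [← Algebra.algebraMap_eq_smul_one]
  exact (algebraMap_le_iff_le_spectrum (a := X) hX).mpr h

lemma cfc_affine (p q : ℝ) {X : H →L[ℂ] H} (hX : IsSelfAdjoint X) :
    cfc (fun t : ℝ => p * t + q) X = p • X + q • 1 := by
  rw [cfc_add (a := X) (fun t => p * t) (fun _ => q) (by fun_prop) (by fun_prop),
    cfc_const_mul p (fun t : ℝ => t) X (by fun_prop), cfc_id' ℝ X hX, cfc_const q X hX,
    Algebra.algebraMap_eq_smul_one]

lemma cfc_abs_sub (μ : ℝ) {X : H →L[ℂ] H} (hX : IsSelfAdjoint X) :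
    cfc (fun t : ℝ => |t - μ|) X = opAbs (X - μ • 1) := by
  have h1 : X - μ • 1 = cfc (fun t : ℝ => t - μ) X := by
    rw [cfc_sub (fun t : ℝ => t) (fun _ => μ) X (by fun_prop) (by fun_prop),
      cfc_id' ℝ X hX, cfc_const μ X hX, Algebra.algebraMap_eq_smul_one]
  rw [opAbs, h1, ← cfc_comp' (fun t : ℝ => |t|) (fun t : ℝ => t - μ) X (by fun_prop) (by fun_prop) hX]

lemma cfc_h0 (μ c : ℝ) {X : H →L[ℂ] H} (hX : IsSelfAdjoint X) :
    cfc (fun t : ℝ => 1/2 - c * |t - μ|) X = (1/2 : ℝ) • 1 - c • opAbs (X - μ • 1) := by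
  rw [cfc_sub (fun _ : ℝ => 1/2) (fun t : ℝ => c * |t - μ|) X (by fun_prop) (by fun_prop),
    cfc_const _ X hX, cfc_const_mul c (fun t : ℝ => |t - μ|) X (by fun_prop),
    cfc_abs_sub μ hX, Algebra.algebraMap_eq_smul_one]


lemma avg_add {n : ℕ} (c : ℝ) (Φ : Fin n → (H →L[ℂ] H) →ₗ[ℂ] (H →L[ℂ] H))
    (T S : Fin n → H →L[ℂ] H) :
    c • ∑ i, Φ i (T i + S i) = c • ∑ i, Φ i (T i) + c • ∑ i, Φ i (S i) := by
  simp_rw [map_add, Finset.sum_add_distrib, smul_add]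

lemma avg_sub {n : ℕ} (c : ℝ) (Φ : Fin n → (H →L[ℂ] H) →ₗ[ℂ] (H →L[ℂ] H))
    (T S : Fin n → H →L[ℂ] H) :
    c • ∑ i, Φ i (T i - S i) = c • ∑ i, Φ i (T i) - c • ∑ i, Φ i (S i) := by
  simp_rw [map_sub, Finset.sum_sub_distrib, smul_sub]

lemma avg_rsmul {n : ℕ} (c r : ℝ) (Φ : Fin n → (H →L[ℂ] H) →ₗ[ℂ] (H →L[ℂ] H))
    (T : Fin n → H →L[ℂ] H) :
    c • ∑ i, Φ i (r • T i) = r • (c • ∑ i, Φ i (T i)) := by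
  simp_rw [map_real_smul, ← Finset.smul_sum]
  rw [smul_comm]

lemma smul_le_one_of_spec {X : H →L[ℂ] H} (hX : IsSelfAdjoint X) {c : ℝ}
    (h : ∀ t ∈ spectrum ℝ X, t ≤ c) : X ≤ c • 1 := by
  rw [← Algebra.algebraMap_eq_smul_one]
  exact (le_algebraMap_iff_spectrum_le (a := X) hX).mpr h

end JTV1

open JTV1 in
/-- Remark after Theorem 2.2, variant (1). -/
theorem jensen_type_variant_one {H : Type*} [NormedAddCommGroup H] [InnerProductSpace ℂ H]
    [CompleteSpace H] {n₁ n₂ n₃ n₄ : ℕ} (α β γ δ : ℝ)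
    (hα : 0 < α) (hβ : 0 < β) (hγ : 0 < γ) (hδ : 0 < δ)
    (Φ : Fin n₁ → (H →L[ℂ] H) →ₗ[ℂ] (H →L[ℂ] H))
    (Φb : Fin n₂ → (H →L[ℂ] H) →ₗ[ℂ] (H →L[ℂ] H))
    (Ψ : Fin n₃ → (H →L[ℂ] H) →ₗ[ℂ] (H →L[ℂ] H))
    (Ψb : Fin n₄ → (H →L[ℂ] H) →ₗ[ℂ] (H →L[ℂ] H))
    (hΦpos : ∀ i, ∀ T : H →L[ℂ] H, 0 ≤ T → 0 ≤ Φ i T)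
    (hΦbpos : ∀ i, ∀ T : H →L[ℂ] H, 0 ≤ T → 0 ≤ Φb i T)
    (hΨpos : ∀ i, ∀ T : H →L[ℂ] H, 0 ≤ T → 0 ≤ Ψ i T)
    (hΨbpos : ∀ i, ∀ T : H →L[ℂ] H, 0 ≤ T → 0 ≤ Ψb i T)
    (hΦ1 : ∑ i, Φ i 1 = α • (1 : H →L[ℂ] H))
    (hΦb1 : ∑ i, Φb i 1 = δ • (1 : H →L[ℂ] H))
    (hΨ1 : ∑ i, Ψ i 1 = γ • (1 : H →L[ℂ] H))
    (hΨb1 : ∑ i, Ψb i 1 = β • (1 : H →L[ℂ] H))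
    (m M : ℝ) (hmM : m < M) (J : Set ℝ) (hJ : J.OrdConnected) (hJmM : Set.Icc m M ⊆ J)
    (A : Fin n₁ → H →L[ℂ] H) (D : Fin n₂ → H →L[ℂ] H)
    (C : Fin n₃ → H →L[ℂ] H) (B : Fin n₄ → H →L[ℂ] H)
    (hAsa : ∀ i, IsSelfAdjoint (A i)) (hAspec : ∀ i, spectrum ℝ (A i) ⊆ J)
    (hDsa : ∀ i, IsSelfAdjoint (D i)) (hDspec : ∀ i, spectrum ℝ (D i) ⊆ J)
    (hCsa : ∀ i, IsSelfAdjoint (C i)) (hCspec : ∀ i, spectrum ℝ (C i) ⊆ J)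
    (hBsa : ∀ i, IsSelfAdjoint (B i)) (hBspec : ∀ i, spectrum ℝ (B i) ⊆ J)
    (hA : ∀ i, A i ≤ m • 1) (hD : ∀ i, M • 1 ≤ D i)
    (hBl : ∀ i, m • 1 ≤ B i) (hBu : ∀ i, B i ≤ M • 1)
    (hCl : ∀ i, m • 1 ≤ C i) (hCu : ∀ i, C i ≤ M • 1)
    (hsum : α⁻¹ • ∑ i, Φ i (A i) + δ⁻¹ • ∑ i, Φb i (D i) =
      γ⁻¹ • ∑ i, Ψ i (C i) + β⁻¹ • ∑ i, Ψb i (B i))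
    (f : ℝ → ℝ) (hf : ContinuousOn f J) (hconv : ConvexOn ℝ J f) :
    γ⁻¹ • ∑ i, Ψ i (cfc f (C i)) + β⁻¹ • ∑ i, Ψb i (cfc f (B i)) ≤
        cfc f (α⁻¹ • ∑ i, Φ i (A i)) + cfc f (δ⁻¹ • ∑ i, Φb i (D i)) -
          (f m + f M - 2 * f ((m + M) / 2)) •
            ((1 : H →L[ℂ] H) -
              (M - m)⁻¹ •
                (γ⁻¹ • ∑ i, Ψ i (opAbs (C i - ((m + M) / 2) • 1)) +
                  β⁻¹ • ∑ i, Ψb i (opAbs (B i - ((m + M) / 2) • 1)))) ∧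
      cfc f (α⁻¹ • ∑ i, Φ i (A i)) + cfc f (δ⁻¹ • ∑ i, Φb i (D i)) -
          (f m + f M - 2 * f ((m + M) / 2)) •
            ((1 : H →L[ℂ] H) -
              (M - m)⁻¹ •
                (γ⁻¹ • ∑ i, Ψ i (opAbs (C i - ((m + M) / 2) • 1)) +
                  β⁻¹ • ∑ i, Ψb i (opAbs (B i - ((m + M) / 2) • 1)))) ≤
        cfc f (α⁻¹ • ∑ i, Φ i (A i)) + cfc f (δ⁻¹ • ∑ i, Φb i (D i)) := by
  rcases subsingleton_or_nontrivial H with hH | hH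
  · exact ⟨le_of_eq (Subsingleton.elim _ _), le_of_eq (Subsingleton.elim _ _)⟩
  haveI : Nontrivial (H →L[ℂ] H) := ⟨1, 0, fun h => by simpa using congrArg norm h⟩
  have hMm : (0:ℝ) < M - m := by linarith
  have hmJ : m ∈ J := hJmM ⟨le_refl m, hmM.le⟩
  have hMJ : M ∈ J := hJmM ⟨hmM.le, le_refl M⟩
  set μ : ℝ := (m + M) / 2 with hμ
  set X : H →L[ℂ] H := α⁻¹ • ∑ i, Φ i (A i) with hX
  set Y : H →L[ℂ] H := δ⁻¹ • ∑ i, Φb i (D i) with hY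
  set SC : H →L[ℂ] H := γ⁻¹ • ∑ i, Ψ i (cfc f (C i)) with hSC
  set SB : H →L[ℂ] H := β⁻¹ • ∑ i, Ψb i (cfc f (B i)) with hSB
  set TC : H →L[ℂ] H := γ⁻¹ • ∑ i, Ψ i (opAbs (C i - μ • 1)) with hTC
  set TB : H →L[ℂ] H := β⁻¹ • ∑ i, Ψb i (opAbs (B i - μ • 1)) with hTB
  set dd : ℝ := f m + f M - 2 * f μ with hdd
  set p : ℝ := (f M - f m) / (M - m) with hp
  set q : ℝ := f m - p * m with hq
  set h₀ : ℝ → ℝ := fun t => 1/2 - (M - m)⁻¹ * |t - μ| with hh₀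
  have hddn : 0 ≤ dd := delta_nonneg hconv hmM hmJ hMJ
  -- spectra of C and B inside [m, M]
  have hCspecIcc : ∀ i, spectrum ℝ (C i) ⊆ Set.Icc m M := fun i t ht =>
    ⟨le_spec_of_le (hCsa i) (hCl i) t ht, spec_le_of_le (hCsa i) (hCu i) t ht⟩
  have hBspecIcc : ∀ i, spectrum ℝ (B i) ⊆ Set.Icc m M := fun i t ht =>
    ⟨le_spec_of_le (hBsa i) (hBl i) t ht, spec_le_of_le (hBsa i) (hBu i) t ht⟩
  -- step 1 : pointwise operator inequality on [m, M]
  have hh₀cont : Continuous h₀ := by rw [hh₀]; fun_prop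
  have hstep1 : ∀ X0 : H →L[ℂ] H, IsSelfAdjoint X0 → spectrum ℝ X0 ⊆ Set.Icc m M →
      cfc f X0 + dd • cfc h₀ X0 ≤ p • X0 + q • 1 := by
    intro X0 hsa hspec
    have hfc : ContinuousOn f (spectrum ℝ X0) := hf.mono (hspec.trans hJmM)
    rw [← cfc_affine p q hsa, ← cfc_const_mul dd h₀ X0 hh₀cont.continuousOn,
      ← cfc_add (a := X0) f (fun t => dd * h₀ t) hfc
        (continuousOn_const.mul hh₀cont.continuousOn)]
    refine (cfc_le_iff _ _ X0
      (hfc.add (continuousOn_const.mul hh₀cont.continuousOn))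
      (by fun_prop) hsa).mpr fun t ht => ?_
    exact scalar_mid hconv hmM hJmM (hspec ht)
  -- step 2 : averaged inequality for the C and B families
  have h2C : SC + dd • (γ⁻¹ • ∑ i, Ψ i (cfc h₀ (C i))) ≤
      p • (γ⁻¹ • ∑ i, Ψ i (C i)) + q • 1 := by
    calc SC + dd • (γ⁻¹ • ∑ i, Ψ i (cfc h₀ (C i)))
        = γ⁻¹ • ∑ i, Ψ i (cfc f (C i) + dd • cfc h₀ (C i)) := by
          rw [avg_add γ⁻¹ Ψ (fun i => cfc f (C i)) (fun i => dd • cfc h₀ (C i)),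
            avg_rsmul γ⁻¹ dd Ψ (fun i => cfc h₀ (C i))]
      _ ≤ γ⁻¹ • ∑ i, Ψ i (p • C i + q • 1) :=
          smul_mono_op _ (by positivity)
            (sum_map_le Ψ hΨpos fun i => hstep1 (C i) (hCsa i) (hCspecIcc i))
      _ = p • (γ⁻¹ • ∑ i, Ψ i (C i)) + q • 1 := by
          rw [avg_add γ⁻¹ Ψ (fun i => p • C i) (fun _ => q • 1),
            avg_rsmul γ⁻¹ p Ψ C, avg_const hγ.ne' Ψ hΨ1 q]
  have h2B : SB + dd • (β⁻¹ • ∑ i, Ψb i (cfc h₀ (B i))) ≤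
      p • (β⁻¹ • ∑ i, Ψb i (B i)) + q • 1 := by
    calc SB + dd • (β⁻¹ • ∑ i, Ψb i (cfc h₀ (B i)))
        = β⁻¹ • ∑ i, Ψb i (cfc f (B i) + dd • cfc h₀ (B i)) := by
          rw [avg_add β⁻¹ Ψb (fun i => cfc f (B i)) (fun i => dd • cfc h₀ (B i)),
            avg_rsmul β⁻¹ dd Ψb (fun i => cfc h₀ (B i))]
      _ ≤ β⁻¹ • ∑ i, Ψb i (p • B i + q • 1) :=
          smul_mono_op _ (by positivity)
            (sum_map_le Ψb hΨbpos fun i => hstep1 (B i) (hBsa i) (hBspecIcc i))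
      _ = p • (β⁻¹ • ∑ i, Ψb i (B i)) + q • 1 := by
          rw [avg_add β⁻¹ Ψb (fun i => p • B i) (fun _ => q • 1),
            avg_rsmul β⁻¹ p Ψb B, avg_const hβ.ne' Ψb hΨb1 q]
  -- identities for the h₀-averages
  have honehalf : ((1:ℝ)/2) • (1 : H →L[ℂ] H) + ((1:ℝ)/2) • 1 = 1 := by
    rw [← add_smul]; norm_num
  have hUCid : γ⁻¹ • ∑ i, Ψ i (cfc h₀ (C i)) = ((1:ℝ)/2) • 1 - (M - m)⁻¹ • TC := by
    calc γ⁻¹ • ∑ i, Ψ i (cfc h₀ (C i))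
        = γ⁻¹ • ∑ i, Ψ i (((1:ℝ)/2) • 1 - (M - m)⁻¹ • opAbs (C i - μ • 1)) := by
          congr 1
          exact Finset.sum_congr rfl fun i _ => by rw [cfc_h0 μ (M - m)⁻¹ (hCsa i)]
      _ = γ⁻¹ • ∑ i, Ψ i (((1:ℝ)/2) • 1) - (M - m)⁻¹ • TC := by
          rw [avg_sub γ⁻¹ Ψ (fun _ => ((1:ℝ)/2) • 1)
              (fun i => (M - m)⁻¹ • opAbs (C i - μ • 1)),
            avg_rsmul γ⁻¹ (M - m)⁻¹ Ψ (fun i => opAbs (C i - μ • 1)), hTC]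
      _ = ((1:ℝ)/2) • 1 - (M - m)⁻¹ • TC := by rw [avg_const hγ.ne' Ψ hΨ1]
  have hUBid : β⁻¹ • ∑ i, Ψb i (cfc h₀ (B i)) = ((1:ℝ)/2) • 1 - (M - m)⁻¹ • TB := by
    calc β⁻¹ • ∑ i, Ψb i (cfc h₀ (B i))
        = β⁻¹ • ∑ i, Ψb i (((1:ℝ)/2) • 1 - (M - m)⁻¹ • opAbs (B i - μ • 1)) := by
          congr 1
          exact Finset.sum_congr rfl fun i _ => by rw [cfc_h0 μ (M - m)⁻¹ (hBsa i)]
      _ = β⁻¹ • ∑ i, Ψb i (((1:ℝ)/2) • 1) - (M - m)⁻¹ • TB := by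
          rw [avg_sub β⁻¹ Ψb (fun _ => ((1:ℝ)/2) • 1)
              (fun i => (M - m)⁻¹ • opAbs (B i - μ • 1)),
            avg_rsmul β⁻¹ (M - m)⁻¹ Ψb (fun i => opAbs (B i - μ • 1)), hTB]
      _ = ((1:ℝ)/2) • 1 - (M - m)⁻¹ • TB := by rw [avg_const hβ.ne' Ψb hΨb1]
  have hW : (1 : H →L[ℂ] H) - (M - m)⁻¹ • (TC + TB) =
      (γ⁻¹ • ∑ i, Ψ i (cfc h₀ (C i))) + (β⁻¹ • ∑ i, Ψb i (cfc h₀ (B i))) := by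
    rw [hUCid, hUBid,
      show ((1:ℝ)/2) • (1:H →L[ℂ] H) - (M - m)⁻¹ • TC + (((1:ℝ)/2) • 1 - (M - m)⁻¹ • TB) =
        ((1:ℝ)/2) • 1 + ((1:ℝ)/2) • 1 - (M - m)⁻¹ • (TC + TB) from by rw [smul_add]; abel,
      honehalf]
  -- nonnegativity of the h₀-averages
  have hh₀nonneg : ∀ X0 : H →L[ℂ] H, spectrum ℝ X0 ⊆ Set.Icc m M → 0 ≤ cfc h₀ X0 := by
    intro X0 hspec
    refine cfc_nonneg fun t ht => ?_
    obtain ⟨ht1, ht2⟩ := hspec ht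
    have habs : |t - μ| ≤ (M - m)/2 := abs_le.mpr ⟨by rw [hμ]; linarith, by rw [hμ]; linarith⟩
    have h1 : (M - m)⁻¹ * |t - μ| ≤ (M - m)⁻¹ * ((M - m)/2) :=
      mul_le_mul_of_nonneg_left habs (by positivity)
    have h3 : (M - m)⁻¹ * ((M - m)/2) = 1/2 := by field_simp
    simp only [hh₀]
    linarith
  have hUCn : 0 ≤ γ⁻¹ • ∑ i, Ψ i (cfc h₀ (C i)) :=
    smul_nonneg_op _ (by positivity)
      (Finset.sum_nonneg fun i _ => hΨpos i _ (hh₀nonneg (C i) (hCspecIcc i)))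
  have hUBn : 0 ≤ β⁻¹ • ∑ i, Ψb i (cfc h₀ (B i)) :=
    smul_nonneg_op _ (by positivity)
      (Finset.sum_nonneg fun i _ => hΨbpos i _ (hh₀nonneg (B i) (hBspecIcc i)))
  have hWn : 0 ≤ (1 : H →L[ℂ] H) - (M - m)⁻¹ • (TC + TB) := by
    rw [hW]; exact add_nonneg hUCn hUBn
  -- spectral localization of X
  have hXsa : IsSelfAdjoint X := sum_sa Φ hΦpos hAsa α⁻¹
  have hYsa : IsSelfAdjoint Y := sum_sa Φb hΦbpos hDsa δ⁻¹
  have hXm : X ≤ m • 1 := avg_le_const hα Φ hΦpos hΦ1 m hA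
  have hYM : M • 1 ≤ Y := const_le_avg hδ Φb hΦbpos hΦb1 M hD
  have hn1 : (Finset.univ : Finset (Fin n₁)).Nonempty := by
    rw [Finset.univ_nonempty_iff]
    rcases Nat.eq_zero_or_pos n₁ with h0 | h0
    · exfalso
      subst h0
      have h00 : (0 : H →L[ℂ] H) = α • 1 := by simpa using hΦ1
      refine one_ne_zero (α := H →L[ℂ] H) ?_
      calc (1 : H →L[ℂ] H) = α⁻¹ • (α • (1 : H →L[ℂ] H)) := (inv_smul_smul₀ hα.ne' 1).symm
        _ = 0 := by rw [← h00, smul_zero]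
    · exact Fin.pos_iff_nonempty.mp h0
  have hn2 : (Finset.univ : Finset (Fin n₂)).Nonempty := by
    rw [Finset.univ_nonempty_iff]
    rcases Nat.eq_zero_or_pos n₂ with h0 | h0
    · exfalso
      subst h0
      have h00 : (0 : H →L[ℂ] H) = δ • 1 := by simpa using hΦb1
      refine one_ne_zero (α := H →L[ℂ] H) ?_
      calc (1 : H →L[ℂ] H) = δ⁻¹ • (δ • (1 : H →L[ℂ] H)) := (inv_smul_smul₀ hδ.ne' 1).symm
        _ = 0 := by rw [← h00, smul_zero]
    · exact Fin.pos_iff_nonempty.mp h0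
  obtain ⟨a, haJ, haA⟩ : ∃ a : ℝ, a ∈ J ∧ ∀ i, ∀ t ∈ spectrum ℝ (A i), a ≤ t := by
    refine ⟨Finset.univ.inf' hn1 (fun i => sInf (spectrum ℝ (A i))), ?_, ?_⟩
    · obtain ⟨j, -, hj⟩ := Finset.exists_mem_eq_inf' hn1 (fun i => sInf (spectrum ℝ (A i)))
      rw [hj]
      exact hAspec j ((spectrum.isCompact (𝕜 := ℝ) (A j)).sInf_mem
        ((hAsa j).spectrum_nonempty))
    · intro i t ht
      exact le_trans (Finset.inf'_le _ (Finset.mem_univ i))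
        (csInf_le (spectrum.isCompact (𝕜 := ℝ) (A i)).bddBelow ht)
  obtain ⟨b, hbJ, hbD⟩ : ∃ b : ℝ, b ∈ J ∧ ∀ i, ∀ t ∈ spectrum ℝ (D i), t ≤ b := by
    refine ⟨Finset.univ.sup' hn2 (fun i => sSup (spectrum ℝ (D i))), ?_, ?_⟩
    · obtain ⟨j, -, hj⟩ := Finset.exists_mem_eq_sup' hn2 (fun i => sSup (spectrum ℝ (D i)))
      rw [hj]
      exact hDspec j ((spectrum.isCompact (𝕜 := ℝ) (D j)).sSup_mem
        ((hDsa j).spectrum_nonempty))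
    · intro i t ht
      exact le_trans (le_csSup (spectrum.isCompact (𝕜 := ℝ) (D i)).bddAbove ht)
        (Finset.le_sup' (f := fun i => sSup (spectrum ℝ (D i))) (Finset.mem_univ i))
  have hXa : a • 1 ≤ X :=
    const_le_avg hα Φ hΦpos hΦ1 a fun i => smul_one_le_of_spec (hAsa i) (haA i)
  have hYb : Y ≤ b • 1 :=
    avg_le_const hδ Φb hΦbpos hΦb1 b fun i => smul_le_one_of_spec (hDsa i) (hbD i)
  have hXspecJ : spectrum ℝ X ⊆ J := fun t ht =>
    hJ.out haJ hmJ ⟨le_spec_of_le hXsa hXa t ht, spec_le_of_le hXsa hXm t ht⟩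
  have hYspecJ : spectrum ℝ Y ⊆ J := fun t ht =>
    hJ.out hMJ hbJ ⟨le_spec_of_le hYsa hYM t ht, spec_le_of_le hYsa hYb t ht⟩
  -- step 3 : chord lies below f outside [m, M]
  have hX3 : p • X + q • 1 ≤ cfc f X := by
    rw [← cfc_affine p q hXsa]
    refine (cfc_le_iff _ _ X (by fun_prop) (hf.mono hXspecJ) hXsa).mpr fun t ht => ?_
    exact scalar_left hconv hmM hmJ hMJ (hXspecJ ht) (spec_le_of_le hXsa hXm t ht)
  have hY3 : p • Y + q • 1 ≤ cfc f Y := by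
    rw [← cfc_affine p q hYsa]
    refine (cfc_le_iff _ _ Y (by fun_prop) (hf.mono hYspecJ) hYsa).mpr fun t ht => ?_
    exact scalar_right hconv hmM hmJ hMJ (hYspecJ ht) (le_spec_of_le hYsa hYM t ht)
  -- main chain
  have hmain : SC + SB + dd • ((1 : H →L[ℂ] H) - (M - m)⁻¹ • (TC + TB)) ≤
      cfc f X + cfc f Y := by
    calc SC + SB + dd • ((1 : H →L[ℂ] H) - (M - m)⁻¹ • (TC + TB))
        = (SC + dd • (γ⁻¹ • ∑ i, Ψ i (cfc h₀ (C i)))) +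
            (SB + dd • (β⁻¹ • ∑ i, Ψb i (cfc h₀ (B i)))) := by
          rw [hW, smul_add]; abel
      _ ≤ (p • (γ⁻¹ • ∑ i, Ψ i (C i)) + q • 1) + (p • (β⁻¹ • ∑ i, Ψb i (B i)) + q • 1) :=
          add_le_add h2C h2B
      _ = (p • (γ⁻¹ • ∑ i, Ψ i (C i) + β⁻¹ • ∑ i, Ψb i (B i)) + q • 1) + q • 1 := by
          rw [smul_add]; abel
      _ = (p • X + q • 1) + (p • Y + q • 1) := by rw [← hsum, smul_add]; abel
      _ ≤ cfc f X + cfc f Y := add_le_add hX3 hY3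
  constructor
  · rw [le_sub_iff_add_le]
    exact hmain
  · have h0 : (0 : H →L[ℂ] H) ≤ dd • ((1 : H →L[ℂ] H) - (M - m)⁻¹ • (TC + TB)) :=
      smul_nonneg_op dd hddn hWn
    exact sub_le_iff_le_add.mpr (le_add_of_nonneg_right h0)
end

section
/- Let α, β, γ, δ > 0 be real numbers and let Φ_1,…,Φ_{n₁}, Φ̄_1,…,Φ̄_{n₂}, Ψ_1,…,Ψ_{n₃}, Ψ̄_1,…,Ψ̄_{n₄} be positive linear maps on B(H) with Σ_{i=1}^{n₁} Φ_i(I) = α·I, Σ_{i=1}^{n₂} Φ̄_i(I) = δ·I, Σ_{i=1}^{n₃} Ψ_i(I) = γ·I and Σ_{i=1}^{n₄} Ψ̄_i(I) = β·I. Let m < M be real numbers, let J be an interval containing [m, M], and let A_i (i = 1,…,n₁), D_i (i = 1,…,n₂), C_i (i = 1,…,n₃), B_i (i = 1,…,n₄) be operators in σ(J) with A_i ≤ m·I, m·I ≤ B_i ≤ M·I, m·I ≤ C_i ≤ M·I and M·I ≤ D_i. Assume (1/α)·Σ_i Φ_i(A_i) + (1/δ)·Σ_i Φ̄_i(D_i)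 = (1/γ)·Σ_i Ψ_i(C_i) + (1/β)·Σ_i Ψ̄_i(B_i). Then for every continuous convex function f : J → ℝ, f((1/γ)·Σ_i Ψ_i(C_i)) + (1/β)·Σ_i Ψ̄_i(f(B_i)) ≤ f((1/α)·Σ_i Φ_i(A_i)) + (1/δ)·Σ_i Φ̄_i(f(D_i)) − δ_f · X̃₃ ≤ f((1/α)·Σ_i Φ_i(A_i)) + (1/δ)·Σ_i Φ̄_i(f(D_i)), where X̃₃ = I − (1/(M−m))·[ |(1/γ)·Σ_i Ψ_i(C_i) − ((m+M)/2)·I| + (1/β)·Σ_i Ψ̄_i(|B_i − ((m+M)/2)·I|) ]. -/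
set_option synthInstance.maxHeartbeats 1000000
set_option maxHeartbeats 4000000

section scalarAux
variable {J : Set ℝ} {f : ℝ → ℝ} {m M : ℝ}

lemma aux_upper' (hconv : ConvexOn ℝ J f) (hJmM : Set.Icc m M ⊆ J) (hmM : m < M)
    {x : ℝ} (hx : x ∈ Set.Icc m M) :
    f x + (f m + f M - 2 * f ((m + M) / 2)) * (1 / 2 - |x - (m + M) / 2| / (M - m)) ≤
      (f M - f m) / (M - m) * x + (f m - (f M - f m) / (M - m) * m) := by
  have hMm : (0:ℝ) < M - m := by linarith
  have hmJ : m ∈ J := hJmM ⟨le_refl m, hmM.le⟩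
  have hMJ : M ∈ J := hJmM ⟨hmM.le, le_refl M⟩
  have hμJ : (m + M) / 2 ∈ J := hJmM ⟨by linarith, by linarith⟩
  obtain ⟨hxm, hxM⟩ := hx
  set t : ℝ := (x - m) / (M - m) with ht
  have hx_eq : x = m + t * (M - m) := by rw [ht, div_mul_cancel₀ _ hMm.ne']; ring
  have ht0 : 0 ≤ t := div_nonneg (by linarith) hMm.le
  have ht1 : t ≤ 1 := by rw [div_le_one hMm]; linarith
  rcases le_total x ((m + M) / 2) with hle | hle
  · have habs : |x - (m + M) / 2| = (m + M) / 2 - x := by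
      rw [abs_of_nonpos (by linarith)]; ring
    have ht2 : t ≤ 1 / 2 := by rw [ht, div_le_iff₀ hMm]; linarith
    have hcvx := hconv.2 hmJ hμJ (by linarith : (0:ℝ) ≤ 1 - 2 * t)
      (by linarith : (0:ℝ) ≤ 2 * t) (by ring)
    simp only [smul_eq_mul] at hcvx
    have hxc : (1 - 2 * t) * m + 2 * t * ((m + M) / 2) = x := by
      rw [hx_eq]; ring
    rw [hxc] at hcvx
    rw [habs]
    have hteq : 1 / 2 - ((m + M) / 2 - x) / (M - m) = t := by
      rw [ht]; field_simp; ring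
    rw [hteq]
    have hlx : (f M - f m) / (M - m) * x + (f m - (f M - f m) / (M - m) * m)
        = (1 - t) * f m + t * f M := by
      rw [hx_eq, ht]; field_simp; ring
    rw [hlx]; nlinarith [hcvx]
  · have habs : |x - (m + M) / 2| = x - (m + M) / 2 := by
      rw [abs_of_nonneg (by linarith)]
    have ht2 : 1 / 2 ≤ t := by rw [ht, le_div_iff₀ hMm]; linarith
    have hcvx := hconv.2 hμJ hMJ (by linarith : (0:ℝ) ≤ 2 - 2 * t)
      (by linarith : (0:ℝ) ≤ 2 * t - 1) (by ring)
    simp only [smul_eq_mul] at hcvx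
    have hxc : (2 - 2 * t) * ((m + M) / 2) + (2 * t - 1) * M = x := by
      rw [hx_eq]; ring
    rw [hxc] at hcvx
    rw [habs]
    have hteq : 1 / 2 - (x - (m + M) / 2) / (M - m) = 1 - t := by
      rw [ht]; field_simp; ring
    rw [hteq]
    have hlx : (f M - f m) / (M - m) * x + (f m - (f M - f m) / (M - m) * m)
        = (1 - t) * f m + t * f M := by
      rw [hx_eq, ht]; field_simp; ring
    rw [hlx]; nlinarith [hcvx]

lemma aux_lower_left' (hconv : ConvexOn ℝ J f) (hJmM : Set.Icc m M ⊆ J) (hmM : m < M)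
    {x : ℝ} (hxJ : x ∈ J) (hxm : x ≤ m) :
    (f M - f m) / (M - m) * x + (f m - (f M - f m) / (M - m) * m) ≤ f x := by
  have hMm : (0:ℝ) < M - m := by linarith
  have hMJ : M ∈ J := hJmM ⟨hmM.le, le_refl M⟩
  rcases eq_or_lt_of_le hxm with rfl | hlt
  · have : (f M - f x) / (M - x) * x + (f x - (f M - f x) / (M - x) * x) = f x := by ring
    linarith [this.le]
  · have hs := hconv.slope_mono_adjacent hxJ hMJ hlt hmM
    rw [div_le_div_iff₀ (by linarith) hMm] at hs
    have : (f M - f m) / (M - m) * x + (f m - (f M - f m) / (M - m) * m)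
        = f m + (f M - f m) / (M - m) * (x - m) := by ring
    rw [this]
    rw [div_mul_eq_mul_div, ← sub_nonneg]
    have h2 : f x - (f m + (f M - f m) * (x - m) / (M - m)) =
        ((f x - f m) * (M - m) - (f M - f m) * (x - m)) / (M - m) := by field_simp; ring
    rw [h2]
    apply div_nonneg _ hMm.le
    nlinarith [hs]

lemma aux_lower_right' (hconv : ConvexOn ℝ J f) (hJmM : Set.Icc m M ⊆ J) (hmM : m < M)
    {x : ℝ} (hxJ : x ∈ J) (hxM : M ≤ x) :
    (f M - f m) / (M - m) * x + (f m - (f M - f m) / (M - m) * m) ≤ f x := by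
  have hMm : (0:ℝ) < M - m := by linarith
  have hmJ : m ∈ J := hJmM ⟨le_refl m, hmM.le⟩
  rcases eq_or_lt_of_le hxM with rfl | hlt
  · have : (f M - f m) / (M - m) * M + (f m - (f M - f m) / (M - m) * m)
        = f m + (f M - f m) / (M - m) * (M - m) := by ring
    rw [this, div_mul_cancel₀ _ (by linarith : M - m ≠ 0)]; linarith
  · have hs := hconv.slope_mono_adjacent hmJ hxJ hmM hlt
    rw [div_le_div_iff₀ hMm (by linarith)] at hs
    have : (f M - f m) / (M - m) * x + (f m - (f M - f m) / (M - m) * m)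
        = f m + (f M - f m) / (M - m) * (x - m) := by ring
    rw [this, div_mul_eq_mul_div, ← sub_nonneg]
    have h2 : f x - (f m + (f M - f m) * (x - m) / (M - m)) =
        ((f x - f m) * (M - m) - (f M - f m) * (x - m)) / (M - m) := by field_simp; ring
    rw [h2]
    apply div_nonneg _ hMm.le
    nlinarith [hs]

end scalarAux

section opAux
variable {H : Type*} [NormedAddCommGroup H] [InnerProductSpace ℂ H] [CompleteSpace H]

lemma posmap_mono' (L : (H →L[ℂ] H) →ₗ[ℂ] (H →L[ℂ] H))
    (hL : ∀ T : H →L[ℂ] H, 0 ≤ T → 0 ≤ L T) {T S : H →L[ℂ] H} (h : T ≤ S) : L T ≤ L S := by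
  have := hL (S - T) (sub_nonneg.mpr h)
  rw [map_sub] at this
  exact sub_nonneg.mp this

lemma posmap_sa' (L : (H →L[ℂ] H) →ₗ[ℂ] (H →L[ℂ] H))
    (hL : ∀ T : H →L[ℂ] H, 0 ≤ T → 0 ≤ L T) {T : H →L[ℂ] H} (hT : IsSelfAdjoint T) :
    IsSelfAdjoint (L T) := by
  have h1 : (0 : H →L[ℂ] H) ≤ T + ‖T‖ • 1 := by
    have h := IsSelfAdjoint.neg_algebraMap_norm_le_self hT
    rw [Algebra.algebraMap_eq_smul_one, neg_le] at h
    have h' := sub_nonneg.mpr (neg_le.mp h)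
    rwa [sub_neg_eq_add] at h'
  have h2 : L T = L (T + ‖T‖ • 1) - ‖T‖ • L 1 := by
    rw [map_add, LinearMap.map_smul_of_tower]; abel
  rw [h2]
  have hsa1 : IsSelfAdjoint (L (T + ‖T‖ • 1)) := .of_nonneg (hL _ h1)
  have hsa2 : IsSelfAdjoint (L 1) := .of_nonneg (hL 1 zero_le_one)
  have hsa3 : IsSelfAdjoint (‖T‖ • L 1) := by
    rw [IsSelfAdjoint, star_smul, star_trivial, hsa2.star_eq]
  exact hsa1.sub hsa3

lemma smul_sa' {r : ℝ} {S : H →L[ℂ] H} (h : IsSelfAdjoint S) : IsSelfAdjoint (r • S) := by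
  rw [IsSelfAdjoint, star_smul, star_trivial, h.star_eq]

lemma sum_sa' {n : ℕ} {g : Fin n → H →L[ℂ] H} (h : ∀ i, IsSelfAdjoint (g i)) :
    IsSelfAdjoint (∑ i, g i) := by
  rw [IsSelfAdjoint, star_sum]
  exact Finset.sum_congr rfl fun i _ => (h i).star_eq

lemma spec_bounds' {T : H →L[ℂ] H} (hT : IsSelfAdjoint T) {r s : ℝ}
    (h1 : r • 1 ≤ T) (h2 : T ≤ s • 1) : spectrum ℝ T ⊆ Set.Icc r s := by
  intro x hx
  rw [← Algebra.algebraMap_eq_smul_one] at h1 h2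
  exact ⟨(algebraMap_le_iff_le_spectrum hT).mp h1 x hx,
    (le_algebraMap_iff_spectrum_le hT).mp h2 x hx⟩

lemma cfc_affine' (k c : ℝ) (T : H →L[ℂ] H) (hT : IsSelfAdjoint T) :
    cfc (fun x : ℝ => k * x + c) T = k • T + c • 1 := by
  rw [cfc_add (a := T) (fun x : ℝ => k * x) (fun _ : ℝ => c) (by fun_prop) (by fun_prop),
    cfc_const_mul_id k T, cfc_const c T, Algebra.algebraMap_eq_smul_one]

lemma cfc_abs_sub' (μ : ℝ) (T : H →L[ℂ] H) (hT : IsSelfAdjoint T) :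
    cfc (fun x : ℝ => |x - μ|) T = opAbs (T - μ • 1) := by
  have h1 : T - μ • 1 = cfc (fun x : ℝ => x - μ) T := by
    rw [cfc_sub (fun x : ℝ => x) (fun _ : ℝ => μ) T (by fun_prop) (by fun_prop),
      cfc_id' ℝ T, cfc_const μ T, Algebra.algebraMap_eq_smul_one]
  rw [opAbs, h1, ← cfc_comp' (fun t : ℝ => |t|) (fun x : ℝ => x - μ) T (by fun_prop) (by fun_prop)]

variable {J : Set ℝ} {f : ℝ → ℝ} {m M : ℝ}

lemma key_upper' (hconv : ConvexOn ℝ J f) (hf : ContinuousOn f J)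
    (hJmM : Set.Icc m M ⊆ J) (hmM : m < M) {T : H →L[ℂ] H} (hTsa : IsSelfAdjoint T)
    (hTl : m • 1 ≤ T) (hTu : T ≤ M • 1) :
    cfc f T + (f m + f M - 2 * f ((m + M) / 2)) •
        ((1 / 2 : ℝ) • (1 : H →L[ℂ] H) - (M - m)⁻¹ • opAbs (T - ((m + M) / 2) • 1)) ≤
      ((f M - f m) / (M - m)) • T + (f m - (f M - f m) / (M - m) * m) • 1 := by
  have hspec : spectrum ℝ T ⊆ Set.Icc m M := spec_bounds' hTsa hTl hTu
  have hspecJ : spectrum ℝ T ⊆ J := hspec.trans hJmM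
  have hcont : ContinuousOn f (spectrum ℝ T) := hf.mono hspecJ
  set df := f m + f M - 2 * f ((m + M) / 2) with hdf
  set μ := (m + M) / 2 with hμ
  have h1 : cfc (fun x : ℝ => f x + df * (1 / 2 - |x - μ| / (M - m))) T ≤
      cfc (fun x : ℝ => (f M - f m) / (M - m) * x + (f m - (f M - f m) / (M - m) * m)) T := by
    apply cfc_mono (fun x hx => aux_upper' hconv hJmM hmM (hspec hx))
      (hcont.add (by fun_prop)) (by fun_prop)
  have h2 : cfc (fun x : ℝ => f x + df * (1 / 2 - |x - μ| / (M - m))) T =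
      cfc f T + df • ((1 / 2 : ℝ) • (1 : H →L[ℂ] H) - (M - m)⁻¹ • opAbs (T - μ • 1)) := by
    rw [cfc_add (a := T) f (fun x : ℝ => df * (1 / 2 - |x - μ| / (M - m))) hcont (by fun_prop)]
    congr 1
    rw [cfc_const_mul df (fun x : ℝ => 1 / 2 - |x - μ| / (M - m)) T (by fun_prop)]
    congr 1
    rw [cfc_sub (fun _ : ℝ => (1 / 2 : ℝ)) (fun x : ℝ => |x - μ| / (M - m)) T (by fun_prop)
      (by fun_prop), cfc_const (1 / 2 : ℝ) T, Algebra.algebraMap_eq_smul_one]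
    congr 1
    have : (fun x : ℝ => |x - μ| / (M - m)) = fun x : ℝ => (M - m)⁻¹ * |x - μ| := by
      funext x; rw [div_eq_inv_mul]
    rw [this, cfc_const_mul ((M - m)⁻¹) (fun x : ℝ => |x - μ|) T (by fun_prop),
      cfc_abs_sub' μ T hTsa]
  rw [h2, cfc_affine' _ _ T hTsa] at h1
  exact h1

lemma key_E_nonneg' (hmM : m < M) {T : H →L[ℂ] H} (hTsa : IsSelfAdjoint T)
    (hTl : m • 1 ≤ T) (hTu : T ≤ M • 1) :
    (0 : H →L[ℂ] H) ≤ (1 / 2 : ℝ) • (1 : H →L[ℂ] H) -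
      (M - m)⁻¹ • opAbs (T - ((m + M) / 2) • 1) := by
  have hspec : spectrum ℝ T ⊆ Set.Icc m M := spec_bounds' hTsa hTl hTu
  have h2 : cfc (fun x : ℝ => |x - (m + M) / 2|) T ≤ algebraMap ℝ _ ((M - m) / 2) := by
    apply cfc_le_algebraMap _ _ _ (fun x hx => ?_) (by fun_prop) hTsa
    obtain ⟨h1', h2'⟩ := hspec hx
    rw [abs_le]; constructor <;> [linarith; linarith]
  rw [cfc_abs_sub' _ T hTsa, Algebra.algebraMap_eq_smul_one] at h2
  have h3 : (M - m)⁻¹ • opAbs (T - ((m + M) / 2) • 1) ≤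
      (M - m)⁻¹ • (((M - m) / 2) • (1 : H →L[ℂ] H)) :=
    smul_le_smul_of_nonneg_left h2 (inv_nonneg.mpr (by linarith))
  rw [smul_smul] at h3
  have hne : (M : ℝ) - m ≠ 0 := sub_ne_zero.mpr hmM.ne'
  have h4 : (M - m)⁻¹ * ((M - m) / 2) = 1 / 2 := by field_simp
  rw [h4] at h3
  exact sub_nonneg.mpr h3

lemma key_lower' (hf : ContinuousOn f J) {T : H →L[ℂ] H} (hTsa : IsSelfAdjoint T)
    (hspecJ : spectrum ℝ T ⊆ J)
    (haux : ∀ x ∈ spectrum ℝ T,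
      (f M - f m) / (M - m) * x + (f m - (f M - f m) / (M - m) * m) ≤ f x) :
    ((f M - f m) / (M - m)) • T + (f m - (f M - f m) / (M - m) * m) • 1 ≤ cfc f T := by
  have h1 : cfc (fun x : ℝ =>
      (f M - f m) / (M - m) * x + (f m - (f M - f m) / (M - m) * m)) T ≤ cfc f T := by
    apply cfc_mono (fun x hx => haux x hx) (by fun_prop) (hf.mono hspecJ)
  rwa [cfc_affine' _ _ T hTsa] at h1

lemma avg_le' {n : ℕ} (Ψ : Fin n → (H →L[ℂ] H) →ₗ[ℂ] (H →L[ℂ] H))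
    (hpos : ∀ i, ∀ T : H →L[ℂ] H, 0 ≤ T → 0 ≤ Ψ i T) {γ : ℝ} (hγ : 0 < γ)
    (h1 : ∑ i, Ψ i 1 = γ • (1 : H →L[ℂ] H)) (G : Fin n → H →L[ℂ] H) {r : ℝ}
    (h : ∀ i, G i ≤ r • 1) : γ⁻¹ • ∑ i, Ψ i (G i) ≤ r • 1 := by
  have hstep : ∑ i, Ψ i (G i) ≤ ∑ i, Ψ i (r • 1) :=
    Finset.sum_le_sum fun i _ => posmap_mono' (Ψ i) (hpos i) (h i)
  have heq : ∑ i, Ψ i (r • (1 : H →L[ℂ] H)) = (r * γ) • (1 : H →L[ℂ] H) := by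
    simp_rw [LinearMap.map_smul_of_tower]
    rw [← Finset.smul_sum, h1, smul_smul]
  rw [heq] at hstep
  have h3 := smul_le_smul_of_nonneg_left hstep (inv_nonneg.mpr hγ.le)
  rw [smul_smul] at h3
  have : γ⁻¹ * (r * γ) = r := by field_simp
  rwa [this] at h3

lemma le_avg' {n : ℕ} (Ψ : Fin n → (H →L[ℂ] H) →ₗ[ℂ] (H →L[ℂ] H))
    (hpos : ∀ i, ∀ T : H →L[ℂ] H, 0 ≤ T → 0 ≤ Ψ i T) {γ : ℝ} (hγ : 0 < γ)
    (h1 : ∑ i, Ψ i 1 = γ • (1 : H →L[ℂ] H)) (G : Fin n → H →L[ℂ] H) {r : ℝ}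
    (h : ∀ i, r • 1 ≤ G i) : r • 1 ≤ γ⁻¹ • ∑ i, Ψ i (G i) := by
  have hstep : ∑ i, Ψ i (r • 1) ≤ ∑ i, Ψ i (G i) :=
    Finset.sum_le_sum fun i _ => posmap_mono' (Ψ i) (hpos i) (h i)
  have heq : ∑ i, Ψ i (r • (1 : H →L[ℂ] H)) = (r * γ) • (1 : H →L[ℂ] H) := by
    simp_rw [LinearMap.map_smul_of_tower]
    rw [← Finset.smul_sum, h1, smul_smul]
  rw [heq] at hstep
  have h3 := smul_le_smul_of_nonneg_left hstep (inv_nonneg.mpr hγ.le)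
  rw [smul_smul] at h3
  have : γ⁻¹ * (r * γ) = r := by field_simp
  rwa [this] at h3

end opAux

/-- Remark after Theorem 2.2, variant (2). -/
theorem jensen_type_variant_two {H : Type*} [NormedAddCommGroup H] [InnerProductSpace ℂ H]
    [CompleteSpace H] {n₁ n₂ n₃ n₄ : ℕ} (α β γ δ : ℝ)
    (hα : 0 < α) (hβ : 0 < β) (hγ : 0 < γ) (hδ : 0 < δ)
    (Φ : Fin n₁ → (H →L[ℂ] H) →ₗ[ℂ] (H →L[ℂ] H))
    (Φb : Fin n₂ → (H →L[ℂ] H) →ₗ[ℂ] (H →L[ℂ] H))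
    (Ψ : Fin n₃ → (H →L[ℂ] H) →ₗ[ℂ] (H →L[ℂ] H))
    (Ψb : Fin n₄ → (H →L[ℂ] H) →ₗ[ℂ] (H →L[ℂ] H))
    (hΦpos : ∀ i, ∀ T : H →L[ℂ] H, 0 ≤ T → 0 ≤ Φ i T)
    (hΦbpos : ∀ i, ∀ T : H →L[ℂ] H, 0 ≤ T → 0 ≤ Φb i T)
    (hΨpos : ∀ i, ∀ T : H →L[ℂ] H, 0 ≤ T → 0 ≤ Ψ i T)
    (hΨbpos : ∀ i, ∀ T : H →L[ℂ] H, 0 ≤ T → 0 ≤ Ψb i T)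
    (hΦ1 : ∑ i, Φ i 1 = α • (1 : H →L[ℂ] H))
    (hΦb1 : ∑ i, Φb i 1 = δ • (1 : H →L[ℂ] H))
    (hΨ1 : ∑ i, Ψ i 1 = γ • (1 : H →L[ℂ] H))
    (hΨb1 : ∑ i, Ψb i 1 = β • (1 : H →L[ℂ] H))
    (m M : ℝ) (hmM : m < M) (J : Set ℝ) (hJ : J.OrdConnected) (hJmM : Set.Icc m M ⊆ J)
    (A : Fin n₁ → H →L[ℂ] H) (D : Fin n₂ → H →L[ℂ] H)
    (C : Fin n₃ → H →L[ℂ] H) (B : Fin n₄ → H →L[ℂ] H)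
    (hAsa : ∀ i, IsSelfAdjoint (A i)) (hAspec : ∀ i, spectrum ℝ (A i) ⊆ J)
    (hDsa : ∀ i, IsSelfAdjoint (D i)) (hDspec : ∀ i, spectrum ℝ (D i) ⊆ J)
    (hCsa : ∀ i, IsSelfAdjoint (C i)) (hCspec : ∀ i, spectrum ℝ (C i) ⊆ J)
    (hBsa : ∀ i, IsSelfAdjoint (B i)) (hBspec : ∀ i, spectrum ℝ (B i) ⊆ J)
    (hA : ∀ i, A i ≤ m • 1) (hD : ∀ i, M • 1 ≤ D i)
    (hBl : ∀ i, m • 1 ≤ B i) (hBu : ∀ i, B i ≤ M • 1)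
    (hCl : ∀ i, m • 1 ≤ C i) (hCu : ∀ i, C i ≤ M • 1)
    (hsum : α⁻¹ • ∑ i, Φ i (A i) + δ⁻¹ • ∑ i, Φb i (D i) =
      γ⁻¹ • ∑ i, Ψ i (C i) + β⁻¹ • ∑ i, Ψb i (B i))
    (f : ℝ → ℝ) (hf : ContinuousOn f J) (hconv : ConvexOn ℝ J f) :
    cfc f (γ⁻¹ • ∑ i, Ψ i (C i)) + β⁻¹ • ∑ i, Ψb i (cfc f (B i)) ≤
        cfc f (α⁻¹ • ∑ i, Φ i (A i)) + δ⁻¹ • ∑ i, Φb i (cfc f (D i)) -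
          (f m + f M - 2 * f ((m + M) / 2)) •
            ((1 : H →L[ℂ] H) -
              (M - m)⁻¹ •
                (opAbs (γ⁻¹ • ∑ i, Ψ i (C i) - ((m + M) / 2) • 1) +
                  β⁻¹ • ∑ i, Ψb i (opAbs (B i - ((m + M) / 2) • 1)))) ∧
      cfc f (α⁻¹ • ∑ i, Φ i (A i)) + δ⁻¹ • ∑ i, Φb i (cfc f (D i)) -
          (f m + f M - 2 * f ((m + M) / 2)) •
            ((1 : H →L[ℂ] H) -
              (M - m)⁻¹ •
                (opAbs (γ⁻¹ • ∑ i, Ψ i (C i) - ((m + M) / 2) • 1) +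
                  β⁻¹ • ∑ i, Ψb i (opAbs (B i - ((m + M) / 2) • 1)))) ≤
        cfc f (α⁻¹ • ∑ i, Φ i (A i)) + δ⁻¹ • ∑ i, Φb i (cfc f (D i)) := by
  rcases subsingleton_or_nontrivial (H →L[ℂ] H) with hsub | hnt
  · exact ⟨le_of_eq (Subsingleton.elim _ _), le_of_eq (Subsingleton.elim _ _)⟩
  have hMm : (0:ℝ) < M - m := by linarith
  have hne : (M:ℝ) - m ≠ 0 := ne_of_gt hMm
  have hβ' : (β:ℝ) ≠ 0 := hβ.ne'
  have hδ' : (δ:ℝ) ≠ 0 := hδ.ne'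
  have hmJ : m ∈ J := hJmM ⟨le_refl m, hmM.le⟩
  have hMJ : M ∈ J := hJmM ⟨hmM.le, le_refl M⟩
  set μ := (m + M) / 2 with hμdef
  set df := f m + f M - 2 * f μ with hdfdef
  set k := (f M - f m) / (M - m) with hkdef
  set c := f m - k * m with hcdef
  set X := γ⁻¹ • ∑ i, Ψ i (C i) with hXdef
  set Y := α⁻¹ • ∑ i, Φ i (A i) with hYdef
  set SB := ∑ i, Ψb i (B i) with hSBdef
  set SD := ∑ i, Φb i (D i) with hSDdef
  set OB := ∑ i, Ψb i (opAbs (B i - μ • 1)) with hOBdef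
  set GB := ∑ i, Ψb i (cfc f (B i)) with hGBdef
  set GD := ∑ i, Φb i (cfc f (D i)) with hGDdef
  set EX := (1 / 2 : ℝ) • (1 : H →L[ℂ] H) - (M - m)⁻¹ • opAbs (X - μ • 1) with hEXdef
  set EB := ∑ i, Ψb i ((1 / 2 : ℝ) • (1 : H →L[ℂ] H) -
    (M - m)⁻¹ • opAbs (B i - μ • 1)) with hEBdef
  set Xt := (1 : H →L[ℂ] H) - (M - m)⁻¹ • (opAbs (X - μ • 1) + β⁻¹ • OB) with hXtdef
  -- self-adjointness
  have hXsa : IsSelfAdjoint X :=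
    smul_sa' (sum_sa' fun i => posmap_sa' (Ψ i) (hΨpos i) (hCsa i))
  have hYsa : IsSelfAdjoint Y :=
    smul_sa' (sum_sa' fun i => posmap_sa' (Φ i) (hΦpos i) (hAsa i))
  -- order bounds
  have hXl : m • 1 ≤ X := le_avg' Ψ hΨpos hγ hΨ1 C hCl
  have hXu : X ≤ M • 1 := avg_le' Ψ hΨpos hγ hΨ1 C hCu
  have hYu : Y ≤ m • 1 := avg_le' Φ hΦpos hα hΦ1 A hA
  -- spectrum of Y is inside J
  have hn₁ : Nonempty (Fin n₁) := by
    rcases Nat.eq_zero_or_pos n₁ with h0 | h0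
    · exfalso
      subst h0
      simp only [Finset.univ_eq_empty, Finset.sum_empty] at hΦ1
      rcases smul_eq_zero.mp hΦ1.symm with h | h
      · exact hα.ne' h
      · exact one_ne_zero h
    · exact ⟨⟨0, h0⟩⟩
  have hcomp : ∀ i, IsCompact (spectrum ℝ (A i)) := fun i =>
    isCompact_iff_compactSpace.mpr inferInstance
  have hspecA_ne : ∀ i, (spectrum ℝ (A i)).Nonempty := fun i =>
    CFC.spectrum_nonempty ℝ (A i) (hAsa i)
  set c₀ := Finset.univ.inf' Finset.univ_nonempty (fun i => sInf (spectrum ℝ (A i))) with hc₀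
  have hc₀J : c₀ ∈ J := by
    obtain ⟨i, -, hi⟩ := Finset.exists_mem_eq_inf' (Finset.univ_nonempty)
      (fun i => sInf (spectrum ℝ (A i)))
    rw [hc₀, hi]
    exact hAspec i ((hcomp i).sInf_mem (hspecA_ne i))
  have hc₀le : ∀ i, ∀ x ∈ spectrum ℝ (A i), c₀ ≤ x := fun i x hx =>
    le_trans (Finset.inf'_le _ (Finset.mem_univ i)) (csInf_le (hcomp i).bddBelow hx)
  have hYl : c₀ • 1 ≤ Y := le_avg' Φ hΦpos hα hΦ1 A (fun i => by
    rw [← Algebra.algebraMap_eq_smul_one]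
    exact algebraMap_le_of_le_spectrum (hc₀le i) (hAsa i))
  have hc₀m : c₀ ≤ m := by
    obtain ⟨i⟩ := hn₁
    have h1 : sInf (spectrum ℝ (A i)) ∈ spectrum ℝ (A i) :=
      (hcomp i).sInf_mem (hspecA_ne i)
    have h2 : sInf (spectrum ℝ (A i)) ≤ m := by
      have h3 : A i ≤ algebraMap ℝ (H →L[ℂ] H) m := by
        rw [Algebra.algebraMap_eq_smul_one]; exact hA i
      exact (le_algebraMap_iff_spectrum_le (hAsa i)).mp h3 _ h1
    exact le_trans (Finset.inf'_le _ (Finset.mem_univ i)) h2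
  have hYspecJ : spectrum ℝ Y ⊆ J :=
    (spec_bounds' hYsa hYl hYu).trans (hJ.out hc₀J hmJ)
  have hYm : ∀ x ∈ spectrum ℝ Y, x ≤ m := fun x hx => ((spec_bounds' hYsa hYl hYu) hx).2
  have hDM : ∀ i, ∀ x ∈ spectrum ℝ (D i), M ≤ x := by
    intro i x hx
    have h3 : algebraMap ℝ (H →L[ℂ] H) M ≤ D i := by
      rw [Algebra.algebraMap_eq_smul_one]; exact hD i
    exact (algebraMap_le_iff_le_spectrum (hDsa i)).mp h3 x hx
  -- upper key inequalities
  have hKX : cfc f X + df • EX ≤ k • X + c • 1 :=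
    key_upper' hconv hf hJmM hmM hXsa hXl hXu
  have hKB : ∀ i, Ψb i (cfc f (B i)) +
      df • Ψb i ((1 / 2 : ℝ) • (1 : H →L[ℂ] H) - (M - m)⁻¹ • opAbs (B i - μ • 1)) ≤
      k • Ψb i (B i) + c • Ψb i 1 := fun i => by
    have h := posmap_mono' (Ψb i) (hΨbpos i)
      (key_upper' hconv hf hJmM hmM (hBsa i) (hBl i) (hBu i))
    rwa [map_add, LinearMap.map_smul_of_tower, map_add, LinearMap.map_smul_of_tower,
      LinearMap.map_smul_of_tower] at h
  have hKBsum : GB + df • EB ≤ k • SB + (c * β) • 1 := by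
    have h := Finset.sum_le_sum (fun i (_ : i ∈ Finset.univ) => hKB i)
    rw [Finset.sum_add_distrib, ← Finset.smul_sum, Finset.sum_add_distrib,
      ← Finset.smul_sum, ← Finset.smul_sum, hΨb1, smul_smul] at h
    exact h
  -- expression for EB
  have hEB : EB = (β / 2) • (1 : H →L[ℂ] H) - (M - m)⁻¹ • OB := by
    calc EB = ∑ i, ((1 / 2 : ℝ) • Ψb i 1 - (M - m)⁻¹ • Ψb i (opAbs (B i - μ • 1))) :=
          Finset.sum_congr rfl fun i _ => by
            rw [map_sub, LinearMap.map_smul_of_tower, LinearMap.map_smul_of_tower]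
      _ = (1 / 2 : ℝ) • ∑ i, Ψb i 1 - (M - m)⁻¹ • OB := by
          rw [Finset.sum_sub_distrib, ← Finset.smul_sum, ← Finset.smul_sum]
      _ = (β / 2) • (1 : H →L[ℂ] H) - (M - m)⁻¹ • OB := by
          rw [hΨb1, smul_smul, show (1 / 2 : ℝ) * β = β / 2 by ring]
  -- expression for β⁻¹ • EB
  have hEB' : β⁻¹ • EB = (1 / 2 : ℝ) • (1 : H →L[ℂ] H) - (M - m)⁻¹ • (β⁻¹ • OB) := by
    rw [hEB, smul_sub, smul_smul, show β⁻¹ * (β / 2) = 1 / 2 by field_simp,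
      smul_comm β⁻¹ ((M - m)⁻¹) OB]
  -- combined upper bound
  have hUp : (cfc f X + β⁻¹ • GB) + df • Xt ≤ k • (X + β⁻¹ • SB) + (2 * c) • 1 := by
    have h1 := add_le_add hKX (smul_le_smul_of_nonneg_left hKBsum (inv_nonneg.mpr hβ.le))
    have hLeq : (cfc f X + df • EX) + β⁻¹ • (GB + df • EB) =
        (cfc f X + β⁻¹ • GB) + df • Xt := by
      rw [smul_add β⁻¹ GB (df • EB), smul_comm β⁻¹ df EB, hEB', hEXdef, hXtdef]
      module
    have hReq : (k • X + c • 1) + β⁻¹ • (k • SB + (c * β) • 1) =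
        k • (X + β⁻¹ • SB) + (2 * c) • 1 := by
      rw [smul_add β⁻¹ (k • SB) ((c * β) • 1), smul_smul β⁻¹ (c * β),
        show β⁻¹ * (c * β) = c by field_simp, smul_comm β⁻¹ k SB]
      module
    exact hLeq.symm.le.trans (h1.trans hReq.le)
  -- lower key inequalities
  have hKY : k • Y + c • 1 ≤ cfc f Y :=
    key_lower' hf hYsa hYspecJ
      (fun x hx => aux_lower_left' hconv hJmM hmM (hYspecJ hx) (hYm x hx))
  have hKD : ∀ i, k • Φb i (D i) + c • Φb i 1 ≤ Φb i (cfc f (D i)) := fun i => by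
    have h := posmap_mono' (Φb i) (hΦbpos i)
      (key_lower' hf (hDsa i) (hDspec i)
        (fun x hx => aux_lower_right' hconv hJmM hmM (hDspec i hx) (hDM i x hx)))
    rwa [map_add, LinearMap.map_smul_of_tower, LinearMap.map_smul_of_tower] at h
  have hKDsum : k • SD + (c * δ) • 1 ≤ GD := by
    have h := Finset.sum_le_sum (fun i (_ : i ∈ Finset.univ) => hKD i)
    rw [Finset.sum_add_distrib, ← Finset.smul_sum, ← Finset.smul_sum, hΦb1, smul_smul] at h
    exact h
  have hLow : k • (Y + δ⁻¹ • SD) + (2 * c) • 1 ≤ cfc f Y + δ⁻¹ • GD := by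
    have h1 := add_le_add hKY (smul_le_smul_of_nonneg_left hKDsum (inv_nonneg.mpr hδ.le))
    have hLeq : k • (Y + δ⁻¹ • SD) + (2 * c) • 1 =
        (k • Y + c • 1) + δ⁻¹ • (k • SD + (c * δ) • 1) := by
      rw [smul_add δ⁻¹ (k • SD) ((c * δ) • 1), smul_smul δ⁻¹ (c * δ),
        show δ⁻¹ * (c * δ) = c by field_simp, smul_comm δ⁻¹ k SD]
      module
    exact hLeq.le.trans h1
  -- main chain
  have hmain : (cfc f X + β⁻¹ • GB) + df • Xt ≤ cfc f Y + δ⁻¹ • GD := by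
    refine hUp.trans ?_
    have heq : k • (X + β⁻¹ • SB) + (2 * c) • 1 =
        k • (Y + δ⁻¹ • SD) + (2 * c) • 1 := by rw [← hsum]
    exact heq.le.trans hLow
  -- nonnegativity of the correction term
  have hdf0 : 0 ≤ df := by
    have h := hconv.2 hmJ hMJ (by norm_num : (0:ℝ) ≤ 1 / 2) (by norm_num : (0:ℝ) ≤ 1 / 2)
      (by norm_num)
    simp only [smul_eq_mul] at h
    rw [show (1 / 2 : ℝ) * m + 1 / 2 * M = μ by rw [hμdef]; ring] at h
    rw [hdfdef]; linarith
  have hXt0 : (0 : H →L[ℂ] H) ≤ Xt := by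
    have hEX0 : (0 : H →L[ℂ] H) ≤ EX := key_E_nonneg' hmM hXsa hXl hXu
    have hEB0 : (0 : H →L[ℂ] H) ≤ EB :=
      Finset.sum_nonneg fun i _ => hΨbpos i _ (key_E_nonneg' hmM (hBsa i) (hBl i) (hBu i))
    have hXtEq : Xt = EX + β⁻¹ • EB := by
      rw [hEB', hEXdef, hXtdef]
      module
    rw [hXtEq]
    exact add_nonneg hEX0 (smul_nonneg (inv_nonneg.mpr hβ.le) hEB0)
  constructor
  · rw [le_sub_iff_add_le]
    exact hmain
  · exact sub_le_self _ (smul_nonneg hdf0 hXt0)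
end

section
/- Let m < M be real numbers, let J be an interval containing [m, M], and let f : J → ℝ be a continuous convex function. Let A, B, C, D ∈ σ(J) satisfy A + D = B + C, A ≤ m·I, m·I ≤ B ≤ M·I, m·I ≤ C ≤ M·I and M·I ≤ D. If Φ is a unital positive linear map on B(H), then f(Φ(B)) + f(Φ(C)) ≤ Φ(f(A)) + Φ(f(D)) − δ_f · X̃ ≤ Φ(f(A)) + Φ(f(D)), where X̃ = I − (1/(M−m))·( |Φ(B) − ((m+M)/2)·I| + |Φ(C) − ((m+M)/2)·I| ). -/
section ScalarLemmas

lemma scalar_key1 {m M : ℝ} (hmM : m < M) {J : Set ℝ} (hJmM : Set.Icc m M ⊆ J)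
    {f : ℝ → ℝ} (hconv : ConvexOn ℝ J f) {x : ℝ} (hx : x ∈ Set.Icc m M) :
    f x ≤ ((f M - f m)/(M - m)) * x + (M * f m - m * f M)/(M - m)
      - ((f m + f M - 2 * f ((m+M)/2))/2
        - ((f m + f M - 2 * f ((m+M)/2))/(M - m)) * |x - (m+M)/2|) := by
  set c : ℝ := (m+M)/2 with hc
  have hMm : (0:ℝ) < M - m := by linarith
  have hne : M - m ≠ 0 := ne_of_gt hMm
  have hmJ : m ∈ J := hJmM ⟨le_refl m, hmM.le⟩
  have hMJ : M ∈ J := hJmM ⟨hmM.le, le_refl M⟩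
  have hcJ : c ∈ J := hJmM ⟨by rw [hc]; linarith, by rw [hc]; linarith⟩
  obtain ⟨hxm, hxM⟩ := hx
  rcases le_total x c with hxc | hcx
  · have hcm : (0:ℝ) < c - m := by rw [hc]; linarith
    have hcmne : c - m ≠ 0 := ne_of_gt hcm
    have hl1 : 0 ≤ (c - x)/(c - m) := by apply div_nonneg <;> linarith
    have hl2 : 0 ≤ (x - m)/(c - m) := by apply div_nonneg <;> linarith
    have hl3 : (c - x)/(c - m) + (x - m)/(c - m) = 1 := by field_simp; ring
    have hcvx := hconv.2 hmJ hcJ hl1 hl2 hl3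
    rw [smul_eq_mul, smul_eq_mul, smul_eq_mul, smul_eq_mul] at hcvx
    have hxeq : (c - x)/(c - m) * m + (x - m)/(c - m) * c = x := by
      field_simp; ring
    rw [hxeq] at hcvx
    have habs : |x - c| = c - x := by rw [abs_of_nonpos (by linarith)]; ring
    rw [habs]
    have hT : ((f M - f m)/(M - m)) * x + (M * f m - m * f M)/(M - m)
      - ((f m + f M - 2 * f c)/2 - ((f m + f M - 2 * f c)/(M - m)) * (c - x))
      = (c - x)/(c - m) * f m + (x - m)/(c - m) * f c := by
      have h2 : c - m = (M - m)/2 := by rw [hc]; ring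
      rw [h2]; field_simp; ring
    linarith
  · have hcm : (0:ℝ) < M - c := by rw [hc]; linarith
    have hcmne : M - c ≠ 0 := ne_of_gt hcm
    have hl1 : 0 ≤ (M - x)/(M - c) := by apply div_nonneg <;> linarith
    have hl2 : 0 ≤ (x - c)/(M - c) := by apply div_nonneg <;> linarith
    have hl3 : (M - x)/(M - c) + (x - c)/(M - c) = 1 := by field_simp; ring
    have hcvx := hconv.2 hcJ hMJ hl1 hl2 hl3
    rw [smul_eq_mul, smul_eq_mul, smul_eq_mul, smul_eq_mul] at hcvx
    have hxeq : (M - x)/(M - c) * c + (x - c)/(M - c) * M = x := by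
      field_simp; ring
    rw [hxeq] at hcvx
    have habs : |x - c| = x - c := abs_of_nonneg (by linarith)
    rw [habs]
    have hT : ((f M - f m)/(M - m)) * x + (M * f m - m * f M)/(M - m)
      - ((f m + f M - 2 * f c)/2 - ((f m + f M - 2 * f c)/(M - m)) * (x - c))
      = (M - x)/(M - c) * f c + (x - c)/(M - c) * f M := by
      have h2 : M - c = (M - m)/2 := by rw [hc]; ring
      rw [h2]; field_simp; ring
    linarith

lemma scalar_key2 {m M : ℝ} (hmM : m < M) {J : Set ℝ} (hJmM : Set.Icc m M ⊆ J)
    {f : ℝ → ℝ} (hconv : ConvexOn ℝ J f) {x : ℝ} (hxJ : x ∈ J) (hx : x ≤ m ∨ M ≤ x) :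
    ((f M - f m)/(M - m)) * x + (M * f m - m * f M)/(M - m) ≤ f x := by
  have hMm : (0:ℝ) < M - m := by linarith
  have hne : M - m ≠ 0 := ne_of_gt hMm
  have hmJ : m ∈ J := hJmM ⟨le_refl m, hmM.le⟩
  have hMJ : M ∈ J := hJmM ⟨hmM.le, le_refl M⟩
  rw [div_mul_eq_mul_div, ← add_div, div_le_iff₀ hMm]
  rcases hx with hx | hx
  · rcases eq_or_lt_of_le hx with heq | hx
    · rw [heq]; apply le_of_eq; ring
    · have hMx : (0:ℝ) < M - x := by linarith
      have hl1 : 0 ≤ (M - m)/(M - x) := by positivity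
      have hl2 : 0 ≤ (m - x)/(M - x) := by apply div_nonneg <;> linarith
      have hl3 : (M - m)/(M - x) + (m - x)/(M - x) = 1 := by field_simp; ring
      have hcvx := hconv.2 hxJ hMJ hl1 hl2 hl3
      rw [smul_eq_mul, smul_eq_mul, smul_eq_mul, smul_eq_mul] at hcvx
      have hxeq : (M - m)/(M - x) * x + (m - x)/(M - x) * M = m := by field_simp; ring
      rw [hxeq, div_mul_eq_mul_div, div_mul_eq_mul_div, ← add_div,
        le_div_iff₀ hMx] at hcvx
      nlinarith [hcvx]
  · rcases eq_or_lt_of_le hx with heq | hx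
    · rw [← heq]; apply le_of_eq; ring
    · have hxm : (0:ℝ) < x - m := by linarith
      have hl1 : 0 ≤ (x - M)/(x - m) := by apply div_nonneg <;> linarith
      have hl2 : 0 ≤ (M - m)/(x - m) := by positivity
      have hl3 : (x - M)/(x - m) + (M - m)/(x - m) = 1 := by field_simp; ring
      have hcvx := hconv.2 hmJ hxJ hl1 hl2 hl3
      rw [smul_eq_mul, smul_eq_mul, smul_eq_mul, smul_eq_mul] at hcvx
      have hxeq : (x - M)/(x - m) * m + (M - m)/(x - m) * x = M := by field_simp; ring
      rw [hxeq, div_mul_eq_mul_div, div_mul_eq_mul_div, ← add_div,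
        le_div_iff₀ hxm] at hcvx
      nlinarith [hcvx]

end ScalarLemmas

section OperatorLemmas

variable {H : Type*} [NormedAddCommGroup H] [InnerProductSpace ℂ H] [CompleteSpace H]

lemma clm_smul_nonneg {r : ℝ} (hr : 0 ≤ r) {T : H →L[ℂ] H} (hT : 0 ≤ T) : 0 ≤ r • T := by
  have h : r • T = star ((Real.sqrt r : ℝ) • (1 : H →L[ℂ] H)) * T *
      ((Real.sqrt r : ℝ) • (1 : H →L[ℂ] H)) := by
    rw [star_smul, star_trivial, star_one, smul_mul_assoc, mul_smul_comm, smul_mul_assoc,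
      smul_smul, Real.mul_self_sqrt hr, one_mul, mul_one]
  rw [h]
  exact star_left_conjugate_nonneg hT _

lemma clm_smul_one_sa (m : ℝ) : IsSelfAdjoint (m • (1 : H →L[ℂ] H)) := by
  exact IsSelfAdjoint.smul (star_trivial m) (star_one _)

end OperatorLemmas

section OperatorLemmas2

variable {H : Type*} [NormedAddCommGroup H] [InnerProductSpace ℂ H] [CompleteSpace H]

lemma opAbs_sub_smul_one (T : H →L[ℂ] H) (hT : IsSelfAdjoint T) (c : ℝ) :
    opAbs (T - c • 1) = cfc (fun x : ℝ => |x - c|) T := by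
  have h : T - c • 1 = cfc (fun x : ℝ => x - c) T := by
    rw [cfc_sub _ _ T, cfc_id' ℝ T, cfc_const c T, Algebra.algebraMap_eq_smul_one]
  rw [opAbs, h, ← cfc_comp (fun t : ℝ => |t|) (fun x : ℝ => x - c) T]
  rfl

lemma cfc_line (a1 a0 : ℝ) (T : H →L[ℂ] H) (hT : IsSelfAdjoint T) :
    cfc (fun x : ℝ => a1 * x + a0) T = a1 • T + a0 • 1 := by
  rw [cfc_add T (fun x : ℝ => a1 * x) (fun _ : ℝ => a0),
    cfc_const_mul a1 (fun x : ℝ => x) T, cfc_id' ℝ T, cfc_const a0 T,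
    Algebra.algebraMap_eq_smul_one]

lemma cfc_line_tent (T : H →L[ℂ] H) (hT : IsSelfAdjoint T) (a1 a0 d e c : ℝ) :
    cfc (fun x : ℝ => a1 * x + a0 - (d - e * |x - c|)) T
      = a1 • T + a0 • (1 : H →L[ℂ] H) - (d • 1 - e • opAbs (T - c • 1)) := by
  rw [opAbs_sub_smul_one T hT c,
    cfc_sub (fun x : ℝ => a1 * x + a0) (fun x : ℝ => d - e * |x - c|) T,
    cfc_line a1 a0 T hT,
    cfc_sub (fun _ : ℝ => d) (fun x : ℝ => e * |x - c|) T,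
    cfc_const_mul e (fun x : ℝ => |x - c|) T, cfc_const d T,
    Algebra.algebraMap_eq_smul_one]

end OperatorLemmas2

set_option maxHeartbeats 1000000 in
set_option synthInstance.maxHeartbeats 200000 in
/-- Corollary 2.4 of the paper. -/
theorem jensen_type_unital_map {H : Type*} [NormedAddCommGroup H] [InnerProductSpace ℂ H]
    [CompleteSpace H] (m M : ℝ) (hmM : m < M) (J : Set ℝ) (hJ : J.OrdConnected)
    (hJmM : Set.Icc m M ⊆ J) (f : ℝ → ℝ) (hf : ContinuousOn f J) (hconv : ConvexOn ℝ J f)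
    (A B C D : H →L[ℂ] H)
    (hAsa : IsSelfAdjoint A) (hAspec : spectrum ℝ A ⊆ J)
    (hBsa : IsSelfAdjoint B) (hBspec : spectrum ℝ B ⊆ J)
    (hCsa : IsSelfAdjoint C) (hCspec : spectrum ℝ C ⊆ J)
    (hDsa : IsSelfAdjoint D) (hDspec : spectrum ℝ D ⊆ J)
    (hADBC : A + D = B + C)
    (hA : A ≤ m • 1) (hBl : m • 1 ≤ B) (hBu : B ≤ M • 1)
    (hCl : m • 1 ≤ C) (hCu : C ≤ M • 1) (hD : M • 1 ≤ D)
    (Φ : (H →L[ℂ] H) →ₗ[ℂ] (H →L[ℂ] H))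
    (hΦpos : ∀ T : H →L[ℂ] H, 0 ≤ T → 0 ≤ Φ T) (hΦ1 : Φ 1 = 1) :
    cfc f (Φ B) + cfc f (Φ C) ≤
        Φ (cfc f A) + Φ (cfc f D) -
          (f m + f M - 2 * f ((m + M) / 2)) •
            ((1 : H →L[ℂ] H) -
              (M - m)⁻¹ •
                (opAbs (Φ B - ((m + M) / 2) • 1) + opAbs (Φ C - ((m + M) / 2) • 1))) ∧
      Φ (cfc f A) + Φ (cfc f D) -
          (f m + f M - 2 * f ((m + M) / 2)) •
            ((1 : H →L[ℂ] H) -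
              (M - m)⁻¹ •
                (opAbs (Φ B - ((m + M) / 2) • 1) + opAbs (Φ C - ((m + M) / 2) • 1))) ≤
        Φ (cfc f A) + Φ (cfc f D) := by
  have hMm : (0:ℝ) < M - m := by linarith
  have hne : M - m ≠ 0 := ne_of_gt hMm
  have hmJ : m ∈ J := hJmM ⟨le_refl m, hmM.le⟩
  have hMJ : M ∈ J := hJmM ⟨hmM.le, le_refl M⟩
  set c : ℝ := (m + M) / 2 with hc
  set δ : ℝ := f m + f M - 2 * f c with hδdef
  set a1 : ℝ := (f M - f m)/(M - m) with ha1
  set a0 : ℝ := (M * f m - m * f M)/(M - m) with ha0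
  -- δ nonnegative
  have hδ : 0 ≤ δ := by
    have h := hconv.2 hmJ hMJ (by norm_num : (0:ℝ) ≤ 1/2) (by norm_num : (0:ℝ) ≤ 1/2)
      (by norm_num)
    rw [smul_eq_mul, smul_eq_mul, smul_eq_mul, smul_eq_mul] at h
    have : (1/2 : ℝ) * m + (1/2 : ℝ) * M = c := by rw [hc]; ring
    rw [this] at h
    rw [hδdef]; linarith
  -- basic positivity / monotonicity of Φ
  have hΦmono : ∀ {X Y : H →L[ℂ] H}, X ≤ Y → Φ X ≤ Φ Y := by
    intro X Y h
    have h0 := hΦpos _ (sub_nonneg.mpr h)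
    rw [map_sub] at h0
    exact sub_nonneg.mp h0
  have hΦsmul1 : ∀ r : ℝ, Φ (r • (1 : H →L[ℂ] H)) = r • 1 := fun r => by
    rw [Φ.map_smul_of_tower, hΦ1]
  -- properties of Φ B, Φ C
  have hPB_l : m • (1 : H →L[ℂ] H) ≤ Φ B := by
    have := hΦmono hBl; rwa [hΦsmul1] at this
  have hPB_u : Φ B ≤ M • (1 : H →L[ℂ] H) := by
    have := hΦmono hBu; rwa [hΦsmul1] at this
  have hPC_l : m • (1 : H →L[ℂ] H) ≤ Φ C := by
    have := hΦmono hCl; rwa [hΦsmul1] at this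
  have hPC_u : Φ C ≤ M • (1 : H →L[ℂ] H) := by
    have := hΦmono hCu; rwa [hΦsmul1] at this
  have hsa : ∀ {T : H →L[ℂ] H}, m • (1 : H →L[ℂ] H) ≤ T → IsSelfAdjoint T := by
    intro T h
    have h1 : IsSelfAdjoint (T - m • (1 : H →L[ℂ] H)) := .of_nonneg (sub_nonneg.mpr h)
    have := h1.add (clm_smul_one_sa (H := H) m)
    rwa [sub_add_cancel] at this
  have hPBsa : IsSelfAdjoint (Φ B) := hsa hPB_l
  have hPCsa : IsSelfAdjoint (Φ C) := hsa hPC_l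
  have hspecIcc : ∀ {T : H →L[ℂ] H}, IsSelfAdjoint T → m • (1 : H →L[ℂ] H) ≤ T →
      T ≤ M • (1 : H →L[ℂ] H) → spectrum ℝ T ⊆ Set.Icc m M := by
    intro T hTsa h1 h2 x hx
    rw [Algebra.smul_def m, mul_one] at h1
    rw [Algebra.smul_def M, mul_one] at h2
    exact ⟨(algebraMap_le_iff_le_spectrum (a := T) hTsa).1 h1 x hx,
      (le_algebraMap_iff_spectrum_le (a := T) hTsa).1 h2 x hx⟩
  have hPBspec : spectrum ℝ (Φ B) ⊆ Set.Icc m M := hspecIcc hPBsa hPB_l hPB_u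
  have hPCspec : spectrum ℝ (Φ C) ⊆ Set.Icc m M := hspecIcc hPCsa hPC_l hPC_u
  -- spectrum bounds for A and D
  have hAspec' : ∀ x ∈ spectrum ℝ A, x ≤ m := by
    rw [Algebra.smul_def m, mul_one] at hA
    exact (le_algebraMap_iff_spectrum_le (a := A) hAsa).1 hA
  have hDspec' : ∀ x ∈ spectrum ℝ D, M ≤ x := by
    rw [Algebra.smul_def M, mul_one] at hD
    exact (algebraMap_le_iff_le_spectrum (a := D) hDsa).1 hD
  -- the tent-refined chord bound for Φ B and Φ C
  have key : ∀ (T : H →L[ℂ] H), IsSelfAdjoint T → spectrum ℝ T ⊆ Set.Icc m M →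
      cfc f T ≤ a1 • T + a0 • (1 : H →L[ℂ] H)
        - ((δ/2) • 1 - (δ/(M - m)) • opAbs (T - c • 1)) := by
    intro T hTsa hTspec
    have h1 : cfc f T ≤ cfc (fun x : ℝ => a1 * x + a0 - (δ/2 - (δ/(M - m)) * |x - c|)) T := by
      apply cfc_mono
      · intro x hx
        have := scalar_key1 hmM hJmM hconv (hTspec hx)
        rw [ha1, ha0, hδdef, hc]
        convert this using 2
      · exact hf.mono (hTspec.trans hJmM)
      · exact (((continuous_const.mul continuous_id).add continuous_const).sub
          (continuous_const.sub (continuous_const.mul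
            ((continuous_id.sub continuous_const).abs)))).continuousOn
    calc cfc f T ≤ _ := h1
      _ = _ := cfc_line_tent T hTsa a1 a0 (δ/2) (δ/(M - m)) c
  have hB1 := key (Φ B) hPBsa hPBspec
  have hC1 := key (Φ C) hPCsa hPCspec
  -- the chord lies below f at A and D
  have keyAD : ∀ (T : H →L[ℂ] H), IsSelfAdjoint T → spectrum ℝ T ⊆ J →
      (∀ x ∈ spectrum ℝ T, x ≤ m ∨ M ≤ x) →
      a1 • T + a0 • (1 : H →L[ℂ] H) ≤ cfc f T := by
    intro T hTsa hTspec hside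
    have h1 : cfc (fun x : ℝ => a1 * x + a0) T ≤ cfc f T := by
      apply cfc_mono
      · intro x hx
        have := scalar_key2 hmM hJmM hconv (hTspec hx) (hside x hx)
        rw [ha1, ha0]
        convert this using 2
      · exact ((continuous_const.mul continuous_id).add continuous_const).continuousOn
      · exact hf.mono hTspec
    rwa [cfc_line a1 a0 T hTsa] at h1
  have hA1 : a1 • A + a0 • (1 : H →L[ℂ] H) ≤ cfc f A :=
    keyAD A hAsa hAspec fun x hx => Or.inl (hAspec' x hx)
  have hD1 : a1 • D + a0 • (1 : H →L[ℂ] H) ≤ cfc f D :=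
    keyAD D hDsa hDspec fun x hx => Or.inr (hDspec' x hx)
  -- apply Φ to A, D bounds
  have hA2 : a1 • Φ A + a0 • (1 : H →L[ℂ] H) ≤ Φ (cfc f A) := by
    have := hΦmono hA1
    rwa [map_add, Φ.map_smul_of_tower, hΦsmul1] at this
  have hD2 : a1 • Φ D + a0 • (1 : H →L[ℂ] H) ≤ Φ (cfc f D) := by
    have := hΦmono hD1
    rwa [map_add, Φ.map_smul_of_tower, hΦsmul1] at this
  -- abbreviations
  set SB : H →L[ℂ] H := opAbs (Φ B - c • 1) with hSB
  set SC : H →L[ℂ] H := opAbs (Φ C - c • 1) with hSC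
  set Xt : H →L[ℂ] H := 1 - (M - m)⁻¹ • (SB + SC) with hXt
  -- positivity of Xt
  have hSbound : ∀ (T : H →L[ℂ] H), IsSelfAdjoint T → spectrum ℝ T ⊆ Set.Icc m M →
      opAbs (T - c • 1) ≤ ((M - m)/2) • 1 := by
    intro T hTsa hTspec
    rw [opAbs_sub_smul_one T hTsa c, Algebra.smul_def, mul_one]
    refine (cfc_le_algebraMap_iff (fun x : ℝ => |x - c|) ((M - m)/2) T
      ((continuous_id.sub continuous_const).abs.continuousOn) hTsa).mpr ?_
    intro x hx
    obtain ⟨h1, h2⟩ := hTspec hx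
    rw [abs_le]
    rw [hc]
    constructor <;> linarith
  have hSB_le := hSbound (Φ B) hPBsa hPBspec
  have hSC_le := hSbound (Φ C) hPCsa hPCspec
  have hSsum : SB + SC ≤ (M - m) • 1 := by
    have := add_le_add hSB_le hSC_le
    rw [← add_smul] at this
    have h2 : (M - m)/2 + (M - m)/2 = M - m := by ring
    rwa [h2] at this
  have hXtpos : (0 : H →L[ℂ] H) ≤ Xt := by
    have h0 : (0 : H →L[ℂ] H) ≤ (M - m) • 1 - (SB + SC) := sub_nonneg.mpr hSsum
    have h1 := clm_smul_nonneg (inv_nonneg.mpr hMm.le) h0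
    have h2 : (M - m)⁻¹ • ((M - m) • (1 : H →L[ℂ] H) - (SB + SC)) = Xt := by
      rw [hXt, smul_sub, smul_smul, inv_mul_cancel₀ hne, one_smul]
    rwa [h2] at h1
  -- second inequality
  have hineq2 : Φ (cfc f A) + Φ (cfc f D) - δ • Xt ≤ Φ (cfc f A) + Φ (cfc f D) :=
    sub_le_self _ (clm_smul_nonneg hδ hXtpos)
  -- first inequality
  have hsum1 : cfc f (Φ B) + cfc f (Φ C) ≤
      a1 • Φ B + a1 • Φ C + (2 * a0) • (1 : H →L[ℂ] H) - δ • Xt := by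
    have h := add_le_add hB1 hC1
    have heq : (a1 • Φ B + a0 • (1 : H →L[ℂ] H)
          - ((δ/2) • 1 - (δ/(M - m)) • SB))
        + (a1 • Φ C + a0 • (1 : H →L[ℂ] H) - ((δ/2) • 1 - (δ/(M - m)) • SC))
        = a1 • Φ B + a1 • Φ C + (2 * a0) • (1 : H →L[ℂ] H) - δ • Xt := by
      have hhalf : δ • (1 : H →L[ℂ] H) = (δ/2) • 1 + (δ/2) • 1 := by
        rw [← add_smul]; congr 1; ring
      have h2a0 : (2 * a0) • (1 : H →L[ℂ] H) = a0 • 1 + a0 • 1 := by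
        rw [← add_smul]; congr 1; ring
      rw [hXt, smul_sub δ, smul_smul, ← div_eq_mul_inv,
        smul_add (δ/(M - m)) SB SC, hhalf, h2a0]
      abel
    rwa [heq] at h
  have hswap : a1 • Φ B + a1 • Φ C + (2 * a0) • (1 : H →L[ℂ] H)
      = (a1 • Φ A + a0 • (1 : H →L[ℂ] H)) + (a1 • Φ D + a0 • (1 : H →L[ℂ] H)) := by
    have h1 : Φ B + Φ C = Φ A + Φ D := by
      rw [← map_add, ← map_add, hADBC]
    have h2a0 : (2 * a0) • (1 : H →L[ℂ] H) = a0 • 1 + a0 • 1 := by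
      rw [← add_smul]; congr 1; ring
    rw [← smul_add a1 (Φ B) (Φ C), h1, smul_add a1 (Φ A) (Φ D), h2a0]
    abel
  have hineq1 : cfc f (Φ B) + cfc f (Φ C) ≤ Φ (cfc f A) + Φ (cfc f D) - δ • Xt := by
    refine hsum1.trans ?_
    have := add_le_add hA2 hD2
    calc a1 • Φ B + a1 • Φ C + (2 * a0) • (1 : H →L[ℂ] H) - δ • Xt
        = (a1 • Φ A + a0 • (1 : H →L[ℂ] H)) + (a1 • Φ D + a0 • (1 : H →L[ℂ] H)) - δ • Xt := by
          rw [hswap]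
      _ ≤ Φ (cfc f A) + Φ (cfc f D) - δ • Xt := sub_le_sub_right this _
  exact ⟨hineq1, hineq2⟩
end

section
/- Let m < M be real numbers, let J be an interval containing [m, M], and let f : J → ℝ be a continuous convex function. Let A, B, C, D ∈ σ(J) satisfy A + D = B + C, A ≤ m·I, m·I ≤ B ≤ M·I, m·I ≤ C ≤ M·I and M·I ≤ D. Then f(B) + f(C) ≤ f(A) + f(D) − δ_f · X̃ ≤ f(A) + f(D), where X̃ = I − (1/(M−m))·( |B − ((m+M)/2)·I| + |C − ((m+M)/2)·I| ). -/
set_option maxHeartbeats 2000000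
set_option synthInstance.maxHeartbeats 400000

private lemma scalar_mid {J : Set ℝ} {f : ℝ → ℝ} {m M : ℝ} (hmM : m < M)
    (hJmM : Set.Icc m M ⊆ J) (hconv : ConvexOn ℝ J f) {t : ℝ} (ht : t ∈ Set.Icc m M) :
    f t ≤ f m + (f M - f m) / (M - m) * (t - m) -
      (f m + f M - 2 * f ((m + M) / 2)) * (2⁻¹ - (M - m)⁻¹ * |t - (m + M) / 2|) := by
  have hMm : (0:ℝ) < M - m := by linarith
  have hmJ : m ∈ J := hJmM ⟨le_refl m, hmM.le⟩
  have hMJ : M ∈ J := hJmM ⟨hmM.le, le_refl M⟩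
  have hcJ : (m + M) / 2 ∈ J := hJmM ⟨by linarith, by linarith⟩
  obtain ⟨ht1, ht2⟩ := ht
  rcases le_total t ((m + M) / 2) with h1 | h1
  · have habs : |t - (m + M) / 2| = (m + M) / 2 - t := by
      rw [abs_of_nonpos (by linarith)]; ring
    have ha : (0:ℝ) ≤ (m + M - 2 * t) / (M - m) := div_nonneg (by linarith) hMm.le
    have hb : (0:ℝ) ≤ (2 * t - 2 * m) / (M - m) := div_nonneg (by linarith) hMm.le
    have hab : (m + M - 2 * t) / (M - m) + (2 * t - 2 * m) / (M - m) = 1 := by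
      field_simp; ring
    have key := hconv.2 hmJ hcJ ha hb hab
    simp only [smul_eq_mul] at key
    have hpt : (m + M - 2 * t) / (M - m) * m + (2 * t - 2 * m) / (M - m) * ((m + M) / 2) = t := by
      field_simp; ring
    rw [hpt] at key
    rw [habs]
    calc f t ≤ (m + M - 2 * t) / (M - m) * f m
        + (2 * t - 2 * m) / (M - m) * f ((m + M) / 2) := key
      _ = f m + (f M - f m) / (M - m) * (t - m) -
          (f m + f M - 2 * f ((m + M) / 2)) * (2⁻¹ - (M - m)⁻¹ * ((m + M) / 2 - t)) := by
          field_simp; ring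
  · have habs : |t - (m + M) / 2| = t - (m + M) / 2 := abs_of_nonneg (by linarith)
    have ha : (0:ℝ) ≤ (2 * M - 2 * t) / (M - m) := div_nonneg (by linarith) hMm.le
    have hb : (0:ℝ) ≤ (2 * t - m - M) / (M - m) := div_nonneg (by linarith) hMm.le
    have hab : (2 * M - 2 * t) / (M - m) + (2 * t - m - M) / (M - m) = 1 := by
      field_simp; ring
    have key := hconv.2 hcJ hMJ ha hb hab
    simp only [smul_eq_mul] at key
    have hpt : (2 * M - 2 * t) / (M - m) * ((m + M) / 2) + (2 * t - m - M) / (M - m) * M = t := by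
      field_simp; ring
    rw [hpt] at key
    rw [habs]
    calc f t ≤ (2 * M - 2 * t) / (M - m) * f ((m + M) / 2)
        + (2 * t - m - M) / (M - m) * f M := key
      _ = f m + (f M - f m) / (M - m) * (t - m) -
          (f m + f M - 2 * f ((m + M) / 2)) * (2⁻¹ - (M - m)⁻¹ * (t - (m + M) / 2)) := by
          field_simp; ring

private lemma scalar_left {J : Set ℝ} {f : ℝ → ℝ} {m M : ℝ} (hmM : m < M)
    (hMJ : M ∈ J) (hconv : ConvexOn ℝ J f) {t : ℝ} (htJ : t ∈ J) (htm : t ≤ m) :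
    f m + (f M - f m) / (M - m) * (t - m) ≤ f t := by
  have hMm : (0:ℝ) < M - m := by linarith
  rcases eq_or_lt_of_le htm with rfl | h
  · simp
  · have hMt : (0:ℝ) < M - t := by linarith
    have ha : (0:ℝ) ≤ (M - m) / (M - t) := div_nonneg hMm.le hMt.le
    have hb : (0:ℝ) ≤ (m - t) / (M - t) := div_nonneg (by linarith) hMt.le
    have hab : (M - m) / (M - t) + (m - t) / (M - t) = 1 := by field_simp; ring
    have key := hconv.2 htJ hMJ ha hb hab
    simp only [smul_eq_mul] at key
    have hpt : (M - m) / (M - t) * t + (m - t) / (M - t) * M = m := by field_simp; ring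
    rw [hpt] at key
    rw [div_mul_eq_mul_div, div_mul_eq_mul_div, ← add_div, le_div_iff₀ hMt] at key
    rw [div_mul_eq_mul_div, ← le_sub_iff_add_le', div_le_iff₀ hMm]
    nlinarith [key]

private lemma scalar_right {J : Set ℝ} {f : ℝ → ℝ} {m M : ℝ} (hmM : m < M)
    (hmJ : m ∈ J) (hconv : ConvexOn ℝ J f) {t : ℝ} (htJ : t ∈ J) (htM : M ≤ t) :
    f m + (f M - f m) / (M - m) * (t - m) ≤ f t := by
  have hMm : (0:ℝ) < M - m := by linarith
  rcases eq_or_lt_of_le htM with rfl | h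
  · rw [div_mul_cancel₀ _ hMm.ne']; linarith
  · have htm : (0:ℝ) < t - m := by linarith
    have ha : (0:ℝ) ≤ (t - M) / (t - m) := div_nonneg (by linarith) htm.le
    have hb : (0:ℝ) ≤ (M - m) / (t - m) := div_nonneg hMm.le htm.le
    have hab : (t - M) / (t - m) + (M - m) / (t - m) = 1 := by field_simp; ring
    have key := hconv.2 hmJ htJ ha hb hab
    simp only [smul_eq_mul] at key
    have hpt : (t - M) / (t - m) * m + (M - m) / (t - m) * t = M := by field_simp; ring
    rw [hpt] at key
    rw [div_mul_eq_mul_div, div_mul_eq_mul_div, ← add_div, le_div_iff₀ htm] at key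
    rw [div_mul_eq_mul_div, ← le_sub_iff_add_le', div_le_iff₀ hMm]
    nlinarith [key]

private lemma smul_nonneg_op {H : Type*} [NormedAddCommGroup H] [InnerProductSpace ℂ H]
    [CompleteSpace H] {s : ℝ} (hs : 0 ≤ s) {z : H →L[ℂ] H} (hz : 0 ≤ z) : 0 ≤ s • z := by
  have hzsa : IsSelfAdjoint z := .of_nonneg hz
  rw [← cfc_const_mul_id s z hzsa]
  exact cfc_nonneg fun x hx => mul_nonneg hs (spectrum_nonneg_of_nonneg hz hx)

/-- inequality (2.6) of the paper. -/
theorem jensen_type_four_operators {H : Type*} [NormedAddCommGroup H] [InnerProductSpace ℂ H]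
    [CompleteSpace H] (m M : ℝ) (hmM : m < M) (J : Set ℝ) (hJ : J.OrdConnected)
    (hJmM : Set.Icc m M ⊆ J) (f : ℝ → ℝ) (hf : ContinuousOn f J) (hconv : ConvexOn ℝ J f)
    (A B C D : H →L[ℂ] H)
    (hAsa : IsSelfAdjoint A) (hAspec : spectrum ℝ A ⊆ J)
    (hBsa : IsSelfAdjoint B) (hBspec : spectrum ℝ B ⊆ J)
    (hCsa : IsSelfAdjoint C) (hCspec : spectrum ℝ C ⊆ J)
    (hDsa : IsSelfAdjoint D) (hDspec : spectrum ℝ D ⊆ J)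
    (hADBC : A + D = B + C)
    (hA : A ≤ m • 1) (hBl : m • 1 ≤ B) (hBu : B ≤ M • 1)
    (hCl : m • 1 ≤ C) (hCu : C ≤ M • 1) (hD : M • 1 ≤ D) :
    cfc f B + cfc f C ≤
        cfc f A + cfc f D -
          (f m + f M - 2 * f ((m + M) / 2)) •
            ((1 : H →L[ℂ] H) -
              (M - m)⁻¹ •
                (opAbs (B - ((m + M) / 2) • 1) + opAbs (C - ((m + M) / 2) • 1))) ∧
      cfc f A + cfc f D -
          (f m + f M - 2 * f ((m + M) / 2)) •
            ((1 : H →L[ℂ] H) -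
              (M - m)⁻¹ •
                (opAbs (B - ((m + M) / 2) • 1) + opAbs (C - ((m + M) / 2) • 1))) ≤
        cfc f A + cfc f D := by
  have hMm : (0:ℝ) < M - m := sub_pos.mpr hmM
  have hmJ : m ∈ J := hJmM ⟨le_refl m, hmM.le⟩
  have hMJ : M ∈ J := hJmM ⟨hmM.le, le_refl M⟩
  have hδ0 : 0 ≤ f m + f M - 2 * f ((m + M) / 2) := by
    have key := hconv.2 hmJ hMJ (by norm_num : (0:ℝ) ≤ 1/2) (by norm_num : (0:ℝ) ≤ 1/2)
      (by norm_num : (1/2 : ℝ) + 1/2 = 1)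
    simp only [smul_eq_mul] at key
    have hpt : (1/2 : ℝ) * m + (1/2 : ℝ) * M = (m + M) / 2 := by ring
    rw [hpt] at key
    linarith
  have specIcc : ∀ X : H →L[ℂ] H, IsSelfAdjoint X → m • 1 ≤ X → X ≤ M • (1 : H →L[ℂ] H) →
      spectrum ℝ X ⊆ Set.Icc m M := fun X hX h1 h2 x hx =>
    ⟨(algebraMap_le_iff_le_spectrum (r := m) (a := X) hX).mp
        (by rwa [Algebra.algebraMap_eq_smul_one]) x hx,
     (le_algebraMap_iff_spectrum_le (r := M) (a := X) hX).mp
        (by rwa [Algebra.algebraMap_eq_smul_one]) x hx⟩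
  have specB := specIcc B hBsa hBl hBu
  have specC := specIcc C hCsa hCl hCu
  have specA : ∀ x ∈ spectrum ℝ A, x ≤ m :=
    (le_algebraMap_iff_spectrum_le (r := m) (a := A) hAsa).mp
      (by rwa [Algebra.algebraMap_eq_smul_one])
  have specD : ∀ x ∈ spectrum ℝ D, M ≤ x :=
    (algebraMap_le_iff_le_spectrum (r := M) (a := D) hDsa).mp
      (by rwa [Algebra.algebraMap_eq_smul_one])
  have contabs : Continuous (fun t : ℝ => |t - (m + M) / 2|) :=
    (continuous_id.sub continuous_const).abs
  have contl : Continuous (fun t : ℝ => f m + (f M - f m) / (M - m) * (t - m)) := by fun_prop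
  have contd : Continuous (fun t : ℝ =>
      (f m + f M - 2 * f ((m + M) / 2)) * (2⁻¹ - (M - m)⁻¹ * |t - (m + M) / 2|)) :=
    continuous_const.mul (continuous_const.sub (continuous_const.mul contabs))
  have contg : Continuous (fun t : ℝ => f m + (f M - f m) / (M - m) * (t - m) -
      (f m + f M - 2 * f ((m + M) / 2)) * (2⁻¹ - (M - m)⁻¹ * |t - (m + M) / 2|)) :=
    contl.sub contd
  have habs_eq : ∀ X : H →L[ℂ] H, IsSelfAdjoint X →
      opAbs (X - ((m + M) / 2) • 1) = cfc (fun t : ℝ => |t - (m + M) / 2|) X := by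
    intro X hX
    have h1 : X - ((m + M) / 2) • 1 = cfc (fun t : ℝ => t - (m + M) / 2) X := by
      rw [cfc_sub (fun t : ℝ => t) (fun _ : ℝ => (m + M) / 2) X continuousOn_id
          continuousOn_const, cfc_id' ℝ X hX, cfc_const ((m + M) / 2) X hX,
        Algebra.algebraMap_eq_smul_one]
    rw [show opAbs (X - ((m + M) / 2) • 1) = cfc (fun t : ℝ => |t|) (X - ((m + M) / 2) • 1)
        from rfl, h1]
    exact (cfc_comp' (fun s : ℝ => |s|) (fun t : ℝ => t - (m + M) / 2) X
      continuous_abs.continuousOn ((continuous_id.sub continuous_const).continuousOn) hX).symm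
  have hsubm : ∀ X : H →L[ℂ] H, IsSelfAdjoint X →
      cfc (fun t : ℝ => t - m) X = X - m • 1 := by
    intro X hX
    rw [cfc_sub (fun t : ℝ => t) (fun _ : ℝ => m) X continuousOn_id continuousOn_const,
      cfc_id' ℝ X hX, cfc_const m X hX, Algebra.algebraMap_eq_smul_one]
  have affine : ∀ X : H →L[ℂ] H, IsSelfAdjoint X →
      cfc (fun t : ℝ => f m + (f M - f m) / (M - m) * (t - m)) X
        = f m • 1 + ((f M - f m) / (M - m)) • (X - m • 1) := by
    intro X hX
    rw [cfc_add X (fun _ : ℝ => f m) (fun t : ℝ => (f M - f m) / (M - m) * (t - m))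
        continuousOn_const (by fun_prop),
      cfc_const (f m) X hX, Algebra.algebraMap_eq_smul_one,
      cfc_const_mul ((f M - f m) / (M - m)) (fun t : ℝ => t - m) X (by fun_prop),
      hsubm X hX]
  have gdecomp : ∀ X : H →L[ℂ] H, IsSelfAdjoint X →
      cfc (fun t : ℝ => f m + (f M - f m) / (M - m) * (t - m) -
        (f m + f M - 2 * f ((m + M) / 2)) * (2⁻¹ - (M - m)⁻¹ * |t - (m + M) / 2|)) X
      = cfc (fun t : ℝ => f m + (f M - f m) / (M - m) * (t - m)) X
        - (f m + f M - 2 * f ((m + M) / 2)) •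
            ((2⁻¹ : ℝ) • 1 - (M - m)⁻¹ • opAbs (X - ((m + M) / 2) • 1)) := by
    intro X hX
    rw [habs_eq X hX]
    rw [cfc_sub (fun t : ℝ => f m + (f M - f m) / (M - m) * (t - m))
        (fun t : ℝ => (f m + f M - 2 * f ((m + M) / 2)) *
          (2⁻¹ - (M - m)⁻¹ * |t - (m + M) / 2|)) X contl.continuousOn contd.continuousOn]
    rw [cfc_const_mul (f m + f M - 2 * f ((m + M) / 2))
        (fun t : ℝ => 2⁻¹ - (M - m)⁻¹ * |t - (m + M) / 2|) X
        ((continuous_const.sub (continuous_const.mul contabs)).continuousOn)]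
    rw [cfc_sub (fun _ : ℝ => (2⁻¹ : ℝ)) (fun t : ℝ => (M - m)⁻¹ * |t - (m + M) / 2|) X
        continuousOn_const ((continuous_const.mul contabs).continuousOn)]
    rw [cfc_const (2⁻¹ : ℝ) X hX, Algebra.algebraMap_eq_smul_one,
      cfc_const_mul ((M - m)⁻¹) (fun t : ℝ => |t - (m + M) / 2|) X contabs.continuousOn]
  have hB2 : cfc f B ≤ cfc (fun t : ℝ => f m + (f M - f m) / (M - m) * (t - m)) B
      - (f m + f M - 2 * f ((m + M) / 2)) •
          ((2⁻¹ : ℝ) • 1 - (M - m)⁻¹ • opAbs (B - ((m + M) / 2) • 1)) := by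
    rw [← gdecomp B hBsa]
    exact cfc_mono (fun x hx => scalar_mid hmM hJmM hconv (specB hx))
      (hf.mono hBspec) contg.continuousOn
  have hC2 : cfc f C ≤ cfc (fun t : ℝ => f m + (f M - f m) / (M - m) * (t - m)) C
      - (f m + f M - 2 * f ((m + M) / 2)) •
          ((2⁻¹ : ℝ) • 1 - (M - m)⁻¹ • opAbs (C - ((m + M) / 2) • 1)) := by
    rw [← gdecomp C hCsa]
    exact cfc_mono (fun x hx => scalar_mid hmM hJmM hconv (specC hx))
      (hf.mono hCspec) contg.continuousOn
  have hA2 : cfc (fun t : ℝ => f m + (f M - f m) / (M - m) * (t - m)) A ≤ cfc f A :=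
    cfc_mono (fun x hx => scalar_left hmM hMJ hconv (hAspec hx) (specA x hx))
      contl.continuousOn (hf.mono hAspec)
  have hD2 : cfc (fun t : ℝ => f m + (f M - f m) / (M - m) * (t - m)) D ≤ cfc f D :=
    cfc_mono (fun x hx => scalar_right hmM hmJ hconv (hDspec hx) (specD x hx))
      contl.continuousOn (hf.mono hDspec)
  have hlsum : cfc (fun t : ℝ => f m + (f M - f m) / (M - m) * (t - m)) B
        + cfc (fun t : ℝ => f m + (f M - f m) / (M - m) * (t - m)) C
      = cfc (fun t : ℝ => f m + (f M - f m) / (M - m) * (t - m)) A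
        + cfc (fun t : ℝ => f m + (f M - f m) / (M - m) * (t - m)) D := by
    rw [affine B hBsa, affine C hCsa, affine A hAsa, affine D hDsa]
    have key : ∀ X Y : H →L[ℂ] H,
        f m • (1 : H →L[ℂ] H) + ((f M - f m) / (M - m)) • (X - m • 1)
          + (f m • 1 + ((f M - f m) / (M - m)) • (Y - m • 1))
        = f m • 1 + f m • 1 - ((f M - f m) / (M - m)) • (m • (1 : H →L[ℂ] H))
            - ((f M - f m) / (M - m)) • (m • (1 : H →L[ℂ] H))
            + ((f M - f m) / (M - m)) • (X + Y) := by
      intro X Y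
      rw [smul_sub, smul_sub, smul_add]
      abel
    rw [key B C, key A D, ← hADBC]
  have hEsum : (f m + f M - 2 * f ((m + M) / 2)) •
        ((2⁻¹ : ℝ) • (1 : H →L[ℂ] H) - (M - m)⁻¹ • opAbs (B - ((m + M) / 2) • 1))
      + (f m + f M - 2 * f ((m + M) / 2)) •
        ((2⁻¹ : ℝ) • 1 - (M - m)⁻¹ • opAbs (C - ((m + M) / 2) • 1))
      = (f m + f M - 2 * f ((m + M) / 2)) •
          ((1 : H →L[ℂ] H) - (M - m)⁻¹ •
            (opAbs (B - ((m + M) / 2) • 1) + opAbs (C - ((m + M) / 2) • 1))) := by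
    rw [← smul_add]
    congr 1
    rw [smul_add]
    have h12 : (2⁻¹ : ℝ) • (1 : H →L[ℂ] H) + (2⁻¹ : ℝ) • (1 : H →L[ℂ] H) = 1 := by
      rw [← add_smul]; norm_num
    have hsplit : ∀ P Q : H →L[ℂ] H,
        ((2⁻¹ : ℝ) • (1 : H →L[ℂ] H) - P) + ((2⁻¹ : ℝ) • 1 - Q)
          = ((2⁻¹ : ℝ) • (1 : H →L[ℂ] H) + (2⁻¹ : ℝ) • 1) - (P + Q) := fun P Q => by abel
    rw [hsplit, h12]
  constructor
  · calc cfc f B + cfc f C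
        ≤ (cfc (fun t : ℝ => f m + (f M - f m) / (M - m) * (t - m)) B
            - (f m + f M - 2 * f ((m + M) / 2)) •
                ((2⁻¹ : ℝ) • 1 - (M - m)⁻¹ • opAbs (B - ((m + M) / 2) • 1)))
          + (cfc (fun t : ℝ => f m + (f M - f m) / (M - m) * (t - m)) C
            - (f m + f M - 2 * f ((m + M) / 2)) •
                ((2⁻¹ : ℝ) • 1 - (M - m)⁻¹ • opAbs (C - ((m + M) / 2) • 1))) :=
          add_le_add hB2 hC2
      _ = (cfc (fun t : ℝ => f m + (f M - f m) / (M - m) * (t - m)) B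
            + cfc (fun t : ℝ => f m + (f M - f m) / (M - m) * (t - m)) C)
          - ((f m + f M - 2 * f ((m + M) / 2)) •
                ((2⁻¹ : ℝ) • 1 - (M - m)⁻¹ • opAbs (B - ((m + M) / 2) • 1))
            + (f m + f M - 2 * f ((m + M) / 2)) •
                ((2⁻¹ : ℝ) • 1 - (M - m)⁻¹ • opAbs (C - ((m + M) / 2) • 1))) := by abel
      _ = (cfc (fun t : ℝ => f m + (f M - f m) / (M - m) * (t - m)) A
            + cfc (fun t : ℝ => f m + (f M - f m) / (M - m) * (t - m)) D)
          - (f m + f M - 2 * f ((m + M) / 2)) •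
              ((1 : H →L[ℂ] H) - (M - m)⁻¹ •
                (opAbs (B - ((m + M) / 2) • 1) + opAbs (C - ((m + M) / 2) • 1))) := by
          rw [hlsum, hEsum]
      _ ≤ (cfc f A + cfc f D)
          - (f m + f M - 2 * f ((m + M) / 2)) •
              ((1 : H →L[ℂ] H) - (M - m)⁻¹ •
                (opAbs (B - ((m + M) / 2) • 1) + opAbs (C - ((m + M) / 2) • 1))) :=
          sub_le_sub_right (add_le_add hA2 hD2) _
  · have hP : opAbs (B - ((m + M) / 2) • 1) ≤ ((M - m) / 2) • 1 := by
      rw [habs_eq B hBsa]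
      calc cfc (fun t : ℝ => |t - (m + M) / 2|) B ≤ cfc (fun _ : ℝ => (M - m) / 2) B :=
          cfc_mono (fun x hx => abs_le.mpr ⟨by linarith [(specB hx).1], by
            linarith [(specB hx).2]⟩) contabs.continuousOn continuousOn_const
        _ = ((M - m) / 2) • 1 := by
          rw [cfc_const _ _ hBsa, Algebra.algebraMap_eq_smul_one]
    have hQ : opAbs (C - ((m + M) / 2) • 1) ≤ ((M - m) / 2) • 1 := by
      rw [habs_eq C hCsa]
      calc cfc (fun t : ℝ => |t - (m + M) / 2|) C ≤ cfc (fun _ : ℝ => (M - m) / 2) C :=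
          cfc_mono (fun x hx => abs_le.mpr ⟨by linarith [(specC hx).1], by
            linarith [(specC hx).2]⟩) contabs.continuousOn continuousOn_const
        _ = ((M - m) / 2) • 1 := by
          rw [cfc_const _ _ hCsa, Algebra.algebraMap_eq_smul_one]
    have hPQ : opAbs (B - ((m + M) / 2) • 1) + opAbs (C - ((m + M) / 2) • 1)
        ≤ (M - m) • 1 := by
      have h := add_le_add hP hQ
      rwa [← add_smul, add_halves] at h
    have hXt : (0 : H →L[ℂ] H) ≤ 1 - (M - m)⁻¹ •
        (opAbs (B - ((m + M) / 2) • 1) + opAbs (C - ((m + M) / 2) • 1)) := by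
      have hrw : (1 : H →L[ℂ] H) - (M - m)⁻¹ •
          (opAbs (B - ((m + M) / 2) • 1) + opAbs (C - ((m + M) / 2) • 1))
          = (M - m)⁻¹ • ((M - m) • 1 -
            (opAbs (B - ((m + M) / 2) • 1) + opAbs (C - ((m + M) / 2) • 1))) := by
        rw [smul_sub, smul_smul, inv_mul_cancel₀ hMm.ne', one_smul]
      rw [hrw]
      exact smul_nonneg_op (inv_nonneg.mpr hMm.le) (sub_nonneg.mpr hPQ)
    exact sub_le_self _ (smul_nonneg_op hδ0 hXt)
end

section
/- Let m < M be real numbers, let J be an interval containing [m, M], and let f : J → ℝ be a continuous convex function. Let A_i, B_i, C_i, D_i ∈ σ(J) (i = 1,…,n) satisfy A_i + D_i = B_i + C_i, A_i ≤ m·I, m·I ≤ B_i ≤ M·I, m·I ≤ C_i ≤ M·I and M·I ≤ D_i for each i, and let Φ_1,…,Φ_n be positive linear maps on B(H) with Σ_{i=1}^n Φ_i(I) = I. Then f(Σ_i Φ_i(B_i)) + f(Σ_i Φ_i(C_i)) ≤ Σ_i Φ_i(f(A_i)) + Σ_i Φ_i(f(D_i)) − δ_f · X̃₁ ≤ Σ_i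 Φ_i(f(A_i)) + Σ_i Φ_i(f(D_i)), where X̃₁ = I − (1/(M−m))·[ |Σ_i Φ_i(B_i) − ((m+M)/2)·I| + |Σ_i Φ_i(C_i) − ((m+M)/2)·I| ]. -/
set_option synthInstance.maxHeartbeats 1000000
set_option maxHeartbeats 1000000

lemma aux_outside {J : Set ℝ} {f : ℝ → ℝ} {m M : ℝ} (hconv : ConvexOn ℝ J f)
    (hmM : m < M) (hm : m ∈ J) (hM : M ∈ J) {t : ℝ} (ht : t ∈ J)
    (h : t ≤ m ∨ M ≤ t) :
    (M * f m - m * f M) / (M - m) + (f M - f m) / (M - m) * t ≤ f t := by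
  have hMm : (0:ℝ) < M - m := by linarith
  rw [show (M * f m - m * f M) / (M - m) + (f M - f m) / (M - m) * t
      = (M * f m - m * f M + (f M - f m) * t) / (M - m) by ring,
    div_le_iff₀ hMm]
  rcases h with h | h
  · rcases eq_or_lt_of_le h with rfl | h
    · nlinarith
    · have hs := hconv.slope_mono_adjacent ht hM h hmM
      rw [div_le_div_iff₀ (by linarith) hMm] at hs
      nlinarith
  · rcases eq_or_lt_of_le h with rfl | h
    · nlinarith
    · have hs := hconv.slope_mono_adjacent hm ht hmM h
      rw [div_le_div_iff₀ hMm (by linarith)] at hs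
      nlinarith

lemma aux_inside {J : Set ℝ} {f : ℝ → ℝ} {m M : ℝ} (hconv : ConvexOn ℝ J f)
    (hmM : m < M) (hJmM : Set.Icc m M ⊆ J) {t : ℝ} (ht : t ∈ Set.Icc m M) :
    f t ≤ (M * f m - m * f M) / (M - m) + (f M - f m) / (M - m) * t -
      (f m + f M - 2 * f ((m + M) / 2)) * (1 / 2 - |t - (m + M) / 2| / (M - m)) := by
  have hMm : (0:ℝ) < M - m := by linarith
  have hm : m ∈ J := hJmM ⟨le_refl m, hmM.le⟩
  have hM : M ∈ J := hJmM ⟨hmM.le, le_refl M⟩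
  have hcJ : (m + M) / 2 ∈ J := hJmM ⟨by linarith, by linarith⟩
  obtain ⟨htm, htM⟩ := ht
  rcases le_total t ((m + M) / 2) with hle | hle
  · have habs : |t - (m + M) / 2| = (m + M) / 2 - t := by
      rw [abs_of_nonpos (by linarith)]; ring
    have key : f t ≤ (((m + M) / 2 - t) * f m + (t - m) * f ((m + M) / 2)) / ((M - m) / 2) := by
      have ha : (0:ℝ) ≤ ((m + M) / 2 - t) / ((M - m) / 2) := div_nonneg (by linarith) (by linarith)
      have hb : (0:ℝ) ≤ (t - m) / ((M - m) / 2) := div_nonneg (by linarith) (by linarith)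
      have hab : ((m + M) / 2 - t) / ((M - m) / 2) + (t - m) / ((M - m) / 2) = 1 := by
        field_simp; ring
      have h2 := hconv.2 hm hcJ ha hb hab
      have hcomb : (((m + M) / 2 - t) / ((M - m) / 2)) • m
          + ((t - m) / ((M - m) / 2)) • ((m + M) / 2) = t := by
        simp only [smul_eq_mul]; field_simp; ring
      rw [hcomb] at h2
      simp only [smul_eq_mul] at h2
      calc f t ≤ _ := h2
        _ = _ := by ring
    rw [le_div_iff₀ (by linarith)] at key
    rw [habs, show (M * f m - m * f M) / (M - m) + (f M - f m) / (M - m) * t -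
        (f m + f M - 2 * f ((m + M) / 2)) * (1 / 2 - ((m + M) / 2 - t) / (M - m))
      = (M * f m - m * f M + (f M - f m) * t
          - (f m + f M - 2 * f ((m + M) / 2)) * ((M - m) / 2 - ((m + M) / 2 - t))) / (M - m) by
        field_simp,
      le_div_iff₀ hMm]
    nlinarith [key]
  · have habs : |t - (m + M) / 2| = t - (m + M) / 2 := abs_of_nonneg (by linarith)
    have key : f t ≤ ((M - t) * f ((m + M) / 2) + (t - (m + M) / 2) * f M) / ((M - m) / 2) := by
      have ha : (0:ℝ) ≤ (M - t) / ((M - m) / 2) := div_nonneg (by linarith) (by linarith)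
      have hb : (0:ℝ) ≤ (t - (m + M) / 2) / ((M - m) / 2) := div_nonneg (by linarith) (by linarith)
      have hab : (M - t) / ((M - m) / 2) + (t - (m + M) / 2) / ((M - m) / 2) = 1 := by
        field_simp; ring
      have h2 := hconv.2 hcJ hM ha hb hab
      have hcomb : ((M - t) / ((M - m) / 2)) • ((m + M) / 2)
          + ((t - (m + M) / 2) / ((M - m) / 2)) • M = t := by
        simp only [smul_eq_mul]; field_simp; ring
      rw [hcomb] at h2
      simp only [smul_eq_mul] at h2
      calc f t ≤ _ := h2
        _ = _ := by ring
    rw [le_div_iff₀ (by linarith)] at key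
    rw [habs, show (M * f m - m * f M) / (M - m) + (f M - f m) / (M - m) * t -
        (f m + f M - 2 * f ((m + M) / 2)) * (1 / 2 - (t - (m + M) / 2) / (M - m))
      = (M * f m - m * f M + (f M - f m) * t
          - (f m + f M - 2 * f ((m + M) / 2)) * ((M - m) / 2 - (t - (m + M) / 2))) / (M - m) by
        field_simp,
      le_div_iff₀ hMm]
    nlinarith [key]

section OpAux
variable {H : Type*} [NormedAddCommGroup H] [InnerProductSpace ℂ H] [CompleteSpace H]

lemma op_smul_nonneg (r : ℝ) {T : H →L[ℂ] H} (hr : 0 ≤ r) (h : 0 ≤ T) : 0 ≤ r • T := by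
  rw [← cfc_const_mul_id r T (IsSelfAdjoint.of_nonneg h)]
  exact cfc_nonneg fun x hx => mul_nonneg hr (spectrum_nonneg_of_nonneg h hx)

lemma op_smul_mono (r : ℝ) (hr : 0 ≤ r) {S T : H →L[ℂ] H} (h : S ≤ T) : r • S ≤ r • T := by
  have := op_smul_nonneg r hr (sub_nonneg.mpr h)
  rw [smul_sub] at this
  exact sub_nonneg.mp this

lemma op_sum_sa {n : ℕ} (T : Fin n → H →L[ℂ] H) (h : ∀ i, IsSelfAdjoint (T i)) :
    IsSelfAdjoint (∑ i, T i) := by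
  show star _ = _
  rw [star_sum]
  exact Finset.sum_congr rfl fun i _ => h i

lemma op_abs_eq (T : H →L[ℂ] H) (hT : IsSelfAdjoint T) (c : ℝ) :
    cfc (fun t : ℝ => |t - c|) T = cfc (fun t : ℝ => |t|) (T - c • 1) := by
  have h1 : T - c • 1 = cfc (fun t : ℝ => t - c) T := by
    rw [cfc_sub (fun t : ℝ => t) (fun _ : ℝ => c) T (by fun_prop) (by fun_prop),
      cfc_id' ℝ T, cfc_const c T, Algebra.algebraMap_eq_smul_one]
  rw [h1, ← cfc_comp' (fun t : ℝ => |t|) (fun t : ℝ => t - c) T (by fun_prop) (by fun_prop)]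

lemma op_affine (α β : ℝ) (T : H →L[ℂ] H) (hT : IsSelfAdjoint T) :
    cfc (fun t : ℝ => α + β * t) T = α • 1 + β • T := by
  rw [cfc_const_add α (fun t : ℝ => β * t) T (by fun_prop), cfc_const_mul_id β T,
    Algebra.algebraMap_eq_smul_one]

lemma op_decomp (α β δ c m M : ℝ) (T : H →L[ℂ] H) (hT : IsSelfAdjoint T) :
    cfc (fun t : ℝ => α + β * t - δ * (1 / 2 - |t - c| / (M - m))) T
    = α • 1 + β • T - δ • ((1/2 : ℝ) • (1 : H →L[ℂ] H)
        - (M - m)⁻¹ • cfc (fun t : ℝ => |t - c|) T) := by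
  rw [show (fun t : ℝ => α + β * t - δ * (1 / 2 - |t - c| / (M - m)))
      = (fun t : ℝ => (α + β * t) - δ * (1/2 - (M - m)⁻¹ * |t - c|)) from by
    funext t; ring]
  rw [cfc_sub (fun t : ℝ => α + β * t) (fun t : ℝ => δ * (1/2 - (M - m)⁻¹ * |t - c|)) T
    (by fun_prop) (by fun_prop), op_affine α β T hT,
    cfc_const_mul δ (fun t : ℝ => 1/2 - (M - m)⁻¹ * |t - c|) T (by fun_prop),
    cfc_sub (fun _ : ℝ => (1/2 : ℝ)) (fun t : ℝ => (M - m)⁻¹ * |t - c|) T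
    (by fun_prop) (by fun_prop),
    cfc_const (1/2 : ℝ) T hT, Algebra.algebraMap_eq_smul_one,
    cfc_const_mul ((M - m)⁻¹) (fun t : ℝ => |t - c|) T (by fun_prop)]
end OpAux


/-- **Corollary 2.5 (1) of the paper.** -/
theorem jensen_type_maps_one {H : Type*} [NormedAddCommGroup H] [InnerProductSpace ℂ H]
    [CompleteSpace H] {n : ℕ} (m M : ℝ) (hmM : m < M) (J : Set ℝ) (hJ : J.OrdConnected)
    (hJmM : Set.Icc m M ⊆ J) (f : ℝ → ℝ) (hf : ContinuousOn f J) (hconv : ConvexOn ℝ J f)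
    (A B C D : Fin n → H →L[ℂ] H)
    (hAsa : ∀ i, IsSelfAdjoint (A i)) (hAspec : ∀ i, spectrum ℝ (A i) ⊆ J)
    (hBsa : ∀ i, IsSelfAdjoint (B i)) (hBspec : ∀ i, spectrum ℝ (B i) ⊆ J)
    (hCsa : ∀ i, IsSelfAdjoint (C i)) (hCspec : ∀ i, spectrum ℝ (C i) ⊆ J)
    (hDsa : ∀ i, IsSelfAdjoint (D i)) (hDspec : ∀ i, spectrum ℝ (D i) ⊆ J)
    (hADBC : ∀ i, A i + D i = B i + C i)
    (hA : ∀ i, A i ≤ m • 1) (hBl : ∀ i, m • 1 ≤ B i) (hBu : ∀ i, B i ≤ M • 1)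
    (hCl : ∀ i, m • 1 ≤ C i) (hCu : ∀ i, C i ≤ M • 1) (hD : ∀ i, M • 1 ≤ D i)
    (Φ : Fin n → (H →L[ℂ] H) →ₗ[ℂ] (H →L[ℂ] H))
    (hΦpos : ∀ i, ∀ T : H →L[ℂ] H, 0 ≤ T → 0 ≤ Φ i T)
    (hΦ1 : ∑ i, Φ i 1 = (1 : H →L[ℂ] H)) :
    cfc f (∑ i, Φ i (B i)) + cfc f (∑ i, Φ i (C i)) ≤
        ∑ i, Φ i (cfc f (A i)) + ∑ i, Φ i (cfc f (D i)) -
          (f m + f M - 2 * f ((m + M) / 2)) •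
            ((1 : H →L[ℂ] H) -
              (M - m)⁻¹ •
                (opAbs (∑ i, Φ i (B i) - ((m + M) / 2) • 1) +
                  opAbs (∑ i, Φ i (C i) - ((m + M) / 2) • 1))) ∧
      ∑ i, Φ i (cfc f (A i)) + ∑ i, Φ i (cfc f (D i)) -
          (f m + f M - 2 * f ((m + M) / 2)) •
            ((1 : H →L[ℂ] H) -
              (M - m)⁻¹ •
                (opAbs (∑ i, Φ i (B i) - ((m + M) / 2) • 1) +
                  opAbs (∑ i, Φ i (C i) - ((m + M) / 2) • 1))) ≤
        ∑ i, Φ i (cfc f (A i)) + ∑ i, Φ i (cfc f (D i)) := by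
  have hMm : (0:ℝ) < M - m := by linarith
  have hm : m ∈ J := hJmM ⟨le_refl m, hmM.le⟩
  have hM : M ∈ J := hJmM ⟨hmM.le, le_refl M⟩
  set c : ℝ := (m + M) / 2 with hc
  set α : ℝ := (M * f m - m * f M) / (M - m) with hα
  set β : ℝ := (f M - f m) / (M - m) with hβ
  set δ : ℝ := f m + f M - 2 * f c with hδdef
  have sa0 : ∀ (T : H →L[ℂ] H), 0 ≤ T → IsSelfAdjoint T := fun T h => .of_nonneg h
  have hΦsmul : ∀ i (r : ℝ) (T : H →L[ℂ] H), Φ i (r • T) = r • Φ i T :=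
    fun i r T => (Φ i).map_smul_of_tower r T
  have hΦmono : ∀ i, ∀ {S T : H →L[ℂ] H}, S ≤ T → Φ i S ≤ Φ i T := by
    intro i S T h
    have h2 := hΦpos i (T - S) (sub_nonneg.mpr h)
    rw [map_sub] at h2
    exact sub_nonneg.mp h2
  have hΦ1pos : ∀ i, (0:H →L[ℂ] H) ≤ Φ i 1 := fun i => hΦpos i 1 zero_le_one
  -- selfadjointness of images
  have hsaA : ∀ i, IsSelfAdjoint (Φ i (A i)) := by
    intro i
    have h2 : Φ i (A i) = m • Φ i 1 - Φ i (m • 1 - A i) := by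
      rw [map_sub, hΦsmul]; abel
    rw [h2]
    exact ((IsSelfAdjoint.all m).smul (sa0 _ (hΦ1pos i))).sub
      (sa0 _ (hΦpos i _ (sub_nonneg.mpr (hA i))))
  have hsaB : ∀ i, IsSelfAdjoint (Φ i (B i)) := by
    intro i
    have h2 : Φ i (B i) = Φ i (B i - m • 1) + m • Φ i 1 := by
      rw [map_sub, hΦsmul]; abel
    rw [h2]
    exact (sa0 _ (hΦpos i _ (sub_nonneg.mpr (hBl i)))).add
      ((IsSelfAdjoint.all m).smul (sa0 _ (hΦ1pos i)))
  have hsaC : ∀ i, IsSelfAdjoint (Φ i (C i)) := by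
    intro i
    have h2 : Φ i (C i) = Φ i (C i - m • 1) + m • Φ i 1 := by
      rw [map_sub, hΦsmul]; abel
    rw [h2]
    exact (sa0 _ (hΦpos i _ (sub_nonneg.mpr (hCl i)))).add
      ((IsSelfAdjoint.all m).smul (sa0 _ (hΦ1pos i)))
  have hsaD : ∀ i, IsSelfAdjoint (Φ i (D i)) := by
    intro i
    have h2 : Φ i (D i) = Φ i (D i - M • 1) + M • Φ i 1 := by
      rw [map_sub, hΦsmul]; abel
    rw [h2]
    exact (sa0 _ (hΦpos i _ (sub_nonneg.mpr (hD i)))).add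
      ((IsSelfAdjoint.all M).smul (sa0 _ (hΦ1pos i)))
  have hsaBs : IsSelfAdjoint (∑ i, Φ i (B i)) := op_sum_sa _ hsaB
  have hsaCs : IsSelfAdjoint (∑ i, Φ i (C i)) := op_sum_sa _ hsaC
  -- sums of scalars
  have hsum_r : ∀ r : ℝ, ∑ i, Φ i (r • 1) = r • (1 : H →L[ℂ] H) := by
    intro r
    calc ∑ i, Φ i (r • 1) = ∑ i, r • Φ i 1 := Finset.sum_congr rfl fun i _ => hΦsmul i r 1
      _ = r • ∑ i, Φ i 1 := (Finset.smul_sum).symm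
      _ = r • 1 := by rw [hΦ1]
  have hBsl : m • (1:H →L[ℂ] H) ≤ ∑ i, Φ i (B i) := by
    rw [← hsum_r m]; exact Finset.sum_le_sum fun i _ => hΦmono i (hBl i)
  have hBsu : (∑ i, Φ i (B i)) ≤ M • (1:H →L[ℂ] H) := by
    rw [← hsum_r M]; exact Finset.sum_le_sum fun i _ => hΦmono i (hBu i)
  have hCsl : m • (1:H →L[ℂ] H) ≤ ∑ i, Φ i (C i) := by
    rw [← hsum_r m]; exact Finset.sum_le_sum fun i _ => hΦmono i (hCl i)
  have hCsu : (∑ i, Φ i (C i)) ≤ M • (1:H →L[ℂ] H) := by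
    rw [← hsum_r M]; exact Finset.sum_le_sum fun i _ => hΦmono i (hCu i)
  -- spectra
  have hspecB : spectrum ℝ (∑ i, Φ i (B i)) ⊆ Set.Icc m M := by
    intro x hx
    exact ⟨(algebraMap_le_iff_le_spectrum (a := _) hsaBs).mp
        (by rw [Algebra.algebraMap_eq_smul_one]; exact hBsl) x hx,
      (le_algebraMap_iff_spectrum_le (a := _) hsaBs).mp
        (by rw [Algebra.algebraMap_eq_smul_one]; exact hBsu) x hx⟩
  have hspecC : spectrum ℝ (∑ i, Φ i (C i)) ⊆ Set.Icc m M := by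
    intro x hx
    exact ⟨(algebraMap_le_iff_le_spectrum (a := _) hsaCs).mp
        (by rw [Algebra.algebraMap_eq_smul_one]; exact hCsl) x hx,
      (le_algebraMap_iff_spectrum_le (a := _) hsaCs).mp
        (by rw [Algebra.algebraMap_eq_smul_one]; exact hCsu) x hx⟩
  -- abs identities
  have hOAB : opAbs (∑ i, Φ i (B i) - c • 1)
      = cfc (fun t : ℝ => |t - c|) (∑ i, Φ i (B i)) := (op_abs_eq _ hsaBs c).symm
  have hOAC : opAbs (∑ i, Φ i (C i) - c • 1)
      = cfc (fun t : ℝ => |t - c|) (∑ i, Φ i (C i)) := (op_abs_eq _ hsaCs c).symm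
  -- key inequalities
  have hkeyB : cfc f (∑ i, Φ i (B i)) ≤ α • 1 + β • (∑ i, Φ i (B i))
      - δ • ((1/2:ℝ) • 1 - (M - m)⁻¹ • opAbs (∑ i, Φ i (B i) - c • 1)) := by
    have h1 : cfc f (∑ i, Φ i (B i)) ≤
        cfc (fun t : ℝ => α + β * t - δ * (1/2 - |t - c|/(M - m))) (∑ i, Φ i (B i)) := by
      apply cfc_mono _ (hf.mono (hspecB.trans hJmM)) (by fun_prop)
      intro x hx
      simp only [hα, hβ, hδdef, hc]
      exact aux_inside hconv hmM hJmM (hspecB hx)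
    rw [op_decomp α β δ c m M _ hsaBs] at h1
    rwa [hOAB]
  have hkeyC : cfc f (∑ i, Φ i (C i)) ≤ α • 1 + β • (∑ i, Φ i (C i))
      - δ • ((1/2:ℝ) • 1 - (M - m)⁻¹ • opAbs (∑ i, Φ i (C i) - c • 1)) := by
    have h1 : cfc f (∑ i, Φ i (C i)) ≤
        cfc (fun t : ℝ => α + β * t - δ * (1/2 - |t - c|/(M - m))) (∑ i, Φ i (C i)) := by
      apply cfc_mono _ (hf.mono (hspecC.trans hJmM)) (by fun_prop)
      intro x hx
      simp only [hα, hβ, hδdef, hc]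
      exact aux_inside hconv hmM hJmM (hspecC hx)
    rw [op_decomp α β δ c m M _ hsaCs] at h1
    rwa [hOAC]
  -- abs bounds
  have habsB : opAbs (∑ i, Φ i (B i) - c • 1) ≤ ((M - m)/2) • 1 := by
    rw [hOAB]
    calc cfc (fun t : ℝ => |t - c|) (∑ i, Φ i (B i))
        ≤ cfc (fun _ : ℝ => (M - m)/2) (∑ i, Φ i (B i)) := by
          apply cfc_mono _ (by fun_prop) (by fun_prop)
          intro x hx
          obtain ⟨h1, h2⟩ := hspecB hx
          rw [abs_le, hc]
          constructor <;> [linarith; linarith]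
      _ = ((M - m)/2) • 1 := by
          rw [cfc_const _ _ hsaBs, Algebra.algebraMap_eq_smul_one]
  have habsC : opAbs (∑ i, Φ i (C i) - c • 1) ≤ ((M - m)/2) • 1 := by
    rw [hOAC]
    calc cfc (fun t : ℝ => |t - c|) (∑ i, Φ i (C i))
        ≤ cfc (fun _ : ℝ => (M - m)/2) (∑ i, Φ i (C i)) := by
          apply cfc_mono _ (by fun_prop) (by fun_prop)
          intro x hx
          obtain ⟨h1, h2⟩ := hspecC hx
          rw [abs_le, hc]
          constructor <;> [linarith; linarith]
      _ = ((M - m)/2) • 1 := by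
          rw [cfc_const _ _ hsaCs, Algebra.algebraMap_eq_smul_one]
  -- positivity of the correction operator
  have hX1 : (0:H →L[ℂ] H) ≤ 1 - (M - m)⁻¹ •
      (opAbs (∑ i, Φ i (B i) - c • 1) + opAbs (∑ i, Φ i (C i) - c • 1)) := by
    rw [sub_nonneg]
    calc (M - m)⁻¹ • (opAbs (∑ i, Φ i (B i) - c • 1) + opAbs (∑ i, Φ i (C i) - c • 1))
        ≤ (M - m)⁻¹ • ((M - m) • (1 : H →L[ℂ] H)) := by
          apply op_smul_mono _ (inv_nonneg.mpr hMm.le)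
          calc opAbs (∑ i, Φ i (B i) - c • 1) + opAbs (∑ i, Φ i (C i) - c • 1)
              ≤ ((M - m)/2) • 1 + ((M - m)/2) • 1 := add_le_add habsB habsC
            _ = (M - m) • 1 := by rw [← add_smul]; congr 1; ring
      _ = 1 := by rw [smul_smul, inv_mul_cancel₀ hMm.ne', one_smul]
  have hδ0 : 0 ≤ δ := by
    have h2 := hconv.2 hm hM (by norm_num : (0:ℝ) ≤ 1/2) (by norm_num : (0:ℝ) ≤ 1/2)
      (by norm_num : (1/2:ℝ) + 1/2 = 1)
    rw [show (1/2:ℝ) • m + (1/2:ℝ) • M = c from by rw [hc]; simp only [smul_eq_mul]; ring] at h2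
    simp only [smul_eq_mul] at h2
    rw [hδdef]; linarith
  -- tangent line bounds through Φ
  have houtA : α • (1:H →L[ℂ] H) + β • (∑ i, Φ i (A i)) ≤ ∑ i, Φ i (cfc f (A i)) := by
    have step : ∀ i, α • Φ i 1 + β • Φ i (A i) ≤ Φ i (cfc f (A i)) := by
      intro i
      have h1 : cfc (fun t : ℝ => α + β * t) (A i) ≤ cfc f (A i) := by
        apply cfc_mono _ (by fun_prop) (hf.mono (hAspec i))
        intro x hx
        have hxm : x ≤ m := (le_algebraMap_iff_spectrum_le (a := A i) (hAsa i)).mp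
          (by rw [Algebra.algebraMap_eq_smul_one]; exact hA i) x hx
        simp only [hα, hβ]
        exact aux_outside hconv hmM hm hM (hAspec i hx) (Or.inl hxm)
      have h2 := hΦmono i h1
      rwa [op_affine α β (A i) (hAsa i), map_add, hΦsmul, hΦsmul] at h2
    calc α • (1:H →L[ℂ] H) + β • ∑ i, Φ i (A i)
        = ∑ i, (α • Φ i 1 + β • Φ i (A i)) := by
          rw [Finset.sum_add_distrib, ← Finset.smul_sum, ← Finset.smul_sum, hΦ1]
      _ ≤ _ := Finset.sum_le_sum fun i _ => step i
  have houtD : α • (1:H →L[ℂ] H) + β • (∑ i, Φ i (D i)) ≤ ∑ i, Φ i (cfc f (D i)) := by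
    have step : ∀ i, α • Φ i 1 + β • Φ i (D i) ≤ Φ i (cfc f (D i)) := by
      intro i
      have h1 : cfc (fun t : ℝ => α + β * t) (D i) ≤ cfc f (D i) := by
        apply cfc_mono _ (by fun_prop) (hf.mono (hDspec i))
        intro x hx
        have hxm : M ≤ x := (algebraMap_le_iff_le_spectrum (a := D i) (hDsa i)).mp
          (by rw [Algebra.algebraMap_eq_smul_one]; exact hD i) x hx
        simp only [hα, hβ]
        exact aux_outside hconv hmM hm hM (hDspec i hx) (Or.inr hxm)
      have h2 := hΦmono i h1
      rwa [op_affine α β (D i) (hDsa i), map_add, hΦsmul, hΦsmul] at h2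
    calc α • (1:H →L[ℂ] H) + β • ∑ i, Φ i (D i)
        = ∑ i, (α • Φ i 1 + β • Φ i (D i)) := by
          rw [Finset.sum_add_distrib, ← Finset.smul_sum, ← Finset.smul_sum, hΦ1]
      _ ≤ _ := Finset.sum_le_sum fun i _ => step i
  have hADs : (∑ i, Φ i (A i)) + ∑ i, Φ i (D i) = (∑ i, Φ i (B i)) + ∑ i, Φ i (C i) := by
    rw [← Finset.sum_add_distrib, ← Finset.sum_add_distrib]
    exact Finset.sum_congr rfl fun i _ => by rw [← map_add, ← map_add, hADBC i]
  have hmain : cfc f (∑ i, Φ i (B i)) + cfc f (∑ i, Φ i (C i)) ≤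
      ∑ i, Φ i (cfc f (A i)) + ∑ i, Φ i (cfc f (D i)) - δ •
        ((1:H →L[ℂ] H) - (M - m)⁻¹ •
          (opAbs (∑ i, Φ i (B i) - c • 1) + opAbs (∑ i, Φ i (C i) - c • 1))) := by
    calc cfc f (∑ i, Φ i (B i)) + cfc f (∑ i, Φ i (C i))
        ≤ (α • 1 + β • (∑ i, Φ i (B i))
            - δ • ((1/2:ℝ) • 1 - (M - m)⁻¹ • opAbs (∑ i, Φ i (B i) - c • 1)))
          + (α • 1 + β • (∑ i, Φ i (C i))
            - δ • ((1/2:ℝ) • 1 - (M - m)⁻¹ • opAbs (∑ i, Φ i (C i) - c • 1))) :=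
          add_le_add hkeyB hkeyC
      _ = (α • 1 + β • (∑ i, Φ i (B i))) + (α • 1 + β • (∑ i, Φ i (C i)))
          - δ • ((1:H →L[ℂ] H) - (M - m)⁻¹ •
            (opAbs (∑ i, Φ i (B i) - c • 1) + opAbs (∑ i, Φ i (C i) - c • 1))) := by
          module
      _ ≤ ∑ i, Φ i (cfc f (A i)) + ∑ i, Φ i (cfc f (D i))
          - δ • ((1:H →L[ℂ] H) - (M - m)⁻¹ •
            (opAbs (∑ i, Φ i (B i) - c • 1) + opAbs (∑ i, Φ i (C i) - c • 1))) := by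
          apply sub_le_sub_right
          have e : β • (∑ i, Φ i (B i)) + β • (∑ i, Φ i (C i))
              = β • (∑ i, Φ i (A i)) + β • (∑ i, Φ i (D i)) := by
            rw [← smul_add, ← smul_add, hADs]
          calc (α • 1 + β • (∑ i, Φ i (B i))) + (α • 1 + β • (∑ i, Φ i (C i)))
              = α • 1 + α • (1:H →L[ℂ] H)
                + (β • (∑ i, Φ i (B i)) + β • (∑ i, Φ i (C i))) := by abel
            _ = α • 1 + α • (1:H →L[ℂ] H)
                + (β • (∑ i, Φ i (A i)) + β • (∑ i, Φ i (D i))) := by rw [e]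
            _ = (α • 1 + β • (∑ i, Φ i (A i))) + (α • 1 + β • (∑ i, Φ i (D i))) := by abel
            _ ≤ _ := add_le_add houtA houtD
  exact ⟨hmain, sub_le_self _ (op_smul_nonneg δ hδ0 hX1)⟩
end

section
/- Let m < M be real numbers, let J be an interval containing [m, M], and let f : J → ℝ be a continuous convex function. Let A_i, B_i, C_i, D_i ∈ σ(J) (i = 1,…,n) satisfy A_i + D_i = B_i + C_i, A_i ≤ m·I, m·I ≤ B_i ≤ M·I, m·I ≤ C_i ≤ M·I and M·I ≤ D_i for each i, and let Φ_1,…,Φ_n be positive linear maps on B(H) with Σ_{i=1}^n Φ_i(I) = I. Then Σ_i Φ_i(f(B_i)) + Σ_i Φ_i(f(C_i)) ≤ f(Σ_i Φ_i(A_i)) + f(Σ_i Φ_i(D_i)) − δ_f · X̃₂ ≤ f(Σ_i Φ_i(A_i)) + f(Σ_i Φ_i(D_i)), where X̃₂ = I − (1/(M−m))·[ Σ_i Φ_i(|B_i − ((m+M)/2)·I|) + Σ_i Φ_i(|C_i − ((m+M)/2)·I|) ]. -/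
set_option maxHeartbeats 1000000
set_option synthInstance.maxHeartbeats 400000


section Scalar
variable {J : Set ℝ} {f : ℝ → ℝ} {m M : ℝ}

/-- Chord/residual upper bound for a convex function on `[m, M]`. -/
lemma jtm_scalar_upper (hmM : m < M) (hJmM : Set.Icc m M ⊆ J) (hconv : ConvexOn ℝ J f)
    {x : ℝ} (hx : x ∈ Set.Icc m M) :
    f x ≤ (f M - f m) / (M - m) * x + ((M * f m - m * f M) / (M - m)
        - (f m + f M - 2 * f ((m + M) / 2)) / 2)
      + ((f m + f M - 2 * f ((m + M) / 2)) * (M - m)⁻¹) * |x - (m + M) / 2| := by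
  obtain ⟨hxm, hxM⟩ := hx
  have hMm : (0:ℝ) < M - m := by linarith
  have hne : M - m ≠ 0 := hMm.ne'
  have hmJ : m ∈ J := hJmM ⟨le_rfl, hmM.le⟩
  have hMJ : M ∈ J := hJmM ⟨hmM.le, le_rfl⟩
  have hcJ : (m + M) / 2 ∈ J := hJmM ⟨by linarith, by linarith⟩
  rcases le_or_gt x ((m + M) / 2) with hxc | hxc
  · have hμ0 : (0:ℝ) ≤ (m + M - 2 * x) / (M - m) := by
      apply div_nonneg <;> linarith
    have hμ1 : (0:ℝ) ≤ 1 - (m + M - 2 * x) / (M - m) := by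
      rw [sub_nonneg, div_le_one hMm]; linarith
    have hkey := hconv.2 hmJ hcJ hμ0 hμ1 (by ring)
    simp only [smul_eq_mul] at hkey
    rw [show (m + M - 2 * x) / (M - m) * m
        + (1 - (m + M - 2 * x) / (M - m)) * ((m + M) / 2) = x by
      field_simp; ring] at hkey
    rw [abs_of_nonpos (by linarith)]
    calc f x ≤ (m + M - 2 * x) / (M - m) * f m
          + (1 - (m + M - 2 * x) / (M - m)) * f ((m + M) / 2) := hkey
      _ = (f M - f m) / (M - m) * x + ((M * f m - m * f M) / (M - m)
            - (f m + f M - 2 * f ((m + M) / 2)) / 2)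
          + ((f m + f M - 2 * f ((m + M) / 2)) * (M - m)⁻¹) * -(x - (m + M) / 2) := by
        field_simp; ring
  · have hμ0 : (0:ℝ) ≤ (2 * M - 2 * x) / (M - m) := by
      apply div_nonneg <;> linarith
    have hμ1 : (0:ℝ) ≤ 1 - (2 * M - 2 * x) / (M - m) := by
      rw [sub_nonneg, div_le_one hMm]; linarith
    have hkey := hconv.2 hcJ hMJ hμ0 hμ1 (by ring)
    simp only [smul_eq_mul] at hkey
    rw [show (2 * M - 2 * x) / (M - m) * ((m + M) / 2)
        + (1 - (2 * M - 2 * x) / (M - m)) * M = x by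
      field_simp; ring] at hkey
    rw [abs_of_nonneg (by linarith)]
    calc f x ≤ (2 * M - 2 * x) / (M - m) * f ((m + M) / 2)
          + (1 - (2 * M - 2 * x) / (M - m)) * f M := hkey
      _ = (f M - f m) / (M - m) * x + ((M * f m - m * f M) / (M - m)
            - (f m + f M - 2 * f ((m + M) / 2)) / 2)
          + ((f m + f M - 2 * f ((m + M) / 2)) * (M - m)⁻¹) * (x - (m + M) / 2) := by
        field_simp; ring

/-- Below `m`, a convex function lies above the chord line through `(m, f m)` and `(M, f M)`. -/
lemma jtm_scalar_lower_left (hmM : m < M) (hMJ : M ∈ J) (hconv : ConvexOn ℝ J f)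
    {x : ℝ} (hxJ : x ∈ J) (hxm : x ≤ m) :
    (f M - f m) / (M - m) * x + (M * f m - m * f M) / (M - m) ≤ f x := by
  have hMm : (0:ℝ) < M - m := by linarith
  have hMx : (0:ℝ) < M - x := by linarith
  have hμ0 : (0:ℝ) ≤ (M - m) / (M - x) := by positivity
  have hμ1 : (0:ℝ) ≤ 1 - (M - m) / (M - x) := by
    rw [sub_nonneg, div_le_one hMx]; linarith
  have hkey := hconv.2 hxJ hMJ hμ0 hμ1 (by ring)
  simp only [smul_eq_mul] at hkey
  rw [show (M - m) / (M - x) * x + (1 - (M - m) / (M - x)) * M = m by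
    field_simp; ring] at hkey
  rw [← sub_nonneg]
  have h3 : f x - ((f M - f m) / (M - m) * x + (M * f m - m * f M) / (M - m))
      = (M - x) * (((M - m) / (M - x) * f x + (1 - (M - m) / (M - x)) * f M) - f m) / (M - m) := by
    field_simp; ring
  rw [h3]
  apply div_nonneg _ hMm.le
  apply mul_nonneg hMx.le
  linarith

/-- Above `M`, a convex function lies above the chord line through `(m, f m)` and `(M, f M)`. -/
lemma jtm_scalar_lower_right (hmM : m < M) (hmJ : m ∈ J) (hconv : ConvexOn ℝ J f)
    {x : ℝ} (hxJ : x ∈ J) (hxM : M ≤ x) :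
    (f M - f m) / (M - m) * x + (M * f m - m * f M) / (M - m) ≤ f x := by
  have hMm : (0:ℝ) < M - m := by linarith
  have hxm : (0:ℝ) < x - m := by linarith
  have hμ0 : (0:ℝ) ≤ (x - M) / (x - m) := by
    apply div_nonneg <;> linarith
  have hμ1 : (0:ℝ) ≤ 1 - (x - M) / (x - m) := by
    rw [sub_nonneg, div_le_one hxm]; linarith
  have hkey := hconv.2 hmJ hxJ hμ0 hμ1 (by ring)
  simp only [smul_eq_mul] at hkey
  rw [show (x - M) / (x - m) * m + (1 - (x - M) / (x - m)) * x = M by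
    field_simp; ring] at hkey
  rw [← sub_nonneg]
  have h3 : f x - ((f M - f m) / (M - m) * x + (M * f m - m * f M) / (M - m))
      = (x - m) * (((x - M) / (x - m) * f m + (1 - (x - M) / (x - m)) * f x) - f M) / (M - m) := by
    field_simp; ring
  rw [h3]
  apply div_nonneg _ hMm.le
  apply mul_nonneg hxm.le
  linarith

end Scalar

section OpHelpers
variable {H : Type*} [NormedAddCommGroup H] [InnerProductSpace ℂ H] [CompleteSpace H]


lemma jtm_sum_isSelfAdjoint {n : ℕ} (g : Fin n → H →L[ℂ] H)
    (h : ∀ i, IsSelfAdjoint (g i)) : IsSelfAdjoint (∑ i, g i) := by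
  rw [IsSelfAdjoint, star_sum]
  exact Finset.sum_congr rfl fun i _ => h i

lemma jtm_map_real_smul (Φ : (H →L[ℂ] H) →ₗ[ℂ] (H →L[ℂ] H)) (r : ℝ) (X : H →L[ℂ] H) :
    Φ (r • X) = r • Φ X := by
  rw [← Complex.coe_smul, map_smul, Complex.coe_smul]

lemma jtm_map_mono (Φ : (H →L[ℂ] H) →ₗ[ℂ] (H →L[ℂ] H))
    (hΦ : ∀ T : H →L[ℂ] H, 0 ≤ T → 0 ≤ Φ T) {X Y : H →L[ℂ] H} (h : X ≤ Y) : Φ X ≤ Φ Y :=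
  sub_nonneg.mp <| by rw [← map_sub]; exact hΦ _ (sub_nonneg.mpr h)

lemma jtm_map_isSelfAdjoint (Φ : (H →L[ℂ] H) →ₗ[ℂ] (H →L[ℂ] H))
    (hΦ : ∀ T : H →L[ℂ] H, 0 ≤ T → 0 ≤ Φ T) {T : H →L[ℂ] H} (hT : IsSelfAdjoint T) :
    IsSelfAdjoint (Φ T) := by
  have h1 : (0 : H →L[ℂ] H) ≤ T + ‖T‖ • 1 := by
    rw [← neg_le_iff_add_nonneg, ← neg_smul, ← Algebra.algebraMap_eq_smul_one, map_neg]
    exact hT.neg_algebraMap_norm_le_self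
  have h2 : IsSelfAdjoint (Φ (T + ‖T‖ • 1)) := .of_nonneg (hΦ _ h1)
  have h3 : IsSelfAdjoint (Φ 1) := .of_nonneg (hΦ _ zero_le_one)
  have h4 : Φ T = Φ (T + ‖T‖ • 1) - ‖T‖ • Φ 1 := by
    rw [map_add, jtm_map_real_smul]; abel
  rw [h4]
  have h5 : IsSelfAdjoint (‖T‖ • Φ 1) := .of_nonneg (smul_nonneg (norm_nonneg T) (hΦ _ zero_le_one))
  exact h2.sub h5

lemma jtm_cfc_affine (α γ : ℝ) (T : H →L[ℂ] H) (hT : IsSelfAdjoint T) :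
    cfc (fun x : ℝ => α * x + γ) T = α • T + γ • (1 : H →L[ℂ] H) := by
  rw [cfc_add T (fun x => α * x) (fun _ => γ), cfc_const_mul_id α T hT, cfc_const γ T hT,
    Algebra.algebraMap_eq_smul_one]

lemma jtm_opAbs_cfc (c : ℝ) (T : H →L[ℂ] H) (hT : IsSelfAdjoint T) :
    opAbs (T - c • 1) = cfc (fun x : ℝ => |x - c|) T := by
  have h1 : T - c • (1 : H →L[ℂ] H) = cfc (fun x : ℝ => x - c) T := by
    rw [cfc_sub (fun x : ℝ => x) (fun _ => c) T, cfc_id' ℝ T hT, cfc_const c T hT,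
      Algebra.algebraMap_eq_smul_one]
  rw [opAbs, h1, ← cfc_comp' (fun t : ℝ => |t|) (fun x : ℝ => x - c) T]

lemma jtm_smul_le_smul {r : ℝ} (hr : 0 ≤ r) {X Y : H →L[ℂ] H} (h : X ≤ Y) : r • X ≤ r • Y :=
  smul_le_smul_of_nonneg_left h hr

end OpHelpers
/-- **Corollary 2.5 (2) of the paper.** -/
theorem jensen_type_maps_two {H : Type*} [NormedAddCommGroup H] [InnerProductSpace ℂ H]
    [CompleteSpace H] {n : ℕ} (m M : ℝ) (hmM : m < M) (J : Set ℝ) (hJ : J.OrdConnected)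
    (hJmM : Set.Icc m M ⊆ J) (f : ℝ → ℝ) (hf : ContinuousOn f J) (hconv : ConvexOn ℝ J f)
    (A B C D : Fin n → H →L[ℂ] H)
    (hAsa : ∀ i, IsSelfAdjoint (A i)) (hAspec : ∀ i, spectrum ℝ (A i) ⊆ J)
    (hBsa : ∀ i, IsSelfAdjoint (B i)) (hBspec : ∀ i, spectrum ℝ (B i) ⊆ J)
    (hCsa : ∀ i, IsSelfAdjoint (C i)) (hCspec : ∀ i, spectrum ℝ (C i) ⊆ J)
    (hDsa : ∀ i, IsSelfAdjoint (D i)) (hDspec : ∀ i, spectrum ℝ (D i) ⊆ J)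
    (hADBC : ∀ i, A i + D i = B i + C i)
    (hA : ∀ i, A i ≤ m • 1) (hBl : ∀ i, m • 1 ≤ B i) (hBu : ∀ i, B i ≤ M • 1)
    (hCl : ∀ i, m • 1 ≤ C i) (hCu : ∀ i, C i ≤ M • 1) (hD : ∀ i, M • 1 ≤ D i)
    (Φ : Fin n → (H →L[ℂ] H) →ₗ[ℂ] (H →L[ℂ] H))
    (hΦpos : ∀ i, ∀ T : H →L[ℂ] H, 0 ≤ T → 0 ≤ Φ i T)
    (hΦ1 : ∑ i, Φ i 1 = (1 : H →L[ℂ] H)) :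
    ∑ i, Φ i (cfc f (B i)) + ∑ i, Φ i (cfc f (C i)) ≤
        cfc f (∑ i, Φ i (A i)) + cfc f (∑ i, Φ i (D i)) -
          (f m + f M - 2 * f ((m + M) / 2)) •
            ((1 : H →L[ℂ] H) -
              (M - m)⁻¹ •
                (∑ i, Φ i (opAbs (B i - ((m + M) / 2) • 1)) +
                  ∑ i, Φ i (opAbs (C i - ((m + M) / 2) • 1)))) ∧
      cfc f (∑ i, Φ i (A i)) + cfc f (∑ i, Φ i (D i)) -
          (f m + f M - 2 * f ((m + M) / 2)) •
            ((1 : H →L[ℂ] H) -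
              (M - m)⁻¹ •
                (∑ i, Φ i (opAbs (B i - ((m + M) / 2) • 1)) +
                  ∑ i, Φ i (opAbs (C i - ((m + M) / 2) • 1)))) ≤
        cfc f (∑ i, Φ i (A i)) + cfc f (∑ i, Φ i (D i)) := by
  obtain htriv | hnt := subsingleton_or_nontrivial (H →L[ℂ] H)
  · exact ⟨le_of_eq (Subsingleton.elim _ _), le_of_eq (Subsingleton.elim _ _)⟩
  have hMm : (0:ℝ) < M - m := by linarith
  have hmJ : m ∈ J := hJmM ⟨le_rfl, hmM.le⟩
  have hMJ : M ∈ J := hJmM ⟨hmM.le, le_rfl⟩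
  set α : ℝ := (f M - f m) / (M - m) with hα
  set β : ℝ := (M * f m - m * f M) / (M - m) with hβ
  set δ : ℝ := f m + f M - 2 * f ((m + M) / 2) with hδdef
  have hδ : 0 ≤ δ := by
    have h := hconv.2 hmJ hMJ (by norm_num : (0:ℝ) ≤ 1/2) (by norm_num : (0:ℝ) ≤ 1/2)
      (by norm_num)
    simp only [smul_eq_mul] at h
    rw [show (1/2 : ℝ) * m + (1/2 : ℝ) * M = (m + M)/2 by ring] at h
    rw [hδdef]; linarith
  have hn : n ≠ 0 := by
    rintro rfl
    exact zero_ne_one (α := H →L[ℂ] H) (by simpa using hΦ1.symm)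
  have hne : (Finset.univ : Finset (Fin n)).Nonempty :=
    ⟨⟨0, Nat.pos_of_ne_zero hn⟩, Finset.mem_univ _⟩
  -- spectra of B i and C i lie in [m, M]
  have hBIcc : ∀ i, spectrum ℝ (B i) ⊆ Set.Icc m M := by
    intro i x hx
    have h1 := hBl i; have h2 := hBu i
    rw [← Algebra.algebraMap_eq_smul_one] at h1 h2
    exact ⟨(algebraMap_le_iff_le_spectrum (hBsa i)).mp h1 x hx,
      (le_algebraMap_iff_spectrum_le (hBsa i)).mp h2 x hx⟩
  have hCIcc : ∀ i, spectrum ℝ (C i) ⊆ Set.Icc m M := by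
    intro i x hx
    have h1 := hCl i; have h2 := hCu i
    rw [← Algebra.algebraMap_eq_smul_one] at h1 h2
    exact ⟨(algebraMap_le_iff_le_spectrum (hCsa i)).mp h1 x hx,
      (le_algebraMap_iff_spectrum_le (hCsa i)).mp h2 x hx⟩
  -- continuity of the auxiliary scalar function
  have hgcont : Continuous (fun x : ℝ =>
      α * x + (β - δ/2) + (δ * (M - m)⁻¹) * |x - (m + M)/2|) :=
    ((continuous_const.mul continuous_id).add continuous_const).add
      (continuous_const.mul ((continuous_id.sub continuous_const).abs))
  have habscont : Continuous (fun x : ℝ => (δ * (M - m)⁻¹) * |x - (m + M)/2|) :=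
    continuous_const.mul ((continuous_id.sub continuous_const).abs)
  have habscont' : Continuous (fun x : ℝ => |x - (m + M)/2|) :=
    (continuous_id.sub continuous_const).abs
  -- pointwise operator upper bounds
  have hkey : ∀ (T : H →L[ℂ] H), IsSelfAdjoint T → spectrum ℝ T ⊆ Set.Icc m M →
      cfc f T ≤ α • T + (β - δ/2) • 1
        + (δ * (M - m)⁻¹) • opAbs (T - ((m + M) / 2) • 1) := by
    intro T hT hTspec
    have h1 : cfc f T ≤ cfc (fun x : ℝ =>
        α * x + (β - δ/2) + (δ * (M - m)⁻¹) * |x - (m + M)/2|) T := by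
      refine cfc_mono (fun x hx => ?_) (hf.mono (fun x hx => hJmM (hTspec hx)))
        hgcont.continuousOn
      rw [hα, hβ, hδdef]
      exact jtm_scalar_upper hmM hJmM hconv (hTspec hx)
    have h2 : cfc (fun x : ℝ =>
        α * x + (β - δ/2) + (δ * (M - m)⁻¹) * |x - (m + M)/2|) T
        = α • T + (β - δ/2) • 1 + (δ * (M - m)⁻¹) • opAbs (T - ((m + M) / 2) • 1) := by
      rw [cfc_add T (fun x : ℝ => α * x + (β - δ/2))
        (fun x : ℝ => (δ * (M - m)⁻¹) * |x - (m + M)/2|)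
        (by fun_prop) habscont.continuousOn]
      rw [jtm_cfc_affine α (β - δ/2) T hT]
      rw [cfc_const_mul (δ * (M - m)⁻¹) (fun x : ℝ => |x - (m + M)/2|) T
        habscont'.continuousOn]
      rw [jtm_opAbs_cfc ((m + M)/2) T hT]
    exact h1.trans_eq h2
  -- summed upper bounds
  have hBsum : ∑ i, Φ i (cfc f (B i)) ≤ α • (∑ i, Φ i (B i)) + (β - δ/2) • 1
      + (δ * (M - m)⁻¹) • (∑ i, Φ i (opAbs (B i - ((m + M) / 2) • 1))) := by
    calc ∑ i, Φ i (cfc f (B i))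
        ≤ ∑ i, Φ i (α • B i + (β - δ/2) • 1
            + (δ * (M - m)⁻¹) • opAbs (B i - ((m + M) / 2) • 1)) :=
          Finset.sum_le_sum fun i _ =>
            jtm_map_mono (Φ i) (hΦpos i) (hkey (B i) (hBsa i) (hBIcc i))
      _ = α • (∑ i, Φ i (B i)) + (β - δ/2) • (∑ i, Φ i 1)
            + (δ * (M - m)⁻¹) • (∑ i, Φ i (opAbs (B i - ((m + M) / 2) • 1))) := by
          simp only [map_add, jtm_map_real_smul, Finset.sum_add_distrib, Finset.smul_sum]
      _ = α • (∑ i, Φ i (B i)) + (β - δ/2) • 1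
            + (δ * (M - m)⁻¹) • (∑ i, Φ i (opAbs (B i - ((m + M) / 2) • 1))) := by
          rw [hΦ1]
  have hCsum : ∑ i, Φ i (cfc f (C i)) ≤ α • (∑ i, Φ i (C i)) + (β - δ/2) • 1
      + (δ * (M - m)⁻¹) • (∑ i, Φ i (opAbs (C i - ((m + M) / 2) • 1))) := by
    calc ∑ i, Φ i (cfc f (C i))
        ≤ ∑ i, Φ i (α • C i + (β - δ/2) • 1
            + (δ * (M - m)⁻¹) • opAbs (C i - ((m + M) / 2) • 1)) :=
          Finset.sum_le_sum fun i _ =>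
            jtm_map_mono (Φ i) (hΦpos i) (hkey (C i) (hCsa i) (hCIcc i))
      _ = α • (∑ i, Φ i (C i)) + (β - δ/2) • (∑ i, Φ i 1)
            + (δ * (M - m)⁻¹) • (∑ i, Φ i (opAbs (C i - ((m + M) / 2) • 1))) := by
          simp only [map_add, jtm_map_real_smul, Finset.sum_add_distrib, Finset.smul_sum]
      _ = α • (∑ i, Φ i (C i)) + (β - δ/2) • 1
            + (δ * (M - m)⁻¹) • (∑ i, Φ i (opAbs (C i - ((m + M) / 2) • 1))) := by
          rw [hΦ1]
  have hsumBC : (∑ i, Φ i (B i)) + (∑ i, Φ i (C i))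
      = (∑ i, Φ i (A i)) + (∑ i, Φ i (D i)) := by
    rw [← Finset.sum_add_distrib, ← Finset.sum_add_distrib]
    exact Finset.sum_congr rfl fun i _ => by rw [← map_add, ← map_add, ← hADBC i]
  -- properties of the A and D sums
  have hSAsa : IsSelfAdjoint (∑ i, Φ i (A i)) :=
    jtm_sum_isSelfAdjoint _ fun i => jtm_map_isSelfAdjoint (Φ i) (hΦpos i) (hAsa i)
  have hSDsa : IsSelfAdjoint (∑ i, Φ i (D i)) :=
    jtm_sum_isSelfAdjoint _ fun i => jtm_map_isSelfAdjoint (Φ i) (hΦpos i) (hDsa i)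
  have hSAle : (∑ i, Φ i (A i)) ≤ m • 1 := by
    calc (∑ i, Φ i (A i)) ≤ ∑ i, Φ i (m • 1) :=
          Finset.sum_le_sum fun i _ => jtm_map_mono (Φ i) (hΦpos i) (hA i)
      _ = m • 1 := by
        simp only [jtm_map_real_smul, ← Finset.smul_sum, hΦ1]
  have hSDge : M • 1 ≤ (∑ i, Φ i (D i)) := by
    calc M • (1 : H →L[ℂ] H) = ∑ i, Φ i (M • 1) := by
          simp only [jtm_map_real_smul, ← Finset.smul_sum, hΦ1]
      _ ≤ ∑ i, Φ i (D i) :=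
          Finset.sum_le_sum fun i _ => jtm_map_mono (Φ i) (hΦpos i) (hD i)
  -- spectral bounds for the A-sum
  have hcpt : ∀ (T : H →L[ℂ] H), IsCompact (spectrum ℝ T) := fun T =>
    isCompact_iff_compactSpace.mpr inferInstance
  set t := Finset.univ.inf' hne (fun i => sInf (spectrum ℝ (A i))) with ht
  have htJ : t ∈ J := by
    obtain ⟨i0, -, h0⟩ := Finset.exists_mem_eq_inf' hne (fun i => sInf (spectrum ℝ (A i)))
    rw [ht, h0]
    exact hAspec i0 ((hcpt (A i0)).sInf_mem ((hAsa i0).spectrum_nonempty))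
  have htA : ∀ i, t • (1 : H →L[ℂ] H) ≤ A i := by
    intro i
    rw [← Algebra.algebraMap_eq_smul_one]
    refine algebraMap_le_of_le_spectrum (fun x hx => ?_) (hAsa i)
    calc t ≤ sInf (spectrum ℝ (A i)) :=
          Finset.inf'_le _ (Finset.mem_univ i)
      _ ≤ x := csInf_le (hcpt (A i)).bddBelow hx
  have hSAge : t • (1 : H →L[ℂ] H) ≤ (∑ i, Φ i (A i)) := by
    calc t • (1 : H →L[ℂ] H) = ∑ i, Φ i (t • 1) := by
          simp only [jtm_map_real_smul, ← Finset.smul_sum, hΦ1]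
      _ ≤ ∑ i, Φ i (A i) :=
          Finset.sum_le_sum fun i _ => jtm_map_mono (Φ i) (hΦpos i) (htA i)
  have hSAspec_le : ∀ x ∈ spectrum ℝ (∑ i, Φ i (A i)), x ≤ m := by
    have h := hSAle; rw [← Algebra.algebraMap_eq_smul_one] at h
    exact (le_algebraMap_iff_spectrum_le hSAsa).mp h
  have hSAspec_ge : ∀ x ∈ spectrum ℝ (∑ i, Φ i (A i)), t ≤ x := by
    have h := hSAge; rw [← Algebra.algebraMap_eq_smul_one] at h
    exact (algebraMap_le_iff_le_spectrum hSAsa).mp h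
  have hSAspecJ : spectrum ℝ (∑ i, Φ i (A i)) ⊆ J := fun x hx =>
    hJ.out htJ hmJ ⟨hSAspec_ge x hx, hSAspec_le x hx⟩
  -- spectral bounds for the D-sum
  set s := Finset.univ.sup' hne (fun i => sSup (spectrum ℝ (D i))) with hs
  have hsJ : s ∈ J := by
    obtain ⟨i0, -, h0⟩ := Finset.exists_mem_eq_sup' hne (fun i => sSup (spectrum ℝ (D i)))
    rw [hs, h0]
    exact hDspec i0 ((hcpt (D i0)).sSup_mem ((hDsa i0).spectrum_nonempty))
  have hsD : ∀ i, D i ≤ s • (1 : H →L[ℂ] H) := by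
    intro i
    rw [← Algebra.algebraMap_eq_smul_one]
    refine le_algebraMap_of_spectrum_le (fun x hx => ?_) (hDsa i)
    calc x ≤ sSup (spectrum ℝ (D i)) := le_csSup (hcpt (D i)).bddAbove hx
      _ ≤ s := by rw [hs]; exact Finset.le_sup' (fun j => sSup (spectrum ℝ (D j))) (Finset.mem_univ i)
  have hSDle : (∑ i, Φ i (D i)) ≤ s • (1 : H →L[ℂ] H) := by
    calc (∑ i, Φ i (D i)) ≤ ∑ i, Φ i (s • 1) :=
          Finset.sum_le_sum fun i _ => jtm_map_mono (Φ i) (hΦpos i) (hsD i)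
      _ = s • 1 := by
        simp only [jtm_map_real_smul, ← Finset.smul_sum, hΦ1]
  have hSDspec_ge : ∀ x ∈ spectrum ℝ (∑ i, Φ i (D i)), M ≤ x := by
    have h := hSDge; rw [← Algebra.algebraMap_eq_smul_one] at h
    exact (algebraMap_le_iff_le_spectrum hSDsa).mp h
  have hSDspec_le : ∀ x ∈ spectrum ℝ (∑ i, Φ i (D i)), x ≤ s := by
    have h := hSDle; rw [← Algebra.algebraMap_eq_smul_one] at h
    exact (le_algebraMap_iff_spectrum_le hSDsa).mp h
  have hSDspecJ : spectrum ℝ (∑ i, Φ i (D i)) ⊆ J := fun x hx =>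
    hJ.out hMJ hsJ ⟨hSDspec_ge x hx, hSDspec_le x hx⟩
  -- chord line lower bounds
  have hfSA : α • (∑ i, Φ i (A i)) + β • 1 ≤ cfc f (∑ i, Φ i (A i)) := by
    rw [← jtm_cfc_affine α β (∑ i, Φ i (A i)) hSAsa]
    refine cfc_mono (fun x hx => ?_) (by fun_prop) (hf.mono hSAspecJ)
    rw [hα, hβ]
    exact jtm_scalar_lower_left hmM hMJ hconv (hSAspecJ hx) (hSAspec_le x hx)
  have hfSD : α • (∑ i, Φ i (D i)) + β • 1 ≤ cfc f (∑ i, Φ i (D i)) := by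
    rw [← jtm_cfc_affine α β (∑ i, Φ i (D i)) hSDsa]
    refine cfc_mono (fun x hx => ?_) (by fun_prop) (hf.mono hSDspecJ)
    rw [hα, hβ]
    exact jtm_scalar_lower_right hmM hmJ hconv (hSDspecJ hx) (hSDspec_ge x hx)
  -- nonnegativity of the correction term
  have hAbs : ∀ (T : H →L[ℂ] H), IsSelfAdjoint T → spectrum ℝ T ⊆ Set.Icc m M →
      opAbs (T - ((m + M) / 2) • 1) ≤ ((M - m)/2) • 1 := by
    intro T hT hTspec
    rw [jtm_opAbs_cfc ((m + M)/2) T hT, ← Algebra.algebraMap_eq_smul_one]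
    refine cfc_le_algebraMap _ _ _ (fun x hx => ?_) habscont'.continuousOn hT
    obtain ⟨h1, h2⟩ := hTspec hx
    rw [abs_le]
    constructor <;> linarith
  have hKB : (∑ i, Φ i (opAbs (B i - ((m + M) / 2) • 1))) ≤ ((M - m)/2) • 1 := by
    calc (∑ i, Φ i (opAbs (B i - ((m + M) / 2) • 1)))
        ≤ ∑ i, Φ i (((M - m)/2) • 1) := Finset.sum_le_sum fun i _ =>
          jtm_map_mono (Φ i) (hΦpos i) (hAbs (B i) (hBsa i) (hBIcc i))
      _ = ((M - m)/2) • 1 := by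
        simp only [jtm_map_real_smul, ← Finset.smul_sum, hΦ1]
  have hKC : (∑ i, Φ i (opAbs (C i - ((m + M) / 2) • 1))) ≤ ((M - m)/2) • 1 := by
    calc (∑ i, Φ i (opAbs (C i - ((m + M) / 2) • 1)))
        ≤ ∑ i, Φ i (((M - m)/2) • 1) := Finset.sum_le_sum fun i _ =>
          jtm_map_mono (Φ i) (hΦpos i) (hAbs (C i) (hCsa i) (hCIcc i))
      _ = ((M - m)/2) • 1 := by
        simp only [jtm_map_real_smul, ← Finset.smul_sum, hΦ1]
  have hXpos : (0 : H →L[ℂ] H) ≤ 1 - (M - m)⁻¹ •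
      ((∑ i, Φ i (opAbs (B i - ((m + M) / 2) • 1)))
        + (∑ i, Φ i (opAbs (C i - ((m + M) / 2) • 1)))) := by
    rw [sub_nonneg]
    calc (M - m)⁻¹ • ((∑ i, Φ i (opAbs (B i - ((m + M) / 2) • 1)))
          + (∑ i, Φ i (opAbs (C i - ((m + M) / 2) • 1))))
        ≤ (M - m)⁻¹ • (((M - m)/2) • 1 + ((M - m)/2) • (1 : H →L[ℂ] H)) :=
          jtm_smul_le_smul (by positivity) (add_le_add hKB hKC)
      _ = 1 := by
          rw [← add_smul, smul_smul,
            show (M - m)⁻¹ * ((M - m)/2 + (M - m)/2) = 1 by field_simp; norm_num, one_smul]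
  constructor
  · calc ∑ i, Φ i (cfc f (B i)) + ∑ i, Φ i (cfc f (C i))
        ≤ (α • (∑ i, Φ i (B i)) + (β - δ/2) • 1
              + (δ * (M - m)⁻¹) • (∑ i, Φ i (opAbs (B i - ((m + M) / 2) • 1))))
          + (α • (∑ i, Φ i (C i)) + (β - δ/2) • 1
              + (δ * (M - m)⁻¹) • (∑ i, Φ i (opAbs (C i - ((m + M) / 2) • 1)))) :=
          add_le_add hBsum hCsum
      _ = (α • (∑ i, Φ i (A i)) + β • 1) + (α • (∑ i, Φ i (D i)) + β • 1)
          - δ • ((1 : H →L[ℂ] H) - (M - m)⁻¹ •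
              ((∑ i, Φ i (opAbs (B i - ((m + M) / 2) • 1)))
                + (∑ i, Φ i (opAbs (C i - ((m + M) / 2) • 1))))) := by
          have h5 : α • ((∑ i, Φ i (B i)) + (∑ i, Φ i (C i)))
              = α • ((∑ i, Φ i (A i)) + (∑ i, Φ i (D i))) := by rw [hsumBC]
          linear_combination (norm := module) h5
      _ ≤ cfc f (∑ i, Φ i (A i)) + cfc f (∑ i, Φ i (D i))
          - δ • ((1 : H →L[ℂ] H) - (M - m)⁻¹ •
              ((∑ i, Φ i (opAbs (B i - ((m + M) / 2) • 1)))
                + (∑ i, Φ i (opAbs (C i - ((m + M) / 2) • 1))))) :=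
          sub_le_sub_right (add_le_add hfSA hfSD) _
  · exact sub_le_self _ (smul_nonneg hδ hXpos)
end

section
/- Let m < M be real numbers, let J be an interval containing [m, M], and let f : J → ℝ be a continuous convex function. Let A_i, B_i, C_i, D_i ∈ σ(J) (i = 1,…,n) satisfy A_i + D_i = B_i + C_i, A_i ≤ m·I, m·I ≤ B_i ≤ M·I, m·I ≤ C_i ≤ M·I and M·I ≤ D_i for each i, and let Φ_1,…,Φ_n be positive linear maps on B(H) with Σ_{i=1}^n Φ_i(I) = I. Then Σ_i Φ_i(f(B_i)) + f(Σ_i Φ_i(C_i)) ≤ f(Σ_i Φ_i(D_i)) + Σ_i Φ_i(f(A_i)) − δ_f · X̃₃ ≤ f(Σ_i Φ_i(D_i)) + Σ_i Φ_i(f(A_i)), where X̃₃ = I − (1/(M−m))·[ Σ_i Φ_i(|B_i − ((m+M)/2)·I|) + |Σ_i Φ_i(C_i) − ((m+M)/2)·I| ]. -/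
set_option maxHeartbeats 800000
set_option synthInstance.maxHeartbeats 100000

section Scalar
variable {m M : ℝ} {J : Set ℝ} {f : ℝ → ℝ}

lemma jtm_delta_nonneg (hmM : m < M) (hJmM : Set.Icc m M ⊆ J) (hconv : ConvexOn ℝ J f) :
    0 ≤ f m + f M - 2 * f ((m + M) / 2) := by
  have h := hconv.2 (hJmM ⟨le_refl m, hmM.le⟩) (hJmM ⟨hmM.le, le_refl M⟩)
    (by norm_num : (0:ℝ) ≤ 1/2) (by norm_num : (0:ℝ) ≤ 1/2) (by norm_num)
  simp only [smul_eq_mul] at h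
  have he : (1/2 : ℝ) * m + 1/2 * M = (m + M) / 2 := by ring
  rw [he] at h
  linarith

private lemma jtm_id1 (hmM : m < M) (t u v w : ℝ) :
    ((m+M)/2 - t)/((m+M)/2 - m) * u + (t - m)/((m+M)/2 - m) * w
      + (u + v - 2*w) * (1/2 - (M-m)⁻¹ * ((m+M)/2 - t)) = (v-u)/(M-m)*(t-m) + u := by
  have h1 : (m+M)/2 - m = (M - m)/2 := by ring
  have h2 : M - m ≠ 0 := by linarith
  rw [h1]; field_simp; ring

private lemma jtm_id2 (hmM : m < M) (t u v w : ℝ) :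
    (M - t)/(M - (m+M)/2) * w + (t - (m+M)/2)/(M - (m+M)/2) * v
      + (u + v - 2*w) * (1/2 - (M-m)⁻¹ * (t - (m+M)/2)) = (v-u)/(M-m)*(t-m) + u := by
  have h1 : M - (m+M)/2 = (M - m)/2 := by ring
  have h2 : M - m ≠ 0 := by linarith
  rw [h1]; field_simp; ring

lemma jtm_mid (hmM : m < M) (hJmM : Set.Icc m M ⊆ J) (hconv : ConvexOn ℝ J f)
    {t : ℝ} (ht : t ∈ Set.Icc m M) :
    f t + (f m + f M - 2 * f ((m + M) / 2)) * (1/2 - (M - m)⁻¹ * |t - (m + M) / 2|) ≤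
      (f M - f m) / (M - m) * (t - m) + f m := by
  have hMm : (0:ℝ) < M - m := by linarith
  have hcm : m < (m+M)/2 := by linarith
  have hcM : (m+M)/2 < M := by linarith
  have hd1 : (m+M)/2 - m ≠ 0 := by intro h; rw [sub_eq_zero] at h; linarith
  have hd2 : M - (m+M)/2 ≠ 0 := by intro h; rw [sub_eq_zero] at h; linarith
  have hmJ : m ∈ J := hJmM ⟨le_refl m, hmM.le⟩
  have hMJ : M ∈ J := hJmM ⟨hmM.le, le_refl M⟩
  have hcJ : (m+M)/2 ∈ J := hJmM ⟨hcm.le, hcM.le⟩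
  obtain ⟨htm, htM⟩ := ht
  rcases le_total t ((m+M)/2) with hle | hle
  · have habs : |t - (m+M)/2| = (m+M)/2 - t := by rw [abs_of_nonpos (by linarith)]; ring
    have h := hconv.2 hmJ hcJ
      (div_nonneg (by linarith) (by linarith) : (0:ℝ) ≤ ((m+M)/2 - t)/((m+M)/2 - m))
      (div_nonneg (by linarith) (by linarith) : (0:ℝ) ≤ (t - m)/((m+M)/2 - m))
      (by rw [← add_div, div_eq_one_iff_eq hd1]; ring)
    have hpt : (((m+M)/2 - t)/((m+M)/2 - m)) • m + ((t - m)/((m+M)/2 - m)) • ((m+M)/2) = t := by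
      simp only [smul_eq_mul, div_mul_eq_mul_div, ← add_div]
      rw [div_eq_iff hd1]; ring
    rw [hpt] at h
    simp only [smul_eq_mul] at h
    have key := jtm_id1 hmM t (f m) (f M) (f ((m+M)/2))
    rw [habs]; linarith
  · have habs : |t - (m+M)/2| = t - (m+M)/2 := abs_of_nonneg (by linarith)
    have h := hconv.2 hcJ hMJ
      (div_nonneg (by linarith) (by linarith) : (0:ℝ) ≤ (M - t)/(M - (m+M)/2))
      (div_nonneg (by linarith) (by linarith) : (0:ℝ) ≤ (t - (m+M)/2)/(M - (m+M)/2))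
      (by rw [← add_div, div_eq_one_iff_eq hd2]; ring)
    have hpt : ((M - t)/(M - (m+M)/2)) • ((m+M)/2) + ((t - (m+M)/2)/(M - (m+M)/2)) • M = t := by
      simp only [smul_eq_mul, div_mul_eq_mul_div, ← add_div]
      rw [div_eq_iff hd2]; ring
    rw [hpt] at h
    simp only [smul_eq_mul] at h
    have key := jtm_id2 hmM t (f m) (f M) (f ((m+M)/2))
    rw [habs]; linarith

lemma jtm_left (hmM : m < M) (hJmM : Set.Icc m M ⊆ J) (hconv : ConvexOn ℝ J f)
    {t : ℝ} (htJ : t ∈ J) (ht : t ≤ m) :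
    (f M - f m) / (M - m) * (t - m) + f m ≤ f t := by
  have hMm : (0:ℝ) < M - m := by linarith
  have hk : (f M - f m) / (M - m) * (M - m) = f M - f m := div_mul_cancel₀ _ hMm.ne'
  rcases eq_or_lt_of_le ht with rfl | hlt
  · simp
  · have hMJ : M ∈ J := hJmM ⟨hmM.le, le_refl M⟩
    have h := hconv.slope_mono_adjacent htJ hMJ hlt hmM
    rw [div_le_div_iff₀ (by linarith) hMm] at h
    nlinarith [h, hk, hMm]

lemma jtm_right (hmM : m < M) (hJmM : Set.Icc m M ⊆ J) (hconv : ConvexOn ℝ J f)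
    {t : ℝ} (htJ : t ∈ J) (ht : M ≤ t) :
    (f M - f m) / (M - m) * (t - m) + f m ≤ f t := by
  have hMm : (0:ℝ) < M - m := by linarith
  have hk : (f M - f m) / (M - m) * (M - m) = f M - f m := div_mul_cancel₀ _ hMm.ne'
  rcases eq_or_lt_of_le ht with rfl | hlt
  · have : (f M - f m) / (M - m) * (M - m) + f m ≤ f M := by rw [hk]; linarith
    exact this
  · have hmJ : m ∈ J := hJmM ⟨le_refl m, hmM.le⟩
    have h := hconv.slope_mono_adjacent hmJ htJ hmM hlt
    rw [div_le_div_iff₀ hMm (by linarith)] at h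
    nlinarith [h, hk, hMm]

end Scalar

section OpAux
variable {H : Type*} [NormedAddCommGroup H] [InnerProductSpace ℂ H] [CompleteSpace H]
  {m M : ℝ} {J : Set ℝ} {f : ℝ → ℝ}

private lemma jtm_le_smul_one_iff {X : H →L[ℂ] H} (hX : IsSelfAdjoint X) (r : ℝ) :
    X ≤ r • 1 ↔ ∀ x ∈ spectrum ℝ X, x ≤ r := by
  have h := le_algebraMap_iff_spectrum_le (R := ℝ) (a := X) (r := r) hX
  rwa [Algebra.algebraMap_eq_smul_one] at h

private lemma jtm_smul_one_le_iff {X : H →L[ℂ] H} (hX : IsSelfAdjoint X) (r : ℝ) :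
    r • 1 ≤ X ↔ ∀ x ∈ spectrum ℝ X, r ≤ x := by
  have h := algebraMap_le_iff_le_spectrum (R := ℝ) (a := X) (r := r) hX
  rwa [Algebra.algebraMap_eq_smul_one] at h

private lemma jtm_spec_Icc {X : H →L[ℂ] H} (hX : IsSelfAdjoint X)
    (hXl : m • 1 ≤ X) (hXu : X ≤ M • 1) : spectrum ℝ X ⊆ Set.Icc m M := fun x hx =>
  ⟨(jtm_smul_one_le_iff hX m).mp hXl x hx, (jtm_le_smul_one_iff hX M).mp hXu x hx⟩

private lemma jtm_cfc_affine_s8 {X : H →L[ℂ] H} (hX : IsSelfAdjoint X) (k b : ℝ) :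
    cfc (fun t : ℝ => k * t + b) X = k • X + b • 1 := by
  rw [cfc_add X (fun t => k * t) (fun _ => b), cfc_const_mul_id k X, cfc_const b X,
    Algebra.algebraMap_eq_smul_one]

private lemma jtm_cfc_absShift {X : H →L[ℂ] H} (hX : IsSelfAdjoint X) (c : ℝ) :
    cfc (fun t : ℝ => |t - c|) X = opAbs (X - c • 1) := by
  have h1 : (fun t : ℝ => |t - c|) = (fun s : ℝ => |s|) ∘ (fun t : ℝ => t - c) := rfl
  rw [opAbs, h1, cfc_comp _ _ X]
  congr 1
  rw [cfc_sub (fun t : ℝ => t) (fun _ => c) X, cfc_id' ℝ X, cfc_const c X,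
    Algebra.algebraMap_eq_smul_one]

private lemma jtm_G_eq (hmM : m < M) {X : H →L[ℂ] H} (hX : IsSelfAdjoint X) :
    cfc (fun t : ℝ => 1/2 - (M - m)⁻¹ * |t - (m + M)/2|) X =
      (1/2 : ℝ) • (1 : H →L[ℂ] H) - (M - m)⁻¹ • opAbs (X - ((m + M)/2) • 1) := by
  rw [cfc_sub (fun _ : ℝ => (1:ℝ)/2) (fun t : ℝ => (M - m)⁻¹ * |t - (m + M)/2|) X
    (by fun_prop) (by fun_prop), cfc_const _ X,
    cfc_const_mul (M - m)⁻¹ (fun t : ℝ => |t - (m + M)/2|) X (by fun_prop),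
    jtm_cfc_absShift hX, Algebra.algebraMap_eq_smul_one]
private lemma jtm_key_mid (hmM : m < M) (hJmM : Set.Icc m M ⊆ J) (hf : ContinuousOn f J)
    (hconv : ConvexOn ℝ J f) {X : H →L[ℂ] H} (hX : IsSelfAdjoint X)
    (hXl : m • 1 ≤ X) (hXu : X ≤ M • 1) :
    cfc f X + (f m + f M - 2 * f ((m + M)/2)) •
        ((1/2 : ℝ) • (1 : H →L[ℂ] H) - (M - m)⁻¹ • opAbs (X - ((m + M)/2) • 1)) ≤
      ((f M - f m)/(M - m)) • X + (f m - (f M - f m)/(M - m) * m) • 1 := by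
  have hspec := jtm_spec_Icc hX hXl hXu
  have hfc : ContinuousOn f (spectrum ℝ X) := hf.mono (hspec.trans hJmM)
  set δ : ℝ := f m + f M - 2 * f ((m + M)/2) with hδ
  set k : ℝ := (f M - f m)/(M - m) with hk
  have h := cfc_mono (a := X)
    (f := fun t : ℝ => f t + δ * (1/2 - (M - m)⁻¹ * |t - (m + M)/2|))
    (g := fun t : ℝ => k * t + (f m - k * m))
    (fun x hx => by
      have h1 := jtm_mid hmM hJmM hconv (hspec hx)
      have h2 : k * (x - m) + f m = k * x + (f m - k * m) := by ring
      rw [hδ, hk]; rw [hk] at h2; linarith [h1, h2.le, h2.ge])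
    (hfc.add (by fun_prop)) (by fun_prop)
  rwa [cfc_add X f _ hfc (by fun_prop),
    cfc_const_mul δ (fun t : ℝ => 1/2 - (M - m)⁻¹ * |t - (m + M)/2|) X (by fun_prop),
    jtm_G_eq hmM hX, jtm_cfc_affine_s8 hX] at h

private lemma jtm_key_G_nonneg (hmM : m < M) {X : H →L[ℂ] H} (hX : IsSelfAdjoint X)
    (hXl : m • 1 ≤ X) (hXu : X ≤ M • 1) :
    0 ≤ (1/2 : ℝ) • (1 : H →L[ℂ] H) - (M - m)⁻¹ • opAbs (X - ((m + M)/2) • 1) := by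
  rw [← jtm_G_eq hmM hX]
  have hspec := jtm_spec_Icc hX hXl hXu
  refine cfc_nonneg fun x hx => ?_
  obtain ⟨h1, h2⟩ := hspec hx
  have hMm : (0:ℝ) < M - m := by linarith
  have habs : |x - (m + M)/2| ≤ (M - m)/2 := abs_le.mpr ⟨by linarith, by linarith⟩
  have h3 : (M - m)⁻¹ * |x - (m + M)/2| ≤ (M - m)⁻¹ * ((M - m)/2) :=
    mul_le_mul_of_nonneg_left habs (by positivity)
  have h4 : (M - m)⁻¹ * ((M - m)/2) = 1/2 := by field_simp
  linarith

private lemma jtm_key_out (hmM : m < M) (hJmM : Set.Icc m M ⊆ J) (hf : ContinuousOn f J)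
    (hconv : ConvexOn ℝ J f) {X : H →L[ℂ] H} (hX : IsSelfAdjoint X)
    (hspecJ : spectrum ℝ X ⊆ J) (hside : spectrum ℝ X ⊆ Set.Iic m ∪ Set.Ici M) :
    ((f M - f m)/(M - m)) • X + (f m - (f M - f m)/(M - m) * m) • 1 ≤ cfc f X := by
  set k : ℝ := (f M - f m)/(M - m) with hk
  have h := cfc_mono (a := X) (f := fun t : ℝ => k * t + (f m - k * m)) (g := f)
    (fun x hx => by
      have h2 : k * (x - m) + f m = k * x + (f m - k * m) := by ring
      rcases hside hx with hle | hge
      · have := jtm_left hmM hJmM hconv (hspecJ hx) hle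
        rw [hk]; rw [hk] at h2; linarith
      · have := jtm_right hmM hJmM hconv (hspecJ hx) hge
        rw [hk]; rw [hk] at h2; linarith)
    (by fun_prop) (hf.mono hspecJ)
  rwa [jtm_cfc_affine_s8 hX] at h

end OpAux
/-- **Corollary 2.5 (3) of the paper.** -/
theorem jensen_type_maps_three {H : Type*} [NormedAddCommGroup H] [InnerProductSpace ℂ H]
    [CompleteSpace H] {n : ℕ} (m M : ℝ) (hmM : m < M) (J : Set ℝ) (hJ : J.OrdConnected)
    (hJmM : Set.Icc m M ⊆ J) (f : ℝ → ℝ) (hf : ContinuousOn f J) (hconv : ConvexOn ℝ J f)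
    (A B C D : Fin n → H →L[ℂ] H)
    (hAsa : ∀ i, IsSelfAdjoint (A i)) (hAspec : ∀ i, spectrum ℝ (A i) ⊆ J)
    (hBsa : ∀ i, IsSelfAdjoint (B i)) (hBspec : ∀ i, spectrum ℝ (B i) ⊆ J)
    (hCsa : ∀ i, IsSelfAdjoint (C i)) (hCspec : ∀ i, spectrum ℝ (C i) ⊆ J)
    (hDsa : ∀ i, IsSelfAdjoint (D i)) (hDspec : ∀ i, spectrum ℝ (D i) ⊆ J)
    (hADBC : ∀ i, A i + D i = B i + C i)
    (hA : ∀ i, A i ≤ m • 1) (hBl : ∀ i, m • 1 ≤ B i) (hBu : ∀ i, B i ≤ M • 1)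
    (hCl : ∀ i, m • 1 ≤ C i) (hCu : ∀ i, C i ≤ M • 1) (hD : ∀ i, M • 1 ≤ D i)
    (Φ : Fin n → (H →L[ℂ] H) →ₗ[ℂ] (H →L[ℂ] H))
    (hΦpos : ∀ i, ∀ T : H →L[ℂ] H, 0 ≤ T → 0 ≤ Φ i T)
    (hΦ1 : ∑ i, Φ i 1 = (1 : H →L[ℂ] H)) :
    ∑ i, Φ i (cfc f (B i)) + cfc f (∑ i, Φ i (C i)) ≤
        cfc f (∑ i, Φ i (D i)) + ∑ i, Φ i (cfc f (A i)) -
          (f m + f M - 2 * f ((m + M) / 2)) •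
            ((1 : H →L[ℂ] H) -
              (M - m)⁻¹ •
                (∑ i, Φ i (opAbs (B i - ((m + M) / 2) • 1)) +
                  opAbs (∑ i, Φ i (C i) - ((m + M) / 2) • 1))) ∧
      cfc f (∑ i, Φ i (D i)) + ∑ i, Φ i (cfc f (A i)) -
          (f m + f M - 2 * f ((m + M) / 2)) •
            ((1 : H →L[ℂ] H) -
              (M - m)⁻¹ •
                (∑ i, Φ i (opAbs (B i - ((m + M) / 2) • 1)) +
                  opAbs (∑ i, Φ i (C i) - ((m + M) / 2) • 1))) ≤
        cfc f (∑ i, Φ i (D i)) + ∑ i, Φ i (cfc f (A i)) := by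
  classical
  by_cases hsub : Subsingleton (H →L[ℂ] H)
  · constructor <;> exact le_of_eq (Subsingleton.elim _ _)
  have hnt : Nontrivial (H →L[ℂ] H) := not_subsingleton_iff_nontrivial.mp hsub
  have hMm : (0:ℝ) < M - m := by linarith
  have hmJ : m ∈ J := hJmM ⟨le_refl m, hmM.le⟩
  have hMJ : M ∈ J := hJmM ⟨hmM.le, le_refl M⟩
  set δ : ℝ := f m + f M - 2 * f ((m + M) / 2) with hδ
  set k : ℝ := (f M - f m) / (M - m) with hk
  -- basic facts about the Φ i
  have hmono : ∀ i : Fin n, ∀ X Y : H →L[ℂ] H, X ≤ Y → Φ i X ≤ Φ i Y := by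
    intro i X Y hXY
    have h := hΦpos i (Y - X) (sub_nonneg.mpr hXY)
    rw [map_sub] at h
    exact sub_nonneg.mp h
  have hsa : ∀ i : Fin n, ∀ X : H →L[ℂ] H, IsSelfAdjoint X → IsSelfAdjoint (Φ i X) := by
    intro i X hX
    have h0 := hX.neg_algebraMap_norm_le_self
    have h1 : (0 : H →L[ℂ] H) ≤ X + algebraMap ℝ _ ‖X‖ := by
      simpa using add_le_add_left h0 (algebraMap ℝ _ ‖X‖)
    have h2 : Φ i X = Φ i (X + algebraMap ℝ _ ‖X‖) - Φ i (algebraMap ℝ _ ‖X‖) := by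
      rw [map_add]; abel
    rw [h2]
    have hsa1 : IsSelfAdjoint (Φ i (X + algebraMap ℝ _ ‖X‖)) := .of_nonneg (hΦpos i _ h1)
    have hsa2 : IsSelfAdjoint (Φ i (algebraMap ℝ _ ‖X‖)) := .of_nonneg (hΦpos i _ (by
      rw [Algebra.algebraMap_eq_smul_one]
      exact smul_nonneg (norm_nonneg X) zero_le_one))
    exact hsa1.sub hsa2
  have hsum_smul_one : ∀ r : ℝ, ∑ i, Φ i (r • (1 : H →L[ℂ] H)) = r • (1 : H →L[ℂ] H) := by
    intro r
    simp_rw [LinearMap.map_smul_of_tower, ← Finset.smul_sum, hΦ1]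
  -- the aggregated operators
  set C' : H →L[ℂ] H := ∑ i, Φ i (C i) with hC'
  set D' : H →L[ℂ] H := ∑ i, Φ i (D i) with hD'
  have hC'sa : IsSelfAdjoint C' := by
    rw [IsSelfAdjoint, hC', star_sum]
    exact Finset.sum_congr rfl fun i _ => (hsa i _ (hCsa i)).star_eq
  have hD'sa : IsSelfAdjoint D' := by
    rw [IsSelfAdjoint, hD', star_sum]
    exact Finset.sum_congr rfl fun i _ => (hsa i _ (hDsa i)).star_eq
  have hC'l : m • (1 : H →L[ℂ] H) ≤ C' := by
    rw [← hsum_smul_one m, hC']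
    exact Finset.sum_le_sum fun i _ => hmono i _ _ (hCl i)
  have hC'u : C' ≤ M • (1 : H →L[ℂ] H) := by
    rw [← hsum_smul_one M, hC']
    exact Finset.sum_le_sum fun i _ => hmono i _ _ (hCu i)
  have hD'l : M • (1 : H →L[ℂ] H) ≤ D' := by
    rw [← hsum_smul_one M, hD']
    exact Finset.sum_le_sum fun i _ => hmono i _ _ (hD i)
  -- the spectrum of D' lies in J
  have hne : Nonempty (Fin n) := by
    by_contra h
    have h0 : (Finset.univ : Finset (Fin n)) = ∅ := by
      simpa [Finset.univ_eq_empty_iff] using h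
    rw [h0, Finset.sum_empty] at hΦ1
    exact zero_ne_one hΦ1
  have huniv : (Finset.univ : Finset (Fin n)).Nonempty := Finset.univ_nonempty
  set K : ℝ := Finset.univ.sup' huniv (fun i => sSup (spectrum ℝ (D i))) with hKdef
  have hspecD : ∀ i : Fin n, (spectrum ℝ (D i)).Nonempty ∧ BddAbove (spectrum ℝ (D i)) :=
    fun i => ⟨(hDsa i).spectrum_nonempty, (spectrum.isCompact (𝕜 := ℝ) (D i)).bddAbove⟩
  have hDK : ∀ i : Fin n, D i ≤ K • 1 := by
    intro i
    rw [jtm_le_smul_one_iff (hDsa i)]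
    intro x hx
    exact (le_csSup (hspecD i).2 hx).trans
      (Finset.le_sup' (fun j => sSup (spectrum ℝ (D j))) (Finset.mem_univ i))
  have hKJ : K ∈ J := by
    obtain ⟨i0, -, hEq⟩ := Finset.exists_mem_eq_sup' huniv (fun i => sSup (spectrum ℝ (D i)))
    rw [hKdef, hEq]
    exact hDspec i0 ((spectrum.isCompact (𝕜 := ℝ) (D i0)).sSup_mem (hspecD i0).1)
  have hMK : M ≤ K := by
    obtain ⟨i0⟩ := hne
    obtain ⟨x, hx⟩ := (hspecD i0).1
    have h1 : M ≤ x := (jtm_smul_one_le_iff (hDsa i0) M).mp (hD i0) x hx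
    exact h1.trans ((le_csSup (hspecD i0).2 hx).trans
      (Finset.le_sup' (fun j => sSup (spectrum ℝ (D j))) (Finset.mem_univ i0)))
  have hD'u : D' ≤ K • (1 : H →L[ℂ] H) := by
    rw [← hsum_smul_one K, hD']
    exact Finset.sum_le_sum fun i _ => hmono i _ _ (hDK i)
  have hD'specJ : spectrum ℝ D' ⊆ J := by
    intro x hx
    have := jtm_spec_Icc (m := M) (M := K) hD'sa hD'l hD'u hx
    exact hJ.out hMJ hKJ this
  have hD'side : spectrum ℝ D' ⊆ Set.Iic m ∪ Set.Ici M := fun x hx =>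
    Or.inr ((jtm_smul_one_le_iff hD'sa M).mp hD'l x hx)
  -- key estimates
  have hBmid : ∀ i : Fin n,
      Φ i (cfc f (B i)) + δ • Φ i ((1/2 : ℝ) • (1 : H →L[ℂ] H) -
          (M - m)⁻¹ • opAbs (B i - ((m + M)/2) • 1)) ≤
        k • Φ i (B i) + (f m - k * m) • Φ i 1 := by
    intro i
    have h := hmono i _ _ (jtm_key_mid hmM hJmM hf hconv (hBsa i) (hBl i) (hBu i))
    rwa [map_add, map_add, LinearMap.map_smul_of_tower, LinearMap.map_smul_of_tower,
      LinearMap.map_smul_of_tower] at h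
  have hBsum : ∑ i, Φ i (cfc f (B i)) + δ • ∑ i, Φ i ((1/2 : ℝ) • (1 : H →L[ℂ] H) -
        (M - m)⁻¹ • opAbs (B i - ((m + M)/2) • 1)) ≤
      k • ∑ i, Φ i (B i) + (f m - k * m) • (1 : H →L[ℂ] H) := by
    have h := Finset.sum_le_sum fun i (_ : i ∈ Finset.univ) => hBmid i
    rwa [Finset.sum_add_distrib, Finset.sum_add_distrib, ← Finset.smul_sum, ← Finset.smul_sum,
      ← Finset.smul_sum, hΦ1] at h
  have hCmid := jtm_key_mid hmM hJmM hf hconv hC'sa hC'l hC'u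
  have hAout : ∀ i : Fin n,
      k • Φ i (A i) + (f m - k * m) • Φ i 1 ≤ Φ i (cfc f (A i)) := by
    intro i
    have hside : spectrum ℝ (A i) ⊆ Set.Iic m ∪ Set.Ici M := fun x hx =>
      Or.inl ((jtm_le_smul_one_iff (hAsa i) m).mp (hA i) x hx)
    have h := hmono i _ _ (jtm_key_out hmM hJmM hf hconv (hAsa i) (hAspec i) hside)
    rwa [map_add, LinearMap.map_smul_of_tower, LinearMap.map_smul_of_tower] at h
  have hAsum : k • ∑ i, Φ i (A i) + (f m - k * m) • (1 : H →L[ℂ] H) ≤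
      ∑ i, Φ i (cfc f (A i)) := by
    have h := Finset.sum_le_sum fun i (_ : i ∈ Finset.univ) => hAout i
    rwa [Finset.sum_add_distrib, ← Finset.smul_sum, ← Finset.smul_sum, hΦ1] at h
  have hDout := jtm_key_out hmM hJmM hf hconv hD'sa hD'specJ hD'side
  -- algebraic identity for the sums
  have hsumBC : ∑ i, Φ i (B i) + C' = ∑ i, Φ i (A i) + D' := by
    rw [hC', hD', ← Finset.sum_add_distrib, ← Finset.sum_add_distrib]
    exact Finset.sum_congr rfl fun i _ => by rw [← map_add, ← map_add, hADBC i]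
  -- decomposition of the correction term
  have hX3 : (1 : H →L[ℂ] H) - (M - m)⁻¹ • (∑ i, Φ i (opAbs (B i - ((m + M) / 2) • 1)) +
        opAbs (C' - ((m + M) / 2) • 1)) =
      ∑ i, Φ i ((1/2 : ℝ) • (1 : H →L[ℂ] H) - (M - m)⁻¹ • opAbs (B i - ((m + M)/2) • 1)) +
        ((1/2 : ℝ) • (1 : H →L[ℂ] H) - (M - m)⁻¹ • opAbs (C' - ((m + M)/2) • 1)) := by
    have h1 : ∑ i, Φ i ((1/2 : ℝ) • (1 : H →L[ℂ] H) -
          (M - m)⁻¹ • opAbs (B i - ((m + M)/2) • 1)) =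
        (1/2 : ℝ) • (1 : H →L[ℂ] H) -
          (M - m)⁻¹ • ∑ i, Φ i (opAbs (B i - ((m + M)/2) • 1)) := by
      simp_rw [map_sub, LinearMap.map_smul_of_tower]
      rw [Finset.sum_sub_distrib, ← Finset.smul_sum, ← Finset.smul_sum, hΦ1]
    rw [h1]
    module
  have hGB0 : ∀ i : Fin n, (0 : H →L[ℂ] H) ≤ Φ i ((1/2 : ℝ) • (1 : H →L[ℂ] H) -
      (M - m)⁻¹ • opAbs (B i - ((m + M)/2) • 1)) := fun i =>
    hΦpos i _ (jtm_key_G_nonneg hmM (hBsa i) (hBl i) (hBu i))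
  have hGC0 : (0 : H →L[ℂ] H) ≤ (1/2 : ℝ) • (1 : H →L[ℂ] H) -
      (M - m)⁻¹ • opAbs (C' - ((m + M)/2) • 1) :=
    jtm_key_G_nonneg hmM hC'sa hC'l hC'u
  have hδ0 : 0 ≤ δ := jtm_delta_nonneg hmM hJmM hconv
  have hcorr0 : (0 : H →L[ℂ] H) ≤ δ • ((1 : H →L[ℂ] H) -
      (M - m)⁻¹ • (∑ i, Φ i (opAbs (B i - ((m + M) / 2) • 1)) +
        opAbs (C' - ((m + M) / 2) • 1))) := by
    rw [hX3]
    exact smul_nonneg hδ0 (add_nonneg (Finset.sum_nonneg fun i _ => hGB0 i) hGC0)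
  constructor
  · rw [le_sub_iff_add_le]
    calc ∑ i, Φ i (cfc f (B i)) + cfc f C' +
          δ • ((1 : H →L[ℂ] H) - (M - m)⁻¹ •
            (∑ i, Φ i (opAbs (B i - ((m + M) / 2) • 1)) + opAbs (C' - ((m + M) / 2) • 1)))
        = (∑ i, Φ i (cfc f (B i)) + δ • ∑ i, Φ i ((1/2 : ℝ) • (1 : H →L[ℂ] H) -
              (M - m)⁻¹ • opAbs (B i - ((m + M)/2) • 1))) +
            (cfc f C' + δ • ((1/2 : ℝ) • (1 : H →L[ℂ] H) -
              (M - m)⁻¹ • opAbs (C' - ((m + M)/2) • 1))) := by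
          rw [hX3]; module
      _ ≤ (k • ∑ i, Φ i (B i) + (f m - k * m) • (1 : H →L[ℂ] H)) +
            (k • C' + (f m - k * m) • (1 : H →L[ℂ] H)) := add_le_add hBsum hCmid
      _ = k • (∑ i, Φ i (B i) + C') +
            ((f m - k * m) • (1 : H →L[ℂ] H) + (f m - k * m) • (1 : H →L[ℂ] H)) := by module
      _ = k • (∑ i, Φ i (A i) + D') +
            ((f m - k * m) • (1 : H →L[ℂ] H) + (f m - k * m) • (1 : H →L[ℂ] H)) := by
          rw [hsumBC]
      _ = (k • ∑ i, Φ i (A i) + (f m - k * m) • (1 : H →L[ℂ] H)) +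
            (k • D' + (f m - k * m) • (1 : H →L[ℂ] H)) := by module
      _ ≤ ∑ i, Φ i (cfc f (A i)) + cfc f D' := add_le_add hAsum hDout
      _ = cfc f D' + ∑ i, Φ i (cfc f (A i)) := add_comm _ _
  · exact sub_le_self _ hcorr0
end
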